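/- arXiv:1507.00053 — 11 statements merged into one kernel-verified Lean document; each statement's English description precedes it below -/
import Mathlib

section
/- Let n and k be integers with 0 < k and 2k < n. If v : ℝ → ℝ is twice differentiable, v(t) > 0 for all t ∈ ℝ, and v solves the Delaunay ODE at every t ∈ ℝ, then the function t ↦ H(v(t), v'(t)) is constant on ℝ; that is, H(v(t₁), v'(t₁)) = H(v(t₂), v'(t₂)) for all t₁, t₂ ∈ ℝ. -/
open Real

/-- The Delaunay ODE for the σₖ-curvature problem:
`(v² − (2k/(n−2k))² v'²)^(k−1) · (v − (2k/(n−2k))² v'') = (n/(n−2k)) · v^(2kn/(n−2k) − 1)`. -/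
def DelaunayODE (n k : ℤ) (v : ℝ → ℝ) : Prop :=
  ∀ t : ℝ,
    (v t ^ 2 - (2 * (k : ℝ) / ((n : ℝ) - 2 * k)) ^ 2 * deriv v t ^ 2) ^ (k.toNat - 1) *
        (v t - (2 * (k : ℝ) / ((n : ℝ) - 2 * k)) ^ 2 * deriv (deriv v) t) =
      (n : ℝ) / ((n : ℝ) - 2 * k) * v t ^ (2 * (k : ℝ) * n / ((n : ℝ) - 2 * k) - 1)

/-- The Hamiltonian `H(v,w) = (v² − (2k/(n−2k))² w²)^k − v^(2kn/(n−2k))`. -/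
noncomputable def Ham (n k : ℤ) (v w : ℝ) : ℝ :=
  (v ^ 2 - (2 * (k : ℝ) / ((n : ℝ) - 2 * k)) ^ 2 * w ^ 2) ^ k.toNat -
    v ^ (2 * (k : ℝ) * n / ((n : ℝ) - 2 * k))

theorem hamiltonian_constant_along_solutions
    (n k : ℤ) (hk : 0 < k) (hnk : 2 * k < n) (v : ℝ → ℝ)
    (hv : Differentiable ℝ v) (hv' : Differentiable ℝ (deriv v))
    (hpos : ∀ t : ℝ, 0 < v t) (hode : DelaunayODE n k v) :
    ∀ t₁ t₂ : ℝ, Ham n k (v t₁) (deriv v t₁) = Ham n k (v t₂) (deriv v t₂) := by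
  have hK : ((k.toNat : ℕ) : ℝ) = (k : ℝ) := by
    exact_mod_cast congrArg (Int.cast : ℤ → ℝ) (Int.toNat_of_nonneg hk.le)
  have hF : ∀ t : ℝ, HasDerivAt (fun t => Ham n k (v t) (deriv v t)) 0 t := by
    intro t
    have hv1 : HasDerivAt v (deriv v t) t := (hv t).hasDerivAt
    have hv2 : HasDerivAt (deriv v) (deriv (deriv v) t) t := (hv' t).hasDerivAt
    have hg : HasDerivAt
        (fun t => v t ^ 2 - (2 * (k : ℝ) / ((n : ℝ) - 2 * k)) ^ 2 * deriv v t ^ 2)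
        ((2 : ℕ) * v t ^ 1 * deriv v t -
          (2 * (k : ℝ) / ((n : ℝ) - 2 * k)) ^ 2 *
            ((2 : ℕ) * deriv v t ^ 1 * deriv (deriv v) t)) t :=
      (hv1.pow 2).sub ((hv2.pow 2).const_mul _)
    have hg2 : HasDerivAt
        (fun t => (v t ^ 2 - (2 * (k : ℝ) / ((n : ℝ) - 2 * k)) ^ 2 * deriv v t ^ 2) ^ k.toNat)
        ((k.toNat : ℝ) *
            (v t ^ 2 - (2 * (k : ℝ) / ((n : ℝ) - 2 * k)) ^ 2 * deriv v t ^ 2) ^ (k.toNat - 1) *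
          ((2 : ℕ) * v t ^ 1 * deriv v t -
            (2 * (k : ℝ) / ((n : ℝ) - 2 * k)) ^ 2 *
              ((2 : ℕ) * deriv v t ^ 1 * deriv (deriv v) t))) t := hg.pow _
    have hr : HasDerivAt (fun t => v t ^ (2 * (k : ℝ) * n / ((n : ℝ) - 2 * k)))
        (deriv v t * (2 * (k : ℝ) * n / ((n : ℝ) - 2 * k)) *
          v t ^ (2 * (k : ℝ) * n / ((n : ℝ) - 2 * k) - 1)) t :=
      hv1.rpow_const (Or.inl (hpos t).ne')
    have H := hg2.sub hr
    have hzero :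
        ((k.toNat : ℝ) *
            (v t ^ 2 - (2 * (k : ℝ) / ((n : ℝ) - 2 * k)) ^ 2 * deriv v t ^ 2) ^ (k.toNat - 1) *
          ((2 : ℕ) * v t ^ 1 * deriv v t -
            (2 * (k : ℝ) / ((n : ℝ) - 2 * k)) ^ 2 *
              ((2 : ℕ) * deriv v t ^ 1 * deriv (deriv v) t)) -
          deriv v t * (2 * (k : ℝ) * n / ((n : ℝ) - 2 * k)) *
            v t ^ (2 * (k : ℝ) * n / ((n : ℝ) - 2 * k) - 1)) = 0 := by
      have h := hode t
      rw [hK]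
      push_cast
      linear_combination (2 * (k : ℝ) * deriv v t) * h
    rw [hzero] at H
    exact H
  intro t₁ t₂
  exact is_const_of_deriv_eq_zero (fun t => (hF t).differentiableAt) (fun t => (hF t).deriv) t₁ t₂
end

section
/- Let n and k be integers with 0 < k and 2k < n. Suppose v : ℝ → ℝ is twice continuously differentiable, v(t) ≥ 0 and v(t)² − (2k/(n−2k))² v'(t)² ≥ 0 for all t, v solves the Delaunay ODE at every t ∈ ℝ, and H(v(t), v'(t)) = 0 for all t ∈ ℝ. Then either v(t) = 0 for all t, or there exists c ∈ ℝ such that v(t) = (cosh(t − c))^(−(n−2k)/(2k)) for all t ∈ ℝ. -/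
open Real

lemma aux_gronwall_zero {f f' : ℝ → ℝ} {C : ℝ}
    (hf : ∀ x, HasDerivAt f (f' x) x)
    (hbd : ∀ x, |f' x| ≤ C * |f x|) {t1 t : ℝ} (h0 : f t1 = 0) (ht : t1 ≤ t) : f t = 0 := by
  have h := norm_le_gronwallBound_of_norm_deriv_right_le (f := f) (f' := f') (δ := 0)
      (K := C) (ε := 0) (a := t1) (b := t)
      (fun x _ => (hf x).continuousAt.continuousWithinAt)
      (fun x _ => (hf x).hasDerivWithinAt)
      (by simp [h0])
      (fun x _ => by simpa using hbd x)
  have := h t ⟨ht, le_rfl⟩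
  rw [gronwallBound_ε0_δ0] at this
  simpa using this

lemma aux_zero_everywhere {f f' : ℝ → ℝ} {C : ℝ}
    (hf : ∀ x, HasDerivAt f (f' x) x)
    (hbd : ∀ x, |f' x| ≤ C * |f x|) {t1 : ℝ} (h0 : f t1 = 0) (t : ℝ) : f t = 0 := by
  rcases le_total t1 t with h | h
  · exact aux_gronwall_zero hf hbd h0 h
  · have hrefl : ∀ x, HasDerivAt (fun x => f (2 * t1 - x)) (-f' (2 * t1 - x)) x := by
      intro x
      have h1 : HasDerivAt (fun x : ℝ => 2 * t1 - x) (-1) x := by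
        simpa using (hasDerivAt_id x).const_sub (2 * t1)
      simpa [Function.comp_def] using (hf (2 * t1 - x)).comp x h1
    have := aux_gronwall_zero (f := fun x => f (2 * t1 - x)) (f' := fun x => -f' (2 * t1 - x))
      hrefl (fun x => by simpa using hbd (2 * t1 - x)) (t1 := t1) (t := 2 * t1 - t)
      (by show f (2*t1 - t1) = 0; rw [show 2*t1 - t1 = t1 by ring]; exact h0) (by linarith)
    simpa using this

lemma aux_cosh_classify (a : ℝ) (ha : 0 < a) (v : ℝ → ℝ)
    (hd1 : ∀ t, HasDerivAt v (deriv v t) t)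
    (hd2 : ∀ t, HasDerivAt (deriv v) (deriv (deriv v) t) t)
    (hpos : ∀ t, 0 < v t)
    (hc : ∀ t, v t ^ 2 - a ^ 2 * (deriv v t) ^ 2 = v t ^ (2 * a + 2 : ℝ))
    (hstar : ∀ t, a * (a + 1) * (deriv v t) ^ 2 - a * v t * deriv (deriv v) t = v t ^ 2) :
    ∃ c : ℝ, ∀ t, v t = Real.cosh (t - c) ^ (-(a⁻¹)) := by
  set u : ℝ → ℝ := fun t => v t ^ (-a : ℝ) with hu_def
  set U : ℝ → ℝ := fun t => -a * v t ^ (-a - 1 : ℝ) * deriv v t with hU_def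
  set W : ℝ → ℝ := fun t =>
    -a * ((-a - 1) * v t ^ (-a - 2 : ℝ) * deriv v t * deriv v t
      + v t ^ (-a - 1 : ℝ) * deriv (deriv v) t) with hW_def
  have hu : ∀ t, HasDerivAt u (U t) t := by
    intro t
    have h1 := (Real.hasDerivAt_rpow_const (x := v t) (p := -a) (Or.inl (hpos t).ne')).comp
      t (hd1 t)
    simpa [hU_def, mul_assoc, mul_comm, mul_left_comm, Function.comp_def] using h1
  have hU : ∀ t, HasDerivAt U (W t) t := by
    intro t
    have h1 : HasDerivAt (fun t => v t ^ (-a - 1 : ℝ))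
        ((-a - 1) * v t ^ (-a - 2 : ℝ) * deriv v t) t := by
      have := (Real.hasDerivAt_rpow_const (x := v t) (p := -a - 1)
        (Or.inl (hpos t).ne')).comp t (hd1 t)
      have e : (-a - 1 - 1 : ℝ) = -a - 2 := by ring
      simpa [e, mul_assoc, mul_comm, mul_left_comm, Function.comp_def] using this
    have h2 := (h1.mul (hd2 t)).const_mul (-a)
    have hUeq : U = fun t => -a * (v t ^ (-a - 1 : ℝ) * deriv v t) := by
      funext s; simp only [hU_def]; ring
    rw [hUeq]
    exact h2
  have hru : ∀ t, v t ^ (-2 * a - 2 : ℝ) * (v t ^ 2 - a ^ 2 * (deriv v t) ^ 2) = 1 := by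
    intro t
    rw [hc t, ← Real.rpow_add (hpos t)]
    norm_num
  have e2 : ∀ t, (v t ^ (-a : ℝ)) ^ 2 = v t ^ (-2 * a - 2 : ℝ) * v t ^ 2 := by
    intro t
    rw [← Real.rpow_natCast (v t) 2, ← Real.rpow_natCast (v t ^ (-a : ℝ)) 2,
      ← Real.rpow_mul (hpos t).le, ← Real.rpow_add (hpos t)]
    norm_num
    congr 1
    ring
  have e3 : ∀ t, (v t ^ (-a - 1 : ℝ)) ^ 2 = v t ^ (-2 * a - 2 : ℝ) := by
    intro t
    rw [← Real.rpow_natCast (v t ^ (-a - 1 : ℝ)) 2, ← Real.rpow_mul (hpos t).le]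
    norm_num
    congr 1
    ring
  have hcon : ∀ t, u t ^ 2 - U t ^ 2 = 1 := by
    intro t
    have h := hru t
    simp only [hu_def, hU_def]
    rw [mul_pow, mul_pow, e3 t, e2 t]
    nlinarith [h]
  have hWu : ∀ t, W t = u t := by
    intro t
    have e4 : v t ^ (-a - 1 : ℝ) = v t ^ (-a - 2 : ℝ) * v t := by
      rw [show (-a - 1 : ℝ) = (-a - 2) + 1 by ring, Real.rpow_add (hpos t), Real.rpow_one]
    have e5 : v t ^ (-a - 2 : ℝ) * v t ^ 2 = u t := by
      simp only [hu_def]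
      rw [← Real.rpow_natCast (v t) 2, ← Real.rpow_add (hpos t)]
      norm_num
    simp only [hW_def]
    rw [e4, ← e5]
    linear_combination (v t ^ (-a - 2 : ℝ)) * hstar t
  set F : ℝ → ℝ := fun t => (u t + U t) * Real.exp (-t) with hF_def
  set G : ℝ → ℝ := fun t => (u t - U t) * Real.exp t with hG_def
  have hF : ∀ t, HasDerivAt F ((U t + W t) * Real.exp (-t) + (u t + U t) * (Real.exp (-t) * -1)) t :=
    fun t => ((hu t).add (hU t)).mul ((hasDerivAt_neg t).exp)
  have hG : ∀ t, HasDerivAt G ((U t - W t) * Real.exp t + (u t - U t) * Real.exp t) t :=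
    fun t => ((hu t).sub (hU t)).mul (Real.hasDerivAt_exp t)
  have hFd : ∀ t, deriv F t = 0 := by
    intro t
    rw [(hF t).deriv, hWu t]
    ring
  have hGd : ∀ t, deriv G t = 0 := by
    intro t
    rw [(hG t).deriv, hWu t]
    ring
  have hFc : ∀ t, F t = F 0 := fun t =>
    is_const_of_deriv_eq_zero (fun x => (hF x).differentiableAt) hFd t 0
  have hGc : ∀ t, G t = G 0 := fun t =>
    is_const_of_deriv_eq_zero (fun x => (hG x).differentiableAt) hGd t 0
  set A : ℝ := F 0 with hA_def
  set B : ℝ := G 0 with hB_def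
  have hsum : ∀ t, 2 * u t = A * Real.exp t + B * Real.exp (-t) := by
    intro t
    have h1 : (u t + U t) * Real.exp (-t) = A := hFc t
    have h2 : (u t - U t) * Real.exp t = B := hGc t
    have h1' : A * Real.exp t = u t + U t := by
      rw [← h1, Real.exp_neg]
      field_simp
    have h2' : B * Real.exp (-t) = u t - U t := by
      rw [← h2, Real.exp_neg]
      field_simp
    linarith
  have hAB : A * B = 1 := by
    have h1 : A = u 0 + U 0 := by simp [hA_def, hF_def]
    have h2 : B = u 0 - U 0 := by simp [hB_def, hG_def]
    rw [h1, h2]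
    linear_combination hcon 0
  have hupos : ∀ t, 0 < u t := fun t => Real.rpow_pos_of_pos (hpos t) _
  have hApos : 0 < A := by
    by_contra hA
    push_neg at hA
    have h0 := hsum 0
    simp only [Real.exp_zero, neg_zero, mul_one] at h0
    have hB0 : 0 ≤ B := by linarith [hupos 0]
    nlinarith [mul_nonneg (neg_nonneg.2 hA) hB0]
  have hB : B = A⁻¹ := by
    field_simp
    linear_combination hAB
  refine ⟨-Real.log A, fun t => ?_⟩
  have hut : u t = Real.cosh (t - -Real.log A) := by
    rw [Real.cosh_eq]
    have h1 : Real.exp (t - -Real.log A) = A * Real.exp t := by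
      rw [sub_neg_eq_add, Real.exp_add, Real.exp_log hApos]; ring
    have h2 : Real.exp (-(t - -Real.log A)) = B * Real.exp (-t) := by
      rw [show (-(t - -Real.log A)) = (-t) - Real.log A by ring, Real.exp_sub,
        Real.exp_log hApos, hB]
      ring
    rw [h1, h2]
    linarith [hsum t]
  have hfin : v t = u t ^ (-a⁻¹ : ℝ) := by
    simp only [hu_def]
    rw [← Real.rpow_mul (hpos t).le]
    rw [show (-a * -a⁻¹ : ℝ) = 1 by field_simp]
    exact (Real.rpow_one _).symm
  rw [hfin, hut]

theorem zero_energy_solutions_classification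
    (n k : ℤ) (hk : 0 < k) (hnk : 2 * k < n) (v : ℝ → ℝ)
    (hv : ContDiff ℝ 2 v)
    (hnonneg : ∀ t : ℝ, 0 ≤ v t)
    (hh : ∀ t : ℝ,
      0 ≤ v t ^ 2 - (2 * (k : ℝ) / ((n : ℝ) - 2 * k)) ^ 2 * deriv v t ^ 2)
    (hode : DelaunayODE n k v)
    (hH : ∀ t : ℝ, Ham n k (v t) (deriv v t) = 0) :
    (∀ t : ℝ, v t = 0) ∨
      ∃ c : ℝ, ∀ t : ℝ,
        v t = Real.cosh (t - c) ^ (-(((n : ℝ) - 2 * k) / (2 * k))) := by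
  simp only [Ham] at hH
  simp only [DelaunayODE] at hode
  have hn2 : (0:ℝ) < (n:ℝ) - 2 * k := by
    have : ((2*k : ℤ) : ℝ) < ((n : ℤ) : ℝ) := by exact_mod_cast hnk
    push_cast at this
    linarith
  have hkR : (0:ℝ) < (k:ℝ) := by exact_mod_cast hk
  set a : ℝ := 2 * (k:ℝ) / ((n:ℝ) - 2*k) with ha_def
  have ha : 0 < a := by positivity
  have hKnat : ((k.toNat : ℕ) : ℝ) = (k:ℝ) := by exact_mod_cast Int.toNat_of_nonneg hk.le
  have hKne : k.toNat ≠ 0 := by omega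
  -- derivatives
  have hd1 : ∀ t, HasDerivAt v (deriv v t) t := fun t =>
    ((hv.differentiable (by norm_num)) t).hasDerivAt
  have hd2 : ∀ t, HasDerivAt (deriv v) (deriv (deriv v) t) t := by
    have h := (contDiff_succ_iff_deriv.mp (by exact_mod_cast hv : ContDiff ℝ ((1:ℕ)+1) v)).2.2
    exact fun t => ((h.differentiable (by norm_num)) t).hasDerivAt
  -- the pointwise constraint from the Hamiltonian
  have hc : ∀ t, v t ^ 2 - a ^ 2 * deriv v t ^ 2 = v t ^ (2 * a + 2 : ℝ) := by
    intro t
    have h1 := hH t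
    rw [sub_eq_zero] at h1
    have h2 : v t ^ (2 * (k:ℝ) * n / ((n:ℝ) - 2*k)) = (v t ^ (2 * a + 2 : ℝ)) ^ k.toNat := by
      rw [← Real.rpow_natCast (v t ^ (2 * a + 2 : ℝ)) k.toNat, ← Real.rpow_mul (hnonneg t)]
      congr 1
      rw [hKnat, ha_def]
      field_simp
      ring
    rw [h2] at h1
    exact (pow_left_strictMonoOn₀ hKne).injOn (hh t) (Real.rpow_nonneg (hnonneg t) _) h1
  -- gradient bound
  have hbd : ∀ t, |deriv v t| ≤ a⁻¹ * |v t| := by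
    intro t
    have h1 : (a * deriv v t) ^ 2 ≤ (v t) ^ 2 := by
      nlinarith [Real.rpow_nonneg (hnonneg t) (2*a+2 : ℝ), hc t]
    have h2 : |a * deriv v t| ≤ |v t| := by
      rw [← Real.sqrt_sq_eq_abs, ← Real.sqrt_sq_eq_abs]
      exact Real.sqrt_le_sqrt h1
    rw [abs_mul, abs_of_pos ha] at h2
    rw [← le_div_iff₀' ha] at h2
    rwa [div_eq_inv_mul] at h2
  by_cases hz : ∃ t1, v t1 = 0
  · left
    obtain ⟨t1, ht1⟩ := hz
    exact fun t => aux_zero_everywhere hd1 hbd ht1 t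
  · right
    push_neg at hz
    have hpos : ∀ t, 0 < v t := fun t => (hnonneg t).lt_of_ne (fun h => hz t h.symm)
    -- derive the reduced second order ODE
    have hstar : ∀ t, a * (a + 1) * (deriv v t) ^ 2 - a * v t * deriv (deriv v) t = v t ^ 2 := by
      intro t
      have hm : ((k.toNat - 1 : ℕ) : ℝ) = (k:ℝ) - 1 := by
        rw [Nat.cast_sub (by omega : 1 ≤ k.toNat), Nat.cast_one, hKnat]
      have h0 := hode t
      rw [hc t, ← Real.rpow_natCast (v t ^ (2 * a + 2 : ℝ)) (k.toNat - 1),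
        ← Real.rpow_mul (hnonneg t)] at h0
      rw [show 2 * (k:ℝ) * n / ((n:ℝ) - 2*k) - 1
            = (2*a+2) * ((k.toNat - 1 : ℕ) : ℝ) + (2*a+1) by
          rw [hm, ha_def]; field_simp; ring,
        Real.rpow_add (hpos t),
        show (n:ℝ) / ((n:ℝ) - 2*k) = 1 + a by rw [ha_def]; field_simp; ring] at h0
      have hq : v t ^ ((2*a+2) * ((k.toNat - 1 : ℕ) : ℝ)) ≠ 0 :=
        (Real.rpow_pos_of_pos (hpos t) _).ne'
      have h0' : v t ^ ((2*a+2) * ((k.toNat - 1 : ℕ) : ℝ))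
            * (v t - a ^ 2 * deriv (deriv v) t)
          = v t ^ ((2*a+2) * ((k.toNat - 1 : ℕ) : ℝ))
            * ((1 + a) * v t ^ (2*a+1 : ℝ)) := by
        linear_combination h0
      have hE := mul_left_cancel₀ hq h0'
      have hF' : v t * v t ^ (2*a+1 : ℝ) = v t ^ (2*a+2 : ℝ) := by
        have h3 : v t ^ (1:ℝ) * v t ^ (2*a+1 : ℝ) = v t ^ (2*a+2 : ℝ) := by
          rw [← Real.rpow_add (hpos t)]
          congr 1
          ring
        rwa [Real.rpow_one] at h3
      have hE2 : v t ^ 2 - a ^ 2 * v t * deriv (deriv v) t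
          = (1 + a) * (v t ^ 2 - a ^ 2 * deriv v t ^ 2) := by
        linear_combination v t * hE + (1+a) * hF' - (1+a) * hc t
      have hgoal : a * (a * (a + 1) * (deriv v t) ^ 2 - a * v t * deriv (deriv v) t)
          = a * v t ^ 2 := by
        linear_combination hE2
      exact mul_left_cancel₀ ha.ne' hgoal
    obtain ⟨c, hcosh⟩ := aux_cosh_classify a ha v hd1 hd2 hpos hc hstar
    refine ⟨c, fun t => ?_⟩
    rw [hcosh t]
    congr 1
    rw [ha_def, inv_div]
end

section
/- Let n and k be integers with 0 < k and 2k < n, and set H₀ = (2k/(n−2k)) · ((n−2k)/n)^(n/(2k)). Then the constant function v(t) = ((n−2k)/n)^((n−2k)/(4k²)) is twice continuously differentiable, positive, solves the Delaunay ODE at every t ∈ ℝ, and satisfies H(v(t), v'(t)) = H₀ for all t. Moreover, it is the unique such solution: if w : ℝ → ℝ is twice continuously differentiable with w(t) > 0 and w(t)² − (2k/(n−2k))² w'(t)² ≥ 0 for all t, w solves the Delaunay ODE at every t ∈ ℝ, and H(w(t), w'(t)) = H₀ for all t, then w(t) = ((n−2k)/n)^((n−2k)/(4k²)) for all t. -/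
open Real

/-- The constant value `((n−2k)/n)^((n−2k)/(4k²))` giving the cylindrical solution. -/
noncomputable def cylVal (n k : ℤ) : ℝ :=
  (((n : ℝ) - 2 * k) / n) ^ (((n : ℝ) - 2 * k) / (4 * (k : ℝ) ^ 2))

-- strict tangent-line lemma
lemma tangent_lt {p u u' : ℝ} (hp : 1 < p) (hu : 0 < u) (hu' : 0 < u')
    (hne : u ≠ u') (htan : p * u' ^ (p - 1) = 1) : u - u ^ p < u' - u' ^ p := by
  set s : ℝ := u / u' - 1 with hs
  have hs1 : 1 + s = u / u' := by ring
  have hsge : -1 < s := by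
    have : 0 < u / u' := div_pos hu hu'
    simp [hs]; linarith
  have hs0 : s ≠ 0 := by
    intro h
    apply hne
    have : u / u' = 1 := by simpa [h] using hs1.symm
    field_simp at this; linarith
  have hB := one_add_mul_self_lt_rpow_one_add hsge.le hs0 hp
  rw [hs1, Real.div_rpow hu.le hu'.le] at hB
  have hup : (0:ℝ) < u' ^ p := Real.rpow_pos_of_pos hu' p
  have h2 : (1 + p * s) * u' ^ p < u ^ p := by
    calc (1 + p * s) * u' ^ p < (u ^ p / u' ^ p) * u' ^ p := by
          exact mul_lt_mul_of_pos_right hB hup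
      _ = u ^ p := by field_simp
  have hsplit : u' ^ p = u' ^ (p - 1) * u' := by
    rw [← Real.rpow_add_one hu'.ne']; ring_nf
  have h3 : (1 + p * s) * u' ^ p = u' ^ p + (u - u') := by
    have : p * s * u' ^ p = (p * u' ^ (p-1)) * (s * u') := by
      rw [hsplit]; ring
    have hsu : s * u' = u - u' := by rw [hs, sub_mul, div_mul_cancel₀ u hu'.ne', one_mul]
    calc (1 + p * s) * u' ^ p = u' ^ p + p * s * u' ^ p := by ring
      _ = u' ^ p + (p * u' ^ (p-1)) * (s * u') := by rw [this]
      _ = u' ^ p + (u - u') := by rw [htan, hsu, one_mul]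
  linarith [h3 ▸ h2]

theorem cylindrical_solution_max_energy
    (n k : ℤ) (hk : 0 < k) (hnk : 2 * k < n) (H₀ : ℝ)
    (hH₀ : H₀ = 2 * (k : ℝ) / ((n : ℝ) - 2 * k) *
      (((n : ℝ) - 2 * k) / n) ^ ((n : ℝ) / (2 * k))) :
    ContDiff ℝ 2 (fun _ : ℝ => cylVal n k) ∧
    0 < cylVal n k ∧
    DelaunayODE n k (fun _ : ℝ => cylVal n k) ∧
    (∀ t : ℝ,
      Ham n k ((fun _ : ℝ => cylVal n k) t)
        (deriv (fun _ : ℝ => cylVal n k) t) = H₀) ∧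
    ∀ w : ℝ → ℝ, ContDiff ℝ 2 w → (∀ t : ℝ, 0 < w t) →
      (∀ t : ℝ,
        0 ≤ w t ^ 2 - (2 * (k : ℝ) / ((n : ℝ) - 2 * k)) ^ 2 * deriv w t ^ 2) →
      DelaunayODE n k w →
      (∀ t : ℝ, Ham n k (w t) (deriv w t) = H₀) →
      ∀ t : ℝ, w t = cylVal n k := by
  have hK : (0:ℝ) < (k:ℝ) := by exact_mod_cast hk
  have hd : (0:ℝ) < (n:ℝ) - 2 * k := by
    have : (2:ℝ) * k < n := by exact_mod_cast hnk
    linarith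
  have hN : (0:ℝ) < (n:ℝ) := by linarith
  set b : ℝ := ((n:ℝ) - 2 * k) / n with hbdef
  have hb : 0 < b := div_pos hd hN
  set e : ℝ := ((n:ℝ) - 2 * k) / (4 * (k:ℝ)^2) with hedef
  have he : 0 < e := by positivity
  have hadef : cylVal n k = b ^ e := rfl
  set a : ℝ := b ^ e with ha2
  have ha : 0 < a := rpow_pos_of_pos hb e
  have hax : ∀ x : ℝ, a ^ x = b ^ (e * x) := fun x => (Real.rpow_mul hb.le e x).symm
  have hkt : ((k.toNat : ℝ)) = (k : ℝ) := by
    exact_mod_cast congrArg (Int.cast : ℤ → ℝ) (Int.toNat_of_nonneg hk.le)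
  have hkt1 : 1 ≤ k.toNat := by omega
  set p : ℝ := (n:ℝ) / ((n:ℝ) - 2 * k) with hpdef
  have hp1 : 1 < p := by rw [hpdef, lt_div_iff₀ hd]; linarith
  set α : ℝ := 2 * (k:ℝ) * n / ((n:ℝ) - 2 * k) with hαdef
  set u' : ℝ := a ^ (2 * (k:ℝ)) with hu'def
  have hu' : 0 < u' := rpow_pos_of_pos ha _
  have hu'b : u' = b ^ (((n:ℝ) - 2*k) / (2*k)) := by
    rw [hu'def, hax]; congr 1; rw [hedef]; field_simp; try ring
  have htan : p * u' ^ (p - 1) = 1 := by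
    rw [hu'b, ← Real.rpow_mul hb.le]
    have h1 : ((n:ℝ) - 2*k) / (2*k) * (p - 1) = 1 := by
      rw [hpdef]; field_simp; try ring
    rw [h1, rpow_one, hbdef, hpdef]; field_simp
  have hu'p : u' ^ p = b ^ ((n:ℝ) / (2*k)) := by
    rw [hu'b, ← Real.rpow_mul hb.le]; congr 1; rw [hpdef]; field_simp; try ring
  have hH0' : H₀ = u' - u' ^ p := by
    rw [hH₀, hu'p, hu'b]
    have h1 : ((n:ℝ) - 2*k)/(2*k) = (n:ℝ)/(2*k) + (-1) := by field_simp; try ring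
    rw [h1, Real.rpow_add hb, rpow_neg_one, hbdef]
    rw [inv_div]
    field_simp
    ring
  -- natpow to rpow for a : a ^ (m:ℕ) = b ^ (e * m)
  have hanat : ∀ m : ℕ, a ^ m = b ^ (e * m) := by
    intro m; rw [← Real.rpow_natCast a m, hax]
  -- the main pointwise inequality used for uniqueness
  have key : ∀ v : ℝ, 0 < v → v ≠ a → v ^ (2*(k:ℝ)) - v ^ α < H₀ := by
    intro v hv hne
    set u : ℝ := v ^ (2*(k:ℝ)) with hudef
    have hu : 0 < u := rpow_pos_of_pos hv _
    have huu : u ≠ u' := by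
      intro h
      apply hne
      have := congrArg (fun x : ℝ => x ^ (1 / (2*(k:ℝ)))) h
      simp only [hudef, hu'def, ← Real.rpow_mul hv.le, ← Real.rpow_mul ha.le] at this
      rwa [mul_one_div, div_self (by positivity : (2*(k:ℝ)) ≠ 0), rpow_one, rpow_one] at this
    have hup : u ^ p = v ^ α := by
      rw [hudef, ← Real.rpow_mul hv.le]; congr 1; rw [hαdef, hpdef]; field_simp; try ring
    rw [hH0', ← hup]
    exact tangent_lt hp1 hu hu' huu htan
  refine ⟨contDiff_const, ha, ?_, ?_, ?_⟩
  · -- ODE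
    intro t
    have hz : deriv (fun _ : ℝ => cylVal n k) = fun _ => (0:ℝ) := by
      funext s; exact deriv_const s _
    rw [hz]
    simp only [deriv_const']
    rw [hadef]
    norm_num
    -- goal now: (a^2)^(k.toNat-1) * a = n/(n-2k) * a^(α-1)  (roughly)
    rw [← pow_mul, ← pow_succ]
    rw [hanat, hax]
    have hcast : ((2 * (k.toNat - 1) + 1 : ℕ) : ℝ) = 2*(k:ℝ) - 1 := by
      push_cast [hkt1]
      rw [hkt]; ring
    rw [hcast]
    have hex : e * (2*(k:ℝ) - 1) = e * (α - 1) + (-1) := by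
      rw [hedef, hαdef]; field_simp; try ring
    rw [hex, Real.rpow_add hb, rpow_neg_one, hbdef, inv_div, hαdef]
    ring
  · -- Hamiltonian value
    intro t
    have hz : deriv (fun _ : ℝ => cylVal n k) = fun _ => (0:ℝ) := by
      funext s; exact deriv_const s _
    rw [hz]
    simp only [Ham, hadef]
    norm_num
    rw [← pow_mul, hanat, hax, hH0', hu'p, hu'b]
    have h1 : e * ((2 * k.toNat : ℕ) : ℝ) = ((n:ℝ) - 2*k)/(2*k) := by
      push_cast [hkt]
      rw [hedef]; field_simp; try ring
    have h2 : e * (2 * (k:ℝ) * n / ((n:ℝ) - 2*k)) = (n:ℝ)/(2*k) := by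
      rw [hedef]; field_simp; try ring
    rw [h1, h2]
  · -- uniqueness
    intro w hw hwpos hwnn hode hham t
    by_contra hne
    have hv := hwpos t
    have hA := hwnn t
    have hH := hham t
    simp only [Ham] at hH
    have hAle : w t ^ 2 - (2 * (k : ℝ) / ((n : ℝ) - 2 * k)) ^ 2 * deriv w t ^ 2 ≤ w t ^ 2 := by
      nlinarith [sq_nonneg (2 * (k : ℝ) / ((n : ℝ) - 2 * k) * deriv w t)]
    have h1 : (w t ^ 2 - (2 * (k : ℝ) / ((n : ℝ) - 2 * k)) ^ 2 * deriv w t ^ 2) ^ k.toNat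
        ≤ (w t ^ 2) ^ k.toNat := pow_le_pow_left₀ hA hAle _
    have h2 : (w t ^ 2) ^ k.toNat = w t ^ (2*(k:ℝ)) := by
      rw [← pow_mul, ← Real.rpow_natCast (w t)]
      congr 1
      push_cast [hkt]
      try ring
    have h3 : H₀ ≤ w t ^ (2*(k:ℝ)) - w t ^ α := by
      rw [← h2, ← hH]; simp only [hαdef]; linarith
    have h4 := key (w t) hv (by rwa [hadef] at hne)
    linarith [h4]
end

section
/- Let n and k be integers with 0 < k and 2k < n. Suppose v : ℝ → ℝ is twice continuously differentiable, v(t) > 0 for all t, v solves the Delaunay ODE at every t ∈ ℝ, H(v(t), v'(t)) > 0 for all t ∈ ℝ, and v'(t₀) = 0 for some t₀ ∈ ℝ. Then h(t) := v(t)² − (2k/(n−2k))² v'(t)² > 0 for all t ∈ ℝ. -/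
open Real

theorem h_positive_of_positive_energy
    (n k : ℤ) (hk : 0 < k) (hnk : 2 * k < n) (v : ℝ → ℝ)
    (hv : ContDiff ℝ 2 v)
    (hpos : ∀ t : ℝ, 0 < v t)
    (hode : DelaunayODE n k v)
    (hH : ∀ t : ℝ, 0 < Ham n k (v t) (deriv v t))
    (t₀ : ℝ) (ht₀ : deriv v t₀ = 0) :
    ∀ t : ℝ,
      0 < v t ^ 2 - (2 * (k : ℝ) / ((n : ℝ) - 2 * k)) ^ 2 * deriv v t ^ 2 := by

  set a : ℝ := (2 * (k : ℝ) / ((n : ℝ) - 2 * k)) ^ 2 with ha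
  set h : ℝ → ℝ := fun t => v t ^ 2 - a * deriv v t ^ 2 with hh
  have hcont : Continuous h := by
    apply Continuous.sub
    · exact (hv.continuous).pow 2
    · exact continuous_const.mul ((hv.continuous_deriv (by norm_num)).pow 2)
  have hne : ∀ t : ℝ, h t ≠ 0 := by
    intro t h0
    have := hH t
    unfold Ham at this
    have hp : (0:ℝ) < v t ^ (2 * (k : ℝ) * n / ((n : ℝ) - 2 * k)) :=
      Real.rpow_pos_of_pos (hpos t) _
    have : (0:ℝ) < h t ^ k.toNat := by
      show (0:ℝ) < (v t ^ 2 - (2 * (k : ℝ) / ((n : ℝ) - 2 * k)) ^ 2 * deriv v t ^ 2) ^ k.toNat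
      linarith
    rw [h0, zero_pow (by omega : k.toNat ≠ 0)] at this
    exact lt_irrefl 0 this
  have ht0 : 0 < h t₀ := by
    simp only [hh, ht₀]
    have := hpos t₀
    nlinarith
  intro t
  show 0 < h t
  by_contra hle
  push_neg at hle
  have hlt : h t < 0 := lt_of_le_of_ne hle (hne t)
  have : (0:ℝ) ∈ Set.uIcc (h t₀) (h t) := Set.mem_uIcc.2 (Or.inr ⟨hlt.le, ht0.le⟩)
  obtain ⟨c, _, hc⟩ := intermediate_value_uIcc (hcont.continuousOn (s := Set.uIcc t₀ t)) this
  exact hne c hc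
end

section
/- Let n and k be integers with 0 < k and 2k < n. Suppose v : ℝ → ℝ is twice continuously differentiable, 0 < v(t) ≤ 1 for all t, v solves the Delaunay ODE at every t ∈ ℝ, v(t)² − (2k/(n−2k))² v'(t)² > 0 for all t, and H(v(t), v'(t)) ≥ 0 for all t. Then for every t ∈ ℝ one has |v'(t)| ≤ ((n−2k)/(2k)) · v(t) and |v''(t)| ≤ ((n−2k)(2n−2k)/(4k²)) · v(t). -/
open Real

set_option maxHeartbeats 2000000 in
theorem deriv_bounds_of_solution
    (n k : ℤ) (hk : 0 < k) (hnk : 2 * k < n) (v : ℝ → ℝ)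
    (hv : ContDiff ℝ 2 v)
    (hpos : ∀ t : ℝ, 0 < v t) (hle : ∀ t : ℝ, v t ≤ 1)
    (hode : DelaunayODE n k v)
    (hh : ∀ t : ℝ,
      0 < v t ^ 2 - (2 * (k : ℝ) / ((n : ℝ) - 2 * k)) ^ 2 * deriv v t ^ 2)
    (hH : ∀ t : ℝ, 0 ≤ Ham n k (v t) (deriv v t)) :
    ∀ t : ℝ,
      |deriv v t| ≤ ((n : ℝ) - 2 * k) / (2 * k) * v t ∧
      |deriv (deriv v) t| ≤
        ((n : ℝ) - 2 * k) * (2 * (n : ℝ) - 2 * k) / (4 * (k : ℝ) ^ 2) * v t := by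
  simp only [DelaunayODE] at hode
  simp only [Ham] at hH
  intro t
  have hdZ : (0:ℤ) < n - 2 * k := by omega
  have hd : (0:ℝ) < (n:ℝ) - 2 * (k:ℝ) := by exact_mod_cast hdZ
  have hk0 : (0:ℝ) < (k:ℝ) := by exact_mod_cast hk
  have hn0 : (0:ℝ) < (n:ℝ) := by exact_mod_cast (by omega : (0:ℤ) < n)
  have hQ := hh t
  have hH' := hH t
  have hode' := hode t
  have hVpos : 0 < v t := hpos t
  have hVle : v t ≤ 1 := hle t
  set m := k.toNat with hm
  have hmk : ((m:ℕ):ℝ) = (k:ℝ) := by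
    rw [hm]
    exact_mod_cast congrArg (Int.cast : ℤ → ℝ) (Int.toNat_of_nonneg hk.le)
  have hm1 : 1 ≤ m := by omega
  set a := 2 * (k:ℝ) / ((n:ℝ) - 2 * (k:ℝ)) with hadef
  have ha : 0 < a := div_pos (by linarith) hd
  set V := v t with hVdef
  set W := deriv v t with hWdef
  set U := deriv (deriv v) t with hUdef
  set E := 2 * (k:ℝ) * (n:ℝ) / ((n:ℝ) - 2 * (k:ℝ)) with hEdef
  set Q := V ^ 2 - a ^ 2 * W ^ 2 with hQdef
  -- Part 1
  have habsW : a * |W| ≤ V := by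
    nlinarith [sq_abs W, abs_nonneg W, mul_nonneg ha.le (abs_nonneg W)]
  have part1 : |W| ≤ ((n:ℝ) - 2 * k) / (2 * k) * V := by
    have h1 : a * (((n:ℝ) - 2 * k) / (2 * k) * V) = V := by
      rw [hadef]; field_simp
    have h2 : a * |W| ≤ a * (((n:ℝ) - 2 * k) / (2 * k) * V) := by
      rw [h1]; exact habsW
    exact le_of_mul_le_mul_left h2 ha
  refine ⟨part1, ?_⟩
  -- Part 2
  have hEk2 : 2 ≤ E / (k:ℝ) := by
    rw [hEdef]
    rw [div_div, le_div_iff₀ (by positivity)]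
    ring_nf
    nlinarith
  set x := V ^ (E / (k:ℝ)) with hxdef
  have hxpos : 0 < x := Real.rpow_pos_of_pos hVpos _
  have fact1 : x ^ m = V ^ E := by
    rw [hxdef, ← Real.rpow_natCast (V ^ (E / (k:ℝ))) m, ← Real.rpow_mul hVpos.le]
    congr 1
    rw [hmk]
    field_simp
  have fact2 : x ≤ Q := by
    have h2 : x ^ m ≤ Q ^ m := by rw [fact1]; linarith
    exact le_of_pow_le_pow_left₀ (by omega) hQ.le h2
  have fact3 : V ^ (E - 1) ≤ Q ^ (m - 1) * V := by
    have hsplit : V ^ (E - 1) = x ^ (m - 1) * V ^ (E / (k:ℝ) - 1) := by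
      rw [hxdef, ← Real.rpow_natCast (V ^ (E / (k:ℝ))) (m - 1), ← Real.rpow_mul hVpos.le,
        ← Real.rpow_add hVpos]
      congr 1
      have hcast : ((m - 1 : ℕ) : ℝ) = (k:ℝ) - 1 := by
        rw [Nat.cast_sub hm1, hmk]; norm_num
      rw [hcast]
      field_simp
      ring
    rw [hsplit]
    have h3 : x ^ (m - 1) ≤ Q ^ (m - 1) := pow_le_pow_left₀ hxpos.le fact2 _
    have h4 : V ^ (E / (k:ℝ) - 1) ≤ V := by
      nth_rewrite 2 [← Real.rpow_one V]
      exact Real.rpow_le_rpow_of_exponent_ge hVpos hVle (by linarith)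
    exact mul_le_mul h3 h4 (Real.rpow_pos_of_pos hVpos _).le (pow_pos hQ _).le
  have hPpos : 0 < Q ^ (m - 1) := pow_pos hQ _
  have hRHSpos : 0 < (n:ℝ) / ((n:ℝ) - 2 * k) * V ^ (E - 1) :=
    mul_pos (div_pos hn0 hd) (Real.rpow_pos_of_pos hVpos _)
  have h5 : 0 < V - a ^ 2 * U := by
    by_contra h
    push_neg at h
    nlinarith [mul_nonpos_of_nonneg_of_nonpos hPpos.le h]
  have h6 : V - a ^ 2 * U ≤ (n:ℝ) / ((n:ℝ) - 2 * k) * V := by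
    have hmul : Q ^ (m - 1) * (V - a ^ 2 * U) ≤ Q ^ (m - 1) * ((n:ℝ) / ((n:ℝ) - 2 * k) * V) :=
      calc Q ^ (m - 1) * (V - a ^ 2 * U) = (n:ℝ) / ((n:ℝ) - 2 * k) * V ^ (E - 1) := hode'
        _ ≤ (n:ℝ) / ((n:ℝ) - 2 * k) * (Q ^ (m - 1) * V) :=
            mul_le_mul_of_nonneg_left fact3 (div_pos hn0 hd).le
        _ = Q ^ (m - 1) * ((n:ℝ) / ((n:ℝ) - 2 * k) * V) := by ring
    exact le_of_mul_le_mul_left hmul hPpos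
  have hlow : -(2 * (k:ℝ) / ((n:ℝ) - 2 * k)) * V ≤ a ^ 2 * U := by
    have heq : V - (n:ℝ) / ((n:ℝ) - 2 * k) * V = -(2 * (k:ℝ) / ((n:ℝ) - 2 * k)) * V := by
      field_simp
      ring
    linarith
  have hup : a ^ 2 * U ≤ V := by linarith
  set C := ((n:ℝ) - 2 * k) * (2 * (n:ℝ) - 2 * k) / (4 * (k:ℝ) ^ 2) with hCdef
  have ha2 : 0 < a ^ 2 := by positivity
  have ha2C : a ^ 2 * C = (2 * (n:ℝ) - 2 * k) / ((n:ℝ) - 2 * k) := by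
    rw [hadef, hCdef, div_pow]
    rw [div_mul_div_comm]
    rw [div_eq_div_iff (by positivity) (by positivity)]
    ring
  clear_value V W U Q E x a C
  clear hode hH hh hode' hH' fact1 fact2 fact3 h5 h6 hxdef hQdef hEdef hQ hxpos hPpos hRHSpos habsW part1
  rw [abs_le]
  constructor
  · -- lower bound
    have hdiv : 2 * (k:ℝ) / ((n:ℝ) - 2 * k) ≤ (2 * (n:ℝ) - 2 * k) / ((n:ℝ) - 2 * k) := by
      exact (div_le_div_iff_of_pos_right hd).mpr (by linarith)
    have hmulV : 2 * (k:ℝ) / ((n:ℝ) - 2 * k) * V ≤ (2 * (n:ℝ) - 2 * k) / ((n:ℝ) - 2 * k) * V :=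
      mul_le_mul_of_nonneg_right hdiv hVpos.le
    have heq2 : a ^ 2 * (C * V) = (2 * (n:ℝ) - 2 * k) / ((n:ℝ) - 2 * k) * V := by
      rw [← mul_assoc, ha2C]
    have hfin : a ^ 2 * (-(C * V)) ≤ a ^ 2 * U := by
      have : a ^ 2 * (-(C * V)) = -(a ^ 2 * (C * V)) := by ring
      rw [this, heq2]
      linarith
    exact le_of_mul_le_mul_left hfin ha2
  · -- upper bound
    have h1C : 1 ≤ a ^ 2 * C := by
      rw [ha2C, le_div_iff₀ hd]
      linarith
    have hfin : a ^ 2 * U ≤ a ^ 2 * (C * V) := by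
      nlinarith
    exact le_of_mul_le_mul_left hfin ha2
end

section
/- Let n and k be integers with 0 < k and 2k < n, let ε ∈ (0, ((n−2k)/n)^(1/(2k))), and let v be a Delaunay solution with necksize ε. Then for every t ∈ ℝ: (i) v'(t)² ≤ ((n−2k)/(2k))² · (v(t)² − ε^((n−2k)/k)), and (ii) v(t) ≤ ε^((n−2k)/(2k)) · cosh(((n−2k)/(2k)) t) ≤ ε^((n−2k)/(2k)) · exp(((n−2k)/(2k)) |t|). -/
open Real

/-- A Delaunay solution with necksize `ε`. -/
def IsDelaunay (n k : ℤ) (ε : ℝ) (v : ℝ → ℝ) : Prop :=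
  ContDiff ℝ 2 v ∧ DelaunayODE n k v ∧ deriv v 0 = 0 ∧
    v 0 = ε ^ (((n : ℝ) - 2 * k) / (2 * k)) ∧
    ∀ t : ℝ, ε ^ (((n : ℝ) - 2 * k) / (2 * k)) ≤ v t ∧ v t ≤ 1

lemma comp_le (c A : ℝ) (u : ℝ → ℝ)
    (hu : Differentiable ℝ u) (hu' : Differentiable ℝ (deriv u))
    (h0 : u 0 ≤ A) (h0' : deriv u 0 = 0)
    (hODE : ∀ t, deriv (deriv u) t < c ^ 2 * u t) :
    ∀ t ≥ 0, u t ≤ A * Real.cosh (c * t) := by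
  have hch : ∀ t : ℝ, HasDerivAt (fun s => Real.cosh (c * s)) (c * Real.sinh (c * t)) t := by
    intro t
    have h1 : HasDerivAt (fun s : ℝ => c * s) c t := by
      simpa using (hasDerivAt_id t).const_mul c
    exact ((Real.hasDerivAt_cosh (c * t)).comp t h1).congr_deriv (by ring)
  have hsh : ∀ t : ℝ, HasDerivAt (fun s => Real.sinh (c * s)) (c * Real.cosh (c * t)) t := by
    intro t
    have h1 : HasDerivAt (fun s : ℝ => c * s) c t := by
      simpa using (hasDerivAt_id t).const_mul c
    exact ((Real.hasDerivAt_sinh (c * t)).comp t h1).congr_deriv (by ring)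
  set d : ℝ → ℝ := fun t => u t - A * Real.cosh (c * t) with hd_def
  set d' : ℝ → ℝ := fun t => deriv u t - A * (c * Real.sinh (c * t)) with hd'_def
  have hd : ∀ t, HasDerivAt d (d' t) t := fun t =>
    ((hu t).hasDerivAt).sub ((hch t).const_mul A)
  have hd' : ∀ t, HasDerivAt d' (deriv (deriv u) t - A * (c * (c * Real.cosh (c * t)))) t := by
    intro t
    exact ((hu' t).hasDerivAt).sub (((hsh t).const_mul c).const_mul A)
  set W : ℝ → ℝ := fun t => d' t * Real.cosh (c * t) - d t * (c * Real.sinh (c * t)) with hW_def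
  have hW : ∀ t, HasDerivAt W ((deriv (deriv u) t - c ^ 2 * u t) * Real.cosh (c * t)) t := by
    intro t
    have := (((hd' t).mul (hch t))).sub ((hd t).mul ((hsh t).const_mul c))
    refine this.congr_deriv ?_
    simp only [hd_def, hd'_def]
    ring
  have hWcont : Continuous W := by
    have : Differentiable ℝ W := fun t => (hW t).differentiableAt
    exact this.continuous
  have hW0 : W 0 = 0 := by
    simp [hW_def, hd'_def, h0', Real.sinh_zero, Real.cosh_zero]
  have hWle : ∀ t ≥ 0, W t ≤ 0 := by
    intro t ht
    have hanti : AntitoneOn W (Set.Ici 0) := by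
      apply antitoneOn_of_deriv_nonpos (convex_Ici 0) hWcont.continuousOn
        (fun x _ => ((hW x).differentiableAt).differentiableWithinAt)
      intro x _
      rw [(hW x).deriv]
      exact mul_nonpos_of_nonpos_of_nonneg (by linarith [hODE x]) (Real.cosh_pos (c * x)).le
    have := hanti (Set.self_mem_Ici) (Set.mem_Ici.2 ht) ht
    simpa [hW0] using this
  set q : ℝ → ℝ := fun t => d t / Real.cosh (c * t) with hq_def
  have hq : ∀ t, HasDerivAt q (W t / Real.cosh (c * t) ^ 2) t := fun t =>
    (hd t).div (hch t) (Real.cosh_pos (c * t)).ne'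
  intro t ht
  have hqcont : Continuous q := by
    have : Differentiable ℝ q := fun t => (hq t).differentiableAt
    exact this.continuous
  have hqanti : AntitoneOn q (Set.Ici 0) := by
    apply antitoneOn_of_deriv_nonpos (convex_Ici 0) hqcont.continuousOn
      (fun x _ => ((hq x).differentiableAt).differentiableWithinAt)
    intro x hx
    rw [(hq x).deriv]
    have hx' : (0:ℝ) ≤ x := le_of_lt (by simpa using hx)
    exact div_nonpos_of_nonpos_of_nonneg (hWle x hx') (sq_nonneg _)
  have := hqanti Set.self_mem_Ici (Set.mem_Ici.2 ht) ht
  have hq0 : q 0 ≤ 0 := by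
    simp only [hq_def, hd_def]
    rw [mul_zero, Real.cosh_zero, mul_one]
    simp
    linarith
  have hqt : q t ≤ 0 := le_trans this hq0
  have hcp := Real.cosh_pos (c * t)
  have : d t ≤ 0 := by
    have := (div_nonpos_iff).1 hqt
    rcases this with ⟨h1, h2⟩ | ⟨h1, h2⟩
    · linarith
    · exact h1
  simp only [hd_def] at this
  linarith


set_option maxHeartbeats 1000000 in
theorem delaunay_basic_estimates
    (n k : ℤ) (hk : 0 < k) (hnk : 2 * k < n) (ε : ℝ)
    (hε : 0 < ε) (hε' : ε < (((n : ℝ) - 2 * k) / n) ^ (1 / (2 * (k : ℝ))))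
    (v : ℝ → ℝ) (hv : IsDelaunay n k ε v) :
    ∀ t : ℝ,
      deriv v t ^ 2 ≤
        (((n : ℝ) - 2 * k) / (2 * k)) ^ 2 *
          (v t ^ 2 - ε ^ (((n : ℝ) - 2 * k) / k)) ∧
      v t ≤ ε ^ (((n : ℝ) - 2 * k) / (2 * k)) *
          Real.cosh (((n : ℝ) - 2 * k) / (2 * k) * t) ∧
      ε ^ (((n : ℝ) - 2 * k) / (2 * k)) *
          Real.cosh (((n : ℝ) - 2 * k) / (2 * k) * t) ≤
        ε ^ (((n : ℝ) - 2 * k) / (2 * k)) *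
          Real.exp (((n : ℝ) - 2 * k) / (2 * k) * |t|) := by
  obtain ⟨hC2, hODE, hd0, hv0, hbd⟩ := hv
  -- basic numeric facts
  have hkR : (0:ℝ) < (k:ℝ) := by exact_mod_cast hk
  have hnR : (2:ℝ) * k < (n:ℝ) := by exact_mod_cast hnk
  set m : ℝ := (n:ℝ) - 2 * k with hm_def
  have hm : 0 < m := by rw [hm_def]; linarith
  have hnpos : (0:ℝ) < (n:ℝ) := by linarith
  set c : ℝ := m / (2 * k) with hc_def
  have hc : 0 < c := div_pos hm (by linarith)
  set a : ℝ := 2 * (k:ℝ) / m with ha_def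
  have ha : 0 < a := div_pos (by linarith) hm
  have hac : a * c = 1 := by rw [ha_def, hc_def]; field_simp
  have hca2 : c ^ 2 * a ^ 2 = 1 := by nlinarith [hac]
  set K : ℕ := k.toNat with hK_def
  have hKZ : (K : ℤ) = k := Int.toNat_of_nonneg hk.le
  have hKk : (K:ℝ) = (k:ℝ) := by exact_mod_cast hKZ
  have hK1 : 1 ≤ K := by
    have : (1:ℝ) ≤ (K:ℝ) := by rw [hKk]; exact_mod_cast hk
    exact_mod_cast this
  set p : ℝ := 2 * (k:ℝ) * n / m with hp_def
  have hp : 0 < p := div_pos (by positivity) hm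
  set v₀ : ℝ := ε ^ c with hv₀_def
  have hv₀ : 0 < v₀ := Real.rpow_pos_of_pos hε _
  -- differentiability
  have hv1 : Differentiable ℝ v := hC2.differentiable (by norm_num)
  have hv2 : Differentiable ℝ (deriv v) := by
    have h := (contDiff_succ_iff_deriv (n := 1)).1 (by exact_mod_cast hC2)
    exact h.2.2.differentiable (by norm_num)
  have hvd : ∀ t, HasDerivAt v (deriv v t) t := fun t => (hv1 t).hasDerivAt
  have hvd2 : ∀ t, HasDerivAt (deriv v) (deriv (deriv v) t) t := fun t => (hv2 t).hasDerivAt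
  have hvpos : ∀ t, 0 < v t := fun t => lt_of_lt_of_le hv₀ (hbd t).1
  -- x and conservation
  set x : ℝ → ℝ := fun t => v t ^ 2 - a ^ 2 * deriv v t ^ 2 with hx_def
  have hxt_eq : ∀ t, v t ^ 2 - (2 * (k:ℝ) / ((n:ℝ) - 2 * k)) ^ 2 * deriv v t ^ 2 = x t := by
    intro t
    rw [hx_def, ha_def, hm_def]
  have hxd : ∀ t, HasDerivAt x
      (2 * v t * deriv v t - a ^ 2 * (2 * deriv v t * deriv (deriv v) t)) t := by
    intro t
    have h1 : HasDerivAt (fun s => v s ^ 2) (2 * v t * deriv v t) t := by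
      exact ((hvd t).pow 2).congr_deriv (by norm_num)
    have h2 : HasDerivAt (fun s => deriv v s ^ 2) (2 * deriv v t * deriv (deriv v) t) t := by
      exact ((hvd2 t).pow 2).congr_deriv (by norm_num)
    exact h1.sub (h2.const_mul _)
  set F : ℝ → ℝ := fun t => x t ^ K - v t ^ p with hF_def
  have hFd : ∀ t, HasDerivAt F 0 t := by
    intro t
    have h1 : HasDerivAt (fun s => x s ^ K)
        ((K:ℝ) * x t ^ (K - 1) * (2 * v t * deriv v t - a ^ 2 * (2 * deriv v t * deriv (deriv v) t))) t :=
      (hxd t).pow K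
    have h2 : HasDerivAt (fun s => v s ^ p)
        (deriv v t * p * v t ^ (p - 1)) t :=
      (hvd t).rpow_const (Or.inl (hvpos t).ne')
    have h3 := h1.sub h2
    refine h3.congr_deriv ?_
    have hode := hODE t
    rw [hxt_eq t, ← hm_def, ← ha_def, ← hK_def, ← hp_def] at hode
    have hrw : (K:ℝ) * x t ^ (K - 1) *
          (2 * v t * deriv v t - a ^ 2 * (2 * deriv v t * deriv (deriv v) t))
        = 2 * (K:ℝ) * deriv v t * (x t ^ (K - 1) * (v t - a ^ 2 * deriv (deriv v) t)) := by
      ring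
    rw [hrw, hode, hKk]
    have hpp : p = 2 * (k:ℝ) * ((n:ℝ) / m) := by rw [hp_def]; ring
    rw [hpp]
    ring
  have hFconst : ∀ t, F t = F 0 := by
    intro t
    exact is_const_of_deriv_eq_zero (fun s => (hFd s).differentiableAt)
      (fun s => (hFd s).deriv) t 0
  have hx0 : x 0 = v₀ ^ 2 := by
    rw [hx_def]
    simp [hd0, hv0]
  have hF0 : F 0 = (v₀ ^ 2) ^ K - v₀ ^ p := by
    rw [hF_def]
    simp only
    rw [hx0, hv0]
  -- x^K ≥ (v₀²)^K
  have hvp_mono : ∀ t, v₀ ^ p ≤ v t ^ p := fun t =>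
    Real.rpow_le_rpow hv₀.le (hbd t).1 hp.le
  have hxK : ∀ t, (v₀ ^ 2) ^ K ≤ x t ^ K := by
    intro t
    have h := hFconst t
    rw [hF0, hF_def] at h
    simp only at h
    linarith [hvp_mono t]
  have hv₀2pos : 0 < (v₀ ^ 2) ^ K := by positivity
  -- x > 0 everywhere by IVT
  have hxcont : Continuous x := by
    rw [hx_def]
    exact (hv1.continuous.pow 2).sub (continuous_const.mul (hv2.continuous.pow 2))
  have hxpos : ∀ t, 0 < x t := by
    intro t
    by_contra h
    push_neg at h
    have h0pos : 0 < x 0 := by rw [hx0]; positivity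
    have hmem : (0:ℝ) ∈ Set.uIcc (x 0) (x t) := by
      rw [Set.mem_uIcc]; right; exact ⟨h, h0pos.le⟩
    obtain ⟨s, _, hs⟩ := intermediate_value_uIcc (hxcont.continuousOn (s := Set.uIcc 0 t)) hmem
    have h2 := hxK s
    rw [hs, zero_pow (by omega)] at h2
    linarith
  have hxge : ∀ t, v₀ ^ 2 ≤ x t :=
    fun t => le_of_pow_le_pow_left₀ (by omega) (hxpos t).le (hxK t)
  -- v₀² = ε^(m/k)
  have hv₀sq : v₀ ^ 2 = ε ^ (m / k) := by
    rw [hv₀_def, ← Real.rpow_natCast (ε ^ c) 2, ← Real.rpow_mul hε.le]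
    congr 1
    rw [hc_def]
    push_cast
    field_simp
  -- v'' < c² v
  have hvpp : ∀ t, deriv (deriv v) t < c ^ 2 * v t := by
    intro t
    have hode := hODE t
    rw [hxt_eq t, ← hm_def, ← ha_def, ← hK_def, ← hp_def] at hode
    have hrp : 0 < (n:ℝ) / m * v t ^ (p - 1) :=
      mul_pos (div_pos hnpos hm) (Real.rpow_pos_of_pos (hvpos t) _)
    have hxk1 : 0 < x t ^ (K - 1) := pow_pos (hxpos t) _
    have hfac : 0 < v t - a ^ 2 * deriv (deriv v) t := by
      by_contra hcon
      push_neg at hcon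
      have hmn := mul_nonpos_of_nonneg_of_nonpos hxk1.le hcon
      rw [hode] at hmn
      linarith
    have h4 : c ^ 2 * (a ^ 2 * deriv (deriv v) t) = deriv (deriv v) t := by
      rw [← mul_assoc, hca2, one_mul]
    nlinarith [mul_pos (pow_pos hc 2) hfac]
  -- comparison
  have hcomp_pos : ∀ t ≥ 0, v t ≤ v₀ * Real.cosh (c * t) :=
    comp_le c v₀ v hv1 hv2 (le_of_eq hv0) hd0 hvpp
  have hcomp_neg : ∀ t ≤ 0, v t ≤ v₀ * Real.cosh (c * t) := by
    intro t ht
    set u : ℝ → ℝ := fun s => v (-s) with hu_def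
    have hud : ∀ s, HasDerivAt u (-deriv v (-s)) s := by
      intro s
      have h := (hvd (-s)).comp s (hasDerivAt_neg s)
      refine h.congr_deriv ?_
      ring
    have hu1 : Differentiable ℝ u := fun s => (hud s).differentiableAt
    have hderiv_u : deriv u = fun s => -deriv v (-s) := funext fun s => (hud s).deriv
    have hud2 : ∀ s, HasDerivAt (deriv u) (deriv (deriv v) (-s)) s := by
      intro s
      rw [hderiv_u]
      have h := ((hvd2 (-s)).comp s (hasDerivAt_neg s)).neg
      refine h.congr_deriv ?_
      ring
    have hu2 : Differentiable ℝ (deriv u) := fun s => (hud2 s).differentiableAt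
    have hu0 : u 0 ≤ v₀ := by
      have : u 0 = v 0 := by rw [hu_def]; norm_num
      rw [this, hv0]
    have hu0' : deriv u 0 = 0 := by rw [hderiv_u]; simp [hd0]
    have huODE : ∀ s, deriv (deriv u) s < c ^ 2 * u s := by
      intro s
      rw [(hud2 s).deriv]
      exact hvpp (-s)
    have h := comp_le c v₀ u hu1 hu2 hu0 hu0' huODE (-t) (by linarith)
    have he : u (-t) = v t := by rw [hu_def]; norm_num
    rw [he] at h
    rwa [mul_neg, Real.cosh_neg] at h
  -- conclude
  intro t
  refine ⟨?_, ?_, ?_⟩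
  · -- (i)
    have h1 := hxge t
    rw [hv₀sq, hx_def] at h1
    simp only at h1
    have h4 : c ^ 2 * (a ^ 2 * deriv v t ^ 2) = deriv v t ^ 2 := by
      rw [← mul_assoc, hca2, one_mul]
    nlinarith [mul_le_mul_of_nonneg_left h1 (sq_nonneg c)]
  · -- (ii)
    rcases le_total 0 t with ht | ht
    · exact hcomp_pos t ht
    · exact hcomp_neg t ht
  · -- (iii)
    apply mul_le_mul_of_nonneg_left _ hv₀.le
    have h1 : Real.cosh (c * t) = Real.cosh |c * t| := (Real.cosh_abs _).symm
    have h2 : |c * t| = c * |t| := by rw [abs_mul, abs_of_pos hc]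
    rw [h1, h2, Real.cosh_eq]
    have h3 : Real.exp (-(c * |t|)) ≤ Real.exp (c * |t|) :=
      Real.exp_le_exp.2 (by nlinarith [abs_nonneg t, hc.le])
    linarith
end

section
/- Let n and k be integers with 0 < k and 2k < n, let ε ∈ (0, ((n−2k)/n)^(1/(2k))), and let v be a Delaunay solution with necksize ε. Then for every t ∈ ℝ one has h(t) := v(t)² − (2k/(n−2k))² v'(t)² > 0 and v(t)^((2kn/(n−2k)) − 1) · h(t)^(1−k) ≤ ε^((n+2k)/(2k)) · exp(((n+2k)/(2k)) |t|), where h(t)^(1−k) denotes the real power of the positive number h(t) with exponent 1−k. -/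
open Real

private lemma gron_aux {u u' : ℝ → ℝ} {c : ℝ}
    (hu : ∀ s, HasDerivAt u (u' s) s)
    (hpos : ∀ s, 0 ≤ u s)
    (hb : ∀ s, |u' s| ≤ c * u s) :
    ∀ t, 0 ≤ t → u t ≤ u 0 * Real.exp (c * t) := by
  intro t ht
  have h := norm_le_gronwallBound_of_norm_deriv_right_le (f := u) (f' := u')
    (a := 0) (b := t) (δ := u 0) (K := c) (ε := 0)
    (fun s _ => (hu s).continuousAt.continuousWithinAt)
    (fun s _ => (hu s).hasDerivWithinAt)
    (by simp [Real.norm_eq_abs, abs_of_nonneg (hpos 0)])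
    (fun s _ => by
      simp only [Real.norm_eq_abs, abs_of_nonneg (hpos s), add_zero]
      exact hb s)
    t ⟨ht, le_rfl⟩
  rw [gronwallBound_ε0, sub_zero, Real.norm_eq_abs, abs_of_nonneg (hpos t)] at h
  exact h

theorem delaunay_nonlinear_term_estimate
    (n k : ℤ) (hk : 0 < k) (hnk : 2 * k < n) (ε : ℝ)
    (hε : 0 < ε) (hε' : ε < (((n : ℝ) - 2 * k) / n) ^ (1 / (2 * (k : ℝ))))
    (v : ℝ → ℝ) (hv : IsDelaunay n k ε v) :
    ∀ t : ℝ,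
      0 < v t ^ 2 - (2 * (k : ℝ) / ((n : ℝ) - 2 * k)) ^ 2 * deriv v t ^ 2 ∧
      v t ^ (2 * (k : ℝ) * n / ((n : ℝ) - 2 * k) - 1) *
          (v t ^ 2 - (2 * (k : ℝ) / ((n : ℝ) - 2 * k)) ^ 2 * deriv v t ^ 2) ^
            (1 - (k : ℝ)) ≤
        ε ^ (((n : ℝ) + 2 * k) / (2 * k)) *
          Real.exp (((n : ℝ) + 2 * k) / (2 * k) * |t|) := by
  obtain ⟨hreg, hode, hw0, hv0, hbounds⟩ := hv
  have hkR : (0 : ℝ) < (k : ℝ) := by exact_mod_cast hk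
  have hnkR : 2 * (k : ℝ) < (n : ℝ) := by exact_mod_cast hnk
  have hmpos : (0 : ℝ) < (n : ℝ) - 2 * k := by linarith
  have hmne : ((n : ℝ) - 2 * k) ≠ 0 := ne_of_gt hmpos
  have hkne : ((k : ℝ)) ≠ 0 := ne_of_gt hkR
  have hnpos : (0 : ℝ) < (n : ℝ) := by linarith
  -- notation
  set w := deriv v with hw
  set A : ℝ := (2 * (k : ℝ) / ((n : ℝ) - 2 * k)) ^ 2 with hA
  set q : ℝ := 2 * (k : ℝ) * n / ((n : ℝ) - 2 * k) with hq
  set K : ℕ := k.toNat with hKdef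
  have hKk : ((K : ℕ) : ℝ) = (k : ℝ) := by
    have : ((k.toNat : ℤ)) = k := Int.toNat_of_nonneg hk.le
    rw [hKdef]; exact_mod_cast this
  have hKne : K ≠ 0 := by
    have : (0 : ℝ) < (K : ℝ) := by rw [hKk]; exact hkR
    exact_mod_cast Nat.pos_of_ne_zero (fun h => by simp [h] at this) |>.ne'
  -- ε < 1
  have hε1 : ε < 1 := by
    refine lt_of_lt_of_le hε' (Real.rpow_le_one (by positivity) ?_ (by positivity))
    rw [div_le_one hnpos]; linarith
  -- positivity of v
  have hvpos : ∀ s, 0 < v s :=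
    fun s => lt_of_lt_of_le (Real.rpow_pos_of_pos hε _) (hbounds s).1
  -- regularity
  have h2 : ContDiff ℝ (1 + 1) v := by exact_mod_cast hreg
  obtain ⟨hvdiff, -, hwC1⟩ := contDiff_succ_iff_deriv.mp h2
  have hwdiff : Differentiable ℝ w := hwC1.differentiable one_ne_zero
  have hwcont : Continuous w := hwC1.continuous
  have hvd : ∀ s, HasDerivAt v (w s) s := fun s => (hvdiff s).hasDerivAt
  have hwd : ∀ s, HasDerivAt w (deriv w s) s := fun s => (hwdiff s).hasDerivAt
  -- conservation of the Hamiltonian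
  have hEd : ∀ s, HasDerivAt (fun y => (v y ^ 2 - A * w y ^ 2) ^ K - v y ^ q) 0 s := by
    intro s
    have hVne : v s ≠ 0 := (hvpos s).ne'
    have hd1 : HasDerivAt (fun x => v x ^ 2 - A * w x ^ 2)
        (2 * v s * w s - A * (2 * w s * deriv w s)) s := by
      have h := ((hvd s).pow 2).sub (((hwd s).pow 2).const_mul A)
      exact h.congr_deriv (by push_cast; ring)
    have hd2 := hd1.pow K
    have hd3 : HasDerivAt (fun x => v x ^ q) (q * v s ^ (q - 1) * w s) s := by
      have h := (Real.hasDerivAt_rpow_const (x := v s) (p := q) (Or.inl hVne)).comp s (hvd s)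
      exact h.congr_deriv (by ring)
    have hd4 := hd2.sub hd3
    refine hd4.congr_deriv ?_
    have hODE := hode s
    have expand : (K : ℝ) * (v s ^ 2 - A * w s ^ 2) ^ (K - 1) *
          (2 * v s * w s - A * (2 * w s * deriv w s))
        = 2 * w s * (K : ℝ) *
          ((v s ^ 2 - A * w s ^ 2) ^ (K - 1) * (v s - A * deriv w s)) := by ring
    rw [expand, hODE, hKk]
    rw [hq]
    field_simp
    ring
  have hEconst : ∀ s, (v s ^ 2 - A * w s ^ 2) ^ K - v s ^ q
      = (v 0 ^ 2 - A * w 0 ^ 2) ^ K - v 0 ^ q := by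
    intro s
    exact is_const_of_deriv_eq_zero (fun x => (hEd x).differentiableAt)
      (fun x => (hEd x).deriv) s 0
  -- value of the Hamiltonian at 0
  have hc0q : ((n : ℝ) - 2 * k) / (2 * k) * q = (n : ℝ) := by
    rw [hq]; field_simp
  have hE0 : (v 0 ^ 2 - A * w 0 ^ 2) ^ K - v 0 ^ q
      = ε ^ ((n : ℝ) - 2 * k) - ε ^ (n : ℝ) := by
    rw [hw0, hv0]
    have e1 : ((ε ^ (((n : ℝ) - 2 * k) / (2 * k))) ^ 2 - A * 0 ^ 2) ^ K
        = ε ^ ((n : ℝ) - 2 * k) := by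
      rw [show ((ε ^ (((n : ℝ) - 2 * k) / (2 * k))) ^ 2 - A * 0 ^ 2)
          = (ε ^ (((n : ℝ) - 2 * k) / (2 * k))) ^ 2 by ring]
      rw [← pow_mul, ← Real.rpow_natCast (ε ^ (((n : ℝ) - 2 * k) / (2 * k))) (2 * K),
        ← Real.rpow_mul hε.le]
      congr 1
      push_cast [hKk]
      field_simp
    have e2 : (ε ^ (((n : ℝ) - 2 * k) / (2 * k))) ^ q = ε ^ (n : ℝ) := by
      rw [← Real.rpow_mul hε.le, hc0q]
    rw [e1, e2]
  have hE0nonneg : (0 : ℝ) ≤ ε ^ ((n : ℝ) - 2 * k) - ε ^ (n : ℝ) := by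
    have := Real.rpow_le_rpow_of_exponent_ge hε hε1.le
      (show (n : ℝ) - 2 * k ≤ (n : ℝ) by linarith)
    linarith
  have hhK : ∀ s, (v s ^ 2 - A * w s ^ 2) ^ K
      = (ε ^ ((n : ℝ) - 2 * k) - ε ^ (n : ℝ)) + v s ^ q := by
    intro s
    have := hEconst s
    rw [hE0] at this
    linarith
  have hvq : ∀ s, 0 < v s ^ q := fun s => Real.rpow_pos_of_pos (hvpos s) q
  have hhKpos : ∀ s, 0 < (v s ^ 2 - A * w s ^ 2) ^ K := by
    intro s; rw [hhK s]; linarith [hvq s]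
  -- h > 0 everywhere by continuity
  have hh0 : 0 < v 0 ^ 2 - A * w 0 ^ 2 := by
    rw [hw0]
    have := pow_pos (hvpos 0) 2
    simpa using this
  have hhne : ∀ s, v s ^ 2 - A * w s ^ 2 ≠ 0 := by
    intro s hs
    have := hhKpos s
    rw [hs, zero_pow hKne] at this
    exact lt_irrefl 0 this
  have hcont : Continuous (fun s => v s ^ 2 - A * w s ^ 2) :=
    (hvdiff.continuous.pow 2).sub (continuous_const.mul (hwcont.pow 2))
  have hhpos : ∀ s, 0 < v s ^ 2 - A * w s ^ 2 := by
    intro s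
    by_contra hle
    push_neg at hle
    have hmem : (0 : ℝ) ∈ Set.uIcc ((fun s => v s ^ 2 - A * w s ^ 2) s)
        ((fun s => v s ^ 2 - A * w s ^ 2) 0) :=
      Set.mem_uIcc.mpr (Or.inl ⟨hle, hh0.le⟩)
    obtain ⟨c, -, hc⟩ := intermediate_value_uIcc hcont.continuousOn hmem
    exact hhne c hc
  -- h ≥ v ^ (q/k)
  have hhge : ∀ s, v s ^ (q / (k : ℝ)) ≤ v s ^ 2 - A * w s ^ 2 := by
    intro s
    have hb : (v s ^ (q / (k : ℝ))) ^ K = v s ^ q := by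
      rw [← Real.rpow_natCast (v s ^ (q / (k : ℝ))) K, ← Real.rpow_mul (hvpos s).le]
      congr 1
      rw [hKk]
      field_simp
    have hle : (v s ^ (q / (k : ℝ))) ^ K ≤ (v s ^ 2 - A * w s ^ 2) ^ K := by
      rw [hb, hhK s]; linarith
    exact le_of_pow_le_pow_left₀ hKne (hhpos s).le hle
  -- |w| ≤ ((n-2k)/(2k)) v
  have hwb : ∀ s, |w s| ≤ ((n : ℝ) - 2 * k) / (2 * k) * v s := by
    intro s
    have h1 : (2 * (k : ℝ) / ((n : ℝ) - 2 * k) * |w s|) ^ 2 ≤ v s ^ 2 := by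
      rw [mul_pow, sq_abs, ← hA]
      have := hhpos s
      linarith
    have h2 : 2 * (k : ℝ) / ((n : ℝ) - 2 * k) * |w s| ≤ v s :=
      le_of_pow_le_pow_left₀ two_ne_zero (hvpos s).le h1
    calc |w s| = ((n : ℝ) - 2 * k) / (2 * k) * (2 * (k : ℝ) / ((n : ℝ) - 2 * k) * |w s|) := by
          field_simp
      _ ≤ ((n : ℝ) - 2 * k) / (2 * k) * v s :=
          mul_le_mul_of_nonneg_left h2 (by positivity)
  -- growth bound on v
  have hgrow : ∀ s, v s ≤ v 0 * Real.exp (((n : ℝ) - 2 * k) / (2 * k) * |s|) := by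
    intro s
    rcases le_or_gt 0 s with hs | hs
    · have := gron_aux hvd (fun x => (hvpos x).le) hwb s hs
      rwa [abs_of_nonneg hs]
    · have hud : ∀ x, HasDerivAt (fun y => v (-y)) (-(w (-x))) x := by
        intro x
        have h := (hvd (-x)).comp x (hasDerivAt_neg x)
        exact h.congr_deriv (by ring)
      have h := gron_aux hud (fun x => (hvpos (-x)).le)
        (fun x => by simpa using hwb (-x)) (-s) (by linarith)
      simp only [neg_neg, neg_zero] at h
      rwa [abs_of_neg hs]
  -- final assembly
  intro t
  refine ⟨hhpos t, ?_⟩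
  have hkge1 : (1 : ℝ) ≤ (k : ℝ) := by exact_mod_cast hk
  have step1 : (v t ^ 2 - A * w t ^ 2) ^ (1 - (k : ℝ))
      ≤ (v t ^ (q / (k : ℝ))) ^ (1 - (k : ℝ)) :=
    Real.rpow_le_rpow_of_nonpos (Real.rpow_pos_of_pos (hvpos t) _) (hhge t) (by linarith)
  have step2 : v t ^ (q - 1) * (v t ^ (q / (k : ℝ))) ^ (1 - (k : ℝ))
      = v t ^ (((n : ℝ) + 2 * k) / ((n : ℝ) - 2 * k)) := by
    rw [← Real.rpow_mul (hvpos t).le, ← Real.rpow_add (hvpos t)]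
    congr 1
    rw [hq]
    field_simp
    ring
  have hrpos : (0 : ℝ) < ((n : ℝ) + 2 * k) / ((n : ℝ) - 2 * k) := by positivity
  have step4 : v t ^ (((n : ℝ) + 2 * k) / ((n : ℝ) - 2 * k))
      ≤ (v 0 * Real.exp (((n : ℝ) - 2 * k) / (2 * k) * |t|)) ^
          (((n : ℝ) + 2 * k) / ((n : ℝ) - 2 * k)) :=
    Real.rpow_le_rpow (hvpos t).le (hgrow t) hrpos.le
  have step5 : (v 0 * Real.exp (((n : ℝ) - 2 * k) / (2 * k) * |t|)) ^
        (((n : ℝ) + 2 * k) / ((n : ℝ) - 2 * k))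
      = ε ^ (((n : ℝ) + 2 * k) / (2 * k)) *
          Real.exp (((n : ℝ) + 2 * k) / (2 * k) * |t|) := by
    rw [hv0, Real.mul_rpow (Real.rpow_nonneg hε.le _) (Real.exp_pos _).le,
      ← Real.rpow_mul hε.le, ← Real.exp_mul]
    congr 1
    · congr 1; field_simp
    · congr 1; field_simp
  calc v t ^ (q - 1) * (v t ^ 2 - A * w t ^ 2) ^ (1 - (k : ℝ))
      ≤ v t ^ (q - 1) * (v t ^ (q / (k : ℝ))) ^ (1 - (k : ℝ)) :=
        mul_le_mul_of_nonneg_left step1 (Real.rpow_nonneg (hvpos t).le _)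
    _ = v t ^ (((n : ℝ) + 2 * k) / ((n : ℝ) - 2 * k)) := step2
    _ ≤ _ := step4
    _ = _ := step5
end

section
/- Let n and k be integers with 0 < k and 2k < n. There exists a constant c > 0, depending only on n and k, such that for every ε ∈ (0, ((n−2k)/n)^(1/(2k))), every Delaunay solution v with necksize ε, and every t ≥ 0: 0 ≤ ε^((n−2k)/(2k)) · cosh(((n−2k)/(2k)) t) − v(t) ≤ c · ε^((n+2k)/(2k)) · exp(((n+2k)/(2k)) t). -/
open Real

set_option maxHeartbeats 1000000 in
theorem delaunay_key (n k : ℤ) (hk : 0 < k) (hnk : 2 * k < n)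
    (ε : ℝ) (hε : 0 < ε) (hε2 : ε < (((n : ℝ) - 2 * k) / n) ^ (1 / (2 * (k : ℝ))))
    (v : ℝ → ℝ) (hv : IsDelaunay n k ε v) (t : ℝ) (ht : 0 ≤ t) :
    0 ≤ ε ^ (((n : ℝ) - 2 * k) / (2 * k)) *
        Real.cosh (((n : ℝ) - 2 * k) / (2 * k) * t) - v t ∧
      ε ^ (((n : ℝ) - 2 * k) / (2 * k)) *
          Real.cosh (((n : ℝ) - 2 * k) / (2 * k) * t) - v t ≤
        ((((n : ℝ) - 2 * k) / (2 * k)) ^ 2 * ((n : ℝ) / ((n : ℝ) - 2 * k)) /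
            (2 * ((((n : ℝ) - 2 * k) / (2 * k)) + (((n : ℝ) + 2 * k) / (2 * k))))) *
          ε ^ (((n : ℝ) + 2 * k) / (2 * k)) *
          Real.exp (((n : ℝ) + 2 * k) / (2 * k) * t) := by
  obtain ⟨hC, hODE, hd0, h00, hbd⟩ := hv
  have hODE' : ∀ s : ℝ,
      (v s ^ 2 - (2 * (k : ℝ) / ((n : ℝ) - 2 * k)) ^ 2 * deriv v s ^ 2) ^ (k.toNat - 1) *
        (v s - (2 * (k : ℝ) / ((n : ℝ) - 2 * k)) ^ 2 * deriv (deriv v) s) =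
      (n : ℝ) / ((n : ℝ) - 2 * k) * v s ^ (2 * (k : ℝ) * n / ((n : ℝ) - 2 * k) - 1) := hODE
  clear hODE
  -- basic number facts
  have hkR : (0:ℝ) < (k:ℝ) := by exact_mod_cast hk
  have hnR : (0:ℝ) < (n:ℝ) := by
    have : (0:ℤ) < n := lt_trans (by positivity) hnk
    exact_mod_cast this
  set a : ℝ := (n:ℝ) - 2 * k with ha_def
  have ha : 0 < a := by
    have : (2*k:ℝ) < n := by exact_mod_cast hnk
    simp [ha_def]; linarith
  set al : ℝ := a / (2 * (k:ℝ)) with hal_def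
  have hal : 0 < al := by positivity
  set ga : ℝ := ((n:ℝ) + 2 * k) / (2 * (k:ℝ)) with hga_def
  have hga : ga = al + 2 := by rw [hga_def, hal_def, ha_def]; field_simp; ring
  have hgapos : 0 < ga := by rw [hga]; linarith
  set K : ℕ := k.toNat with hK_def
  have hKk : (K:ℝ) = (k:ℝ) := by
    rw [hK_def]; exact_mod_cast congrArg Int.cast (Int.toNat_of_nonneg hk.le)
  have hK1 : 1 ≤ K := by
    rw [hK_def]; omega
  set Q : ℝ := 2 * (k:ℝ) * n / a with hQ_def
  have hQpos : 0 < Q := by positivity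
  set b2 : ℝ := (2 * (k:ℝ) / a) ^ 2 with hb2_def
  have hb2al : b2 * al ^ 2 = 1 := by rw [hb2_def, hal_def]; field_simp
  have cnpos : 0 < (n:ℝ)/a := by positivity
  clear_value a al ga K Q b2
  -- epsilon facts
  have hε1 : ε < 1 := lt_of_lt_of_le hε2 (by
    apply Real.rpow_le_one (by positivity)
    · rw [div_le_one hnR]; linarith
    · positivity)
  have heps_al_pos : 0 < ε ^ al := rpow_pos_of_pos hε _
  -- v facts
  have hvpos : ∀ s, 0 < v s := fun s => lt_of_lt_of_le heps_al_pos (by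
    have := (hbd s).1
    rwa [hal_def, ha_def] at this ⊢)
  have h00' : v 0 = ε ^ al := by rw [h00, hal_def, ha_def]
  -- differentiability
  have hC2 : ContDiff ℝ ((1:ℕ)+1) v := hC
  have hdv : Differentiable ℝ v := hC.differentiable (by norm_num)
  have hdw : Differentiable ℝ (deriv v) :=
    ((contDiff_succ_iff_deriv.mp hC2).2.2).differentiable (by norm_num)
  have hvd : ∀ s, HasDerivAt v (deriv v s) s := fun s => (hdv s).hasDerivAt
  have hwd : ∀ s, HasDerivAt (deriv v) (deriv (deriv v) s) s := fun s => (hdw s).hasDerivAt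
  -- the quantity P
  set P : ℝ → ℝ := fun s => v s ^ 2 - b2 * deriv v s ^ 2 with hP_def
  have hPd : ∀ s, HasDerivAt P
      (2 * v s * deriv v s - b2 * (2 * deriv v s * deriv (deriv v) s)) s := by
    intro s
    have h1 : HasDerivAt (fun s => v s ^ 2) (2 * v s * deriv v s) s := by
      simpa [mul_comm, mul_assoc, Pi.pow_def] using (hvd s).pow 2
    have h2 : HasDerivAt (fun s => b2 * deriv v s ^ 2)
        (b2 * (2 * deriv v s * deriv (deriv v) s)) s := by
      have := ((hwd s).pow 2).const_mul b2
      simpa [mul_comm, mul_assoc] using this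
    exact h1.sub h2
  -- conservation of the Hamiltonian
  have hderiv0 : ∀ s, HasDerivAt (fun s => P s ^ K - v s ^ Q) 0 s := by
    intro s
    have h1 := (hPd s).pow K
    have h2 : HasDerivAt (fun s => v s ^ Q) (deriv v s * Q * v s ^ (Q - 1)) s :=
      (hvd s).rpow_const (Or.inl (hvpos s).ne')
    have h3 := h1.sub h2
    refine h3.congr_deriv (Eq.symm ?_)
    have h4 : P s ^ (K - 1) * (v s - b2 * deriv (deriv v) s) = (n:ℝ)/a * v s ^ (Q - 1) :=
      hODE' s
    have hQK : Q = 2 * (K:ℝ) * ((n:ℝ)/a) := by rw [hKk, hQ_def]; ring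
    set X := v s ^ (Q - 1) with hX
    clear_value X
    rw [hQK]
    have han : a ≠ 0 := ha.ne'
    field_simp
    have key : a * a⁻¹ = 1 := mul_inv_cancel₀ han
    linear_combination (-(2:ℝ) * deriv v s * (K:ℝ) * a) * h4 -
      ((2:ℝ) * deriv v s * (K:ℝ) * (n:ℝ) * X) * key
  have hconst : ∀ s, P s ^ K - v s ^ Q = P 0 ^ K - v 0 ^ Q := fun s =>
    is_const_of_deriv_eq_zero (fun x => (hderiv0 x).differentiableAt)
      (fun x => (hderiv0 x).deriv) s 0
  have hP0K : P 0 ^ K = ε ^ a := by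
    have : P 0 = ε ^ (al * 2) := by
      simp only [hP_def, hd0, h00']
      rw [← Real.rpow_natCast (ε ^ al) 2, ← Real.rpow_mul hε.le]
      norm_num
    rw [this, ← Real.rpow_natCast (ε ^ (al*2)) K, ← Real.rpow_mul hε.le]
    congr 1
    rw [hal_def, hKk]
    field_simp
  have hv0Q : v 0 ^ Q = ε ^ (n:ℝ) := by
    rw [h00', ← Real.rpow_mul hε.le]
    congr 1
    rw [hal_def, hQ_def]
    field_simp
  have hcons : ∀ s, P s ^ K = ε ^ a - ε ^ (n:ℝ) + v s ^ Q := by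
    intro s
    have := hconst s
    rw [hP0K, hv0Q] at this
    linarith
  -- positivity of P
  have hεaεn : ε ^ (n:ℝ) ≤ ε ^ a := by
    apply Real.rpow_le_rpow_of_exponent_ge hε hε1.le
    rw [ha_def]; linarith
  have hPKge : ∀ s, v s ^ Q ≤ P s ^ K := by
    intro s; rw [hcons s]; linarith
  have hPKpos : ∀ s, 0 < P s ^ K := fun s =>
    lt_of_lt_of_le (Real.rpow_pos_of_pos (hvpos s) Q) (hPKge s)
  have hPne : ∀ s, P s ≠ 0 := by
    intro s hs
    have h := hPKpos s
    rw [hs, zero_pow (by omega : K ≠ 0)] at h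
    exact lt_irrefl _ h
  have hP0pos : 0 < P 0 := by
    have : P 0 = (ε ^ al) ^ 2 := by simp [hP_def, hd0, h00']
    rw [this]; positivity
  have hPc : Continuous P := by
    rw [hP_def]
    exact (hdv.continuous.pow 2).sub (continuous_const.mul (hdw.continuous.pow 2))
  have hPpos : ∀ s, 0 < P s := by
    intro s
    rcases lt_or_ge 0 (P s) with h | h
    · exact h
    · exfalso
      have hneg : P s < 0 := lt_of_le_of_ne h (hPne s)
      have hsub := intermediate_value_uIcc (a := (0:ℝ)) (b := s) hPc.continuousOn
      have h0m : (0:ℝ) ∈ Set.uIcc (P 0) (P s) :=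
        Set.mem_uIcc.mpr (Or.inr ⟨hneg.le, hP0pos.le⟩)
      obtain ⟨s0, _, hs0⟩ := hsub h0m
      exact hPne s0 hs0
  have hKne : (K:ℝ) ≠ 0 := by rw [hKk]; exact hkR.ne'
  have hPvQK : ∀ s, v s ^ (Q/(K:ℝ)) ≤ P s := by
    intro s
    apply le_of_pow_le_pow_left₀ (n := K) (by omega) (hPpos s).le
    calc (v s ^ (Q/(K:ℝ))) ^ K = v s ^ Q := by
          rw [← Real.rpow_natCast (v s ^ (Q/(K:ℝ))) K, ← Real.rpow_mul (hvpos s).le,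
            div_mul_cancel₀ _ hKne]
      _ ≤ P s ^ K := hPKge s
  -- second derivative formula
  set R : ℝ → ℝ := fun s => (n:ℝ)/a * v s ^ (Q-1) / P s ^ (K-1) with hR_def
  have hRpos : ∀ s, 0 < R s := fun s =>
    div_pos (mul_pos cnpos (Real.rpow_pos_of_pos (hvpos s) _)) (pow_pos (hPpos s) _)
  have hw2 : ∀ s, deriv (deriv v) s = al^2 * (v s - R s) := by
    intro s
    have h6 : v s - b2 * deriv (deriv v) s = R s := by
      rw [hR_def]
      rw [eq_div_iff (pow_ne_zero _ (hPpos s).ne')]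
      linear_combination hODE' s
    have h7 : v s - R s = b2 * deriv (deriv v) s := by linarith
    rw [h7, ← mul_assoc, mul_comm (al^2) b2, hb2al, one_mul]
  -- the bound on R
  set e : ℝ := Q/(K:ℝ) - 1 with he_def
  have hQKe : Q/(K:ℝ) = 2*(n:ℝ)/a := by
    rw [hQ_def, hKk]
    field_simp
  have hale : al * e = ga := by
    rw [he_def, hQKe, hal_def, hga_def]
    have hane : a ≠ 0 := ha.ne'
    field_simp
    rw [ha_def]
    ring
  have hepos : 0 < e := by
    have h2n : a < 2*(n:ℝ) := by rw [ha_def]; push_cast; nlinarith [hkR]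
    rw [he_def, hQKe]
    have := (one_lt_div ha).mpr h2n
    linarith
  have hKR1 : ((K-1:ℕ):ℝ) = (K:ℝ) - 1 := by
    rw [Nat.cast_sub hK1]; norm_num
  have hRle : ∀ s, R s ≤ (n:ℝ)/a * v s ^ e := by
    intro s
    have hd : v s ^ (Q/(K:ℝ) * ((K-1:ℕ):ℝ)) ≤ P s ^ (K-1) := by
      calc v s ^ (Q/(K:ℝ) * ((K-1:ℕ):ℝ)) = (v s ^ (Q/(K:ℝ))) ^ (K-1) := by
            rw [Real.rpow_mul (hvpos s).le, Real.rpow_natCast]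
        _ ≤ P s ^ (K-1) :=
            pow_le_pow_left₀ (Real.rpow_nonneg (hvpos s).le _) (hPvQK s) _
    have hvw : (0:ℝ) < v s ^ (Q/(K:ℝ) * ((K-1:ℕ):ℝ)) := Real.rpow_pos_of_pos (hvpos s) _
    calc R s = (n:ℝ)/a * v s ^ (Q-1) / P s ^ (K-1) := by rw [hR_def]
      _ ≤ (n:ℝ)/a * v s ^ (Q-1) / v s ^ (Q/(K:ℝ) * ((K-1:ℕ):ℝ)) := by
          rw [div_le_div_iff_of_pos_left (mul_pos cnpos (Real.rpow_pos_of_pos (hvpos s) _))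
            (pow_pos (hPpos s) _) hvw]
          exact hd
      _ = (n:ℝ)/a * v s ^ e := by
          rw [mul_div_assoc, ← Real.rpow_sub (hvpos s)]
          congr 1
          rw [he_def, hKR1]
          field_simp
          ring
  -- comparison functions
  set W : ℝ → ℝ := fun s => ε ^ al * Real.cosh (al * s) with hW_def
  set f : ℝ → ℝ := fun s => W s - v s with hf_def
  set u : ℝ → ℝ := fun s => (ε ^ al * (al * Real.sinh (al * s)) - deriv v s) - al * f s
    with hu_def
  set G : ℝ → ℝ := fun s => Real.exp (al * s) * u s with hG_def
  set F : ℝ → ℝ := fun s => Real.exp (-(al * s)) * f s with hF_def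
  clear_value W f u G F
  have hsinhd : ∀ s : ℝ, HasDerivAt (fun s => Real.sinh (al * s)) (al * Real.cosh (al * s)) s := by
    intro s
    have h1 : HasDerivAt (fun x : ℝ => al * x) al s := by
      simpa using (hasDerivAt_id s).const_mul al
    simpa [mul_comm, Function.comp_def] using (Real.hasDerivAt_sinh (al * s)).comp s h1
  have hcoshd : ∀ s : ℝ, HasDerivAt (fun s => Real.cosh (al * s)) (al * Real.sinh (al * s)) s := by
    intro s
    have h1 : HasDerivAt (fun x : ℝ => al * x) al s := by
      simpa using (hasDerivAt_id s).const_mul al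
    simpa [mul_comm, Function.comp_def] using (Real.hasDerivAt_cosh (al * s)).comp s h1
  have hWd : ∀ s, HasDerivAt W (ε ^ al * (al * Real.sinh (al * s))) s := by
    intro s
    rw [hW_def]
    exact (hcoshd s).const_mul (ε ^ al)
  have hfd : ∀ s, HasDerivAt f (ε ^ al * (al * Real.sinh (al * s)) - deriv v s) s := by
    intro s
    rw [hf_def]
    exact (hWd s).sub (hvd s)
  have hud : ∀ s, HasDerivAt u
      (al^2 * (f s + R s) - al * (ε ^ al * (al * Real.sinh (al * s)) - deriv v s)) s := by
    intro s
    have h1 : HasDerivAt (fun s => ε ^ al * (al * Real.sinh (al * s)))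
        (ε ^ al * (al * (al * Real.cosh (al * s)))) s :=
      ((hsinhd s).const_mul al).const_mul (ε ^ al)
    have h2 := (h1.sub (hwd s)).sub ((hfd s).const_mul al)
    rw [hu_def]; refine h2.congr_deriv (Eq.symm ?_)
    rw [hw2 s]
    simp only [hf_def, hW_def]
    ring
  have hexpd : ∀ c : ℝ, ∀ s : ℝ, HasDerivAt (fun s => Real.exp (c * s)) (c * Real.exp (c * s)) s := by
    intro c s
    have h1 : HasDerivAt (fun x : ℝ => c * x) c s := by
      simpa using (hasDerivAt_id s).const_mul c
    simpa [mul_comm, Function.comp_def] using (Real.hasDerivAt_exp (c * s)).comp s h1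
  have hGd : ∀ s, HasDerivAt G (Real.exp (al * s) * (al^2 * R s)) s := by
    intro s
    have h2 := (hexpd al s).mul (hud s)
    rw [hG_def]
    refine h2.congr_deriv (Eq.symm ?_)
    simp only [hu_def]
    ring
  have hGmono : Monotone G := by
    apply monotone_of_deriv_nonneg (fun s => (hGd s).differentiableAt)
    intro s
    rw [(hGd s).deriv]
    exact mul_nonneg (Real.exp_nonneg _) (mul_nonneg (sq_nonneg al) (hRpos s).le)
  have hG0 : G 0 = 0 := by
    simp [hG_def, hu_def, hf_def, hW_def, hd0, h00']
  have hu0 : ∀ s, 0 ≤ s → 0 ≤ u s := by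
    intro s hs
    have h := hGmono hs
    rw [hG0] at h
    simp only [hG_def] at h
    exact nonneg_of_mul_nonneg_right h (Real.exp_pos _)
  have hFd : ∀ s, HasDerivAt F (Real.exp (-(al * s)) * u s) s := by
    intro s
    have h1 : HasDerivAt (fun s : ℝ => Real.exp (-(al * s))) (-al * Real.exp (-(al * s))) s := by
      have := hexpd (-al) s
      simpa [neg_mul] using this
    have h2 := h1.mul (hfd s)
    rw [hF_def]
    refine h2.congr_deriv (Eq.symm ?_)
    simp only [hu_def]
    ring
  have hF0 : F 0 = 0 := by simp [hF_def, hf_def, hW_def, h00']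
  have hFdiff : Differentiable ℝ F := fun s => (hFd s).differentiableAt
  have hFmono : MonotoneOn F (Set.Ici 0) := by
    apply monotoneOn_of_deriv_nonneg (convex_Ici 0) hFdiff.continuous.continuousOn
      (fun s _ => (hFd s).differentiableAt.differentiableWithinAt)
    intro x hx
    rw [interior_Ici] at hx
    rw [(hFd x).deriv]
    exact mul_nonneg (Real.exp_nonneg _) (hu0 x (le_of_lt hx))
  have hfpos : ∀ s, 0 ≤ s → 0 ≤ f s := by
    intro s hs
    have h := hFmono Set.self_mem_Ici hs hs
    rw [hF0] at h
    simp only [hF_def] at h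
    exact nonneg_of_mul_nonneg_right h (Real.exp_pos _)
  have hcosh_exp : ∀ x : ℝ, 0 ≤ x → Real.cosh x ≤ Real.exp x := by
    intro x hx
    rw [Real.cosh_eq]
    have h1 : Real.exp (-x) ≤ Real.exp x := Real.exp_le_exp.mpr (by linarith)
    linarith
  have hvW : ∀ s, 0 ≤ s → v s ≤ ε ^ al * Real.exp (al * s) := by
    intro s hs
    have h1 : 0 ≤ W s - v s := by
      have := hfpos s hs
      simpa [hf_def] using this
    have h2 : W s ≤ ε ^ al * Real.exp (al * s) := by
      rw [hW_def]
      exact mul_le_mul_of_nonneg_left (hcosh_exp _ (by positivity)) heps_al_pos.le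
    linarith
  have hRle2 : ∀ s, 0 ≤ s → R s ≤ (n : ℝ)/a * (ε ^ ga * Real.exp (ga * s)) := by
    intro s hs
    refine le_trans (hRle s) (mul_le_mul_of_nonneg_left ?_ cnpos.le)
    calc v s ^ e ≤ (ε ^ al * Real.exp (al * s)) ^ e :=
          Real.rpow_le_rpow (hvpos s).le (hvW s hs) hepos.le
      _ = ε ^ ga * Real.exp (ga * s) := by
          rw [Real.mul_rpow (Real.rpow_nonneg hε.le _) (Real.exp_nonneg _),
            ← Real.rpow_mul hε.le, ← Real.exp_mul, hale]
          congr 1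
          rw [← hale]
          ring
  -- upper bound machinery
  set M : ℝ := al ^ 2 * ((n : ℝ)/a) * ε ^ ga / (al + ga) with hM_def
  have halga : 0 < al + ga := by linarith
  have hMpos : 0 < M := by
    rw [hM_def]
    exact div_pos (mul_pos (mul_pos (pow_pos hal 2) cnpos)
      (Real.rpow_pos_of_pos hε _)) halga
  have hMkey : M * (al + ga) = al ^ 2 * ((n : ℝ)/a) * ε ^ ga := by
    rw [hM_def]
    field_simp
  clear_value M
  set φ : ℝ → ℝ := fun s => M * Real.exp ((al + ga) * s) - G s with hφ_def
  have hφd : ∀ s, HasDerivAt φ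
      (M * ((al + ga) * Real.exp ((al + ga) * s)) - Real.exp (al * s) * (al ^ 2 * R s)) s := by
    intro s
    rw [hφ_def]
    exact ((hexpd (al + ga) s).const_mul M).sub (hGd s)
  have hφmono : MonotoneOn φ (Set.Ici 0) := by
    apply monotoneOn_of_deriv_nonneg (convex_Ici 0)
      (fun s _ => (hφd s).differentiableAt.continuousAt.continuousWithinAt)
      (fun s _ => (hφd s).differentiableAt.differentiableWithinAt)
    intro x hx
    rw [interior_Ici] at hx
    rw [(hφd x).deriv]
    have h1 : Real.exp (al * x) * (al ^ 2 * R x) ≤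
        Real.exp (al * x) * (al ^ 2 * ((n : ℝ)/a * (ε ^ ga * Real.exp (ga * x)))) := by
      apply mul_le_mul_of_nonneg_left _ (Real.exp_nonneg _)
      exact mul_le_mul_of_nonneg_left (hRle2 x hx.le) (sq_nonneg al)
    have h2 : Real.exp (al * x) * (al ^ 2 * ((n : ℝ)/a * (ε ^ ga * Real.exp (ga * x)))) =
        M * ((al + ga) * Real.exp ((al + ga) * x)) := by
      have h3 : Real.exp ((al + ga) * x) = Real.exp (al * x) * Real.exp (ga * x) := by
        rw [← Real.exp_add]; congr 1; ring
      rw [h3]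
      linear_combination (-(Real.exp (al * x) * Real.exp (ga * x))) * hMkey
    linarith
  have hGle : ∀ s, 0 ≤ s → G s ≤ M * Real.exp ((al + ga) * s) := by
    intro s hs
    have h := hφmono Set.self_mem_Ici hs hs
    have hφ0 : φ 0 = M := by simp [hφ_def, hG0]
    rw [hφ0] at h
    simp only [hφ_def] at h
    linarith
  have huM : ∀ s, 0 ≤ s → u s ≤ M * Real.exp (ga * s) := by
    intro s hs
    have h := hGle s hs
    simp only [hG_def] at h
    have h3 : Real.exp (al * s) * u s ≤ Real.exp (al * s) * (M * Real.exp (ga * s)) := by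
      calc Real.exp (al * s) * u s ≤ M * Real.exp ((al + ga) * s) := h
        _ = Real.exp (al * s) * (M * Real.exp (ga * s)) := by
            rw [show (al + ga) * s = al * s + ga * s by ring, Real.exp_add]; ring
    exact le_of_mul_le_mul_left h3 (Real.exp_pos _)
  clear_value φ
  set ψ : ℝ → ℝ := fun s => M / 2 * Real.exp (2 * s) - F s with hψ_def
  have hψd : ∀ s, HasDerivAt ψ
      (M / 2 * (2 * Real.exp (2 * s)) - Real.exp (-(al * s)) * u s) s := by
    intro s
    rw [hψ_def]
    exact ((hexpd 2 s).const_mul (M / 2)).sub (hFd s)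
  have hψmono : MonotoneOn ψ (Set.Ici 0) := by
    apply monotoneOn_of_deriv_nonneg (convex_Ici 0)
      (fun s _ => (hψd s).differentiableAt.continuousAt.continuousWithinAt)
      (fun s _ => (hψd s).differentiableAt.differentiableWithinAt)
    intro x hx
    rw [interior_Ici] at hx
    rw [(hψd x).deriv]
    have h1 : Real.exp (-(al * x)) * u x ≤ Real.exp (-(al * x)) * (M * Real.exp (ga * x)) :=
      mul_le_mul_of_nonneg_left (huM x hx.le) (Real.exp_nonneg _)
    have h2 : Real.exp (-(al * x)) * (M * Real.exp (ga * x)) = M * Real.exp (2 * x) := by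
      rw [show (2:ℝ) * x = -(al * x) + ga * x by rw [hga]; ring, Real.exp_add]
      ring
    have h3 : M / 2 * (2 * Real.exp (2 * x)) = M * Real.exp (2 * x) := by ring
    linarith
  clear_value ψ
  have hFle : F t ≤ M / 2 * Real.exp (2 * t) := by
    have h := hψmono Set.self_mem_Ici ht ht
    have hψ0 : ψ 0 = M / 2 := by simp [hψ_def, hF0]
    rw [hψ0] at h
    simp only [hψ_def] at h
    linarith
  have hfle : f t ≤ M / 2 * Real.exp (ga * t) := by
    have h1 : Real.exp (al * t) * F t ≤ Real.exp (al * t) * (M / 2 * Real.exp (2 * t)) :=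
      mul_le_mul_of_nonneg_left hFle (Real.exp_nonneg _)
    have h2 : Real.exp (al * t) * F t = f t := by
      rw [hF_def, ← mul_assoc, ← Real.exp_add]
      simp
    have h3 : Real.exp (al * t) * (M / 2 * Real.exp (2 * t)) = M / 2 * Real.exp (ga * t) := by
      rw [show ga * t = al * t + 2 * t by rw [hga]; ring, Real.exp_add]
      ring
    rw [h2, h3] at h1
    exact h1
  constructor
  · have heq : ε ^ al * Real.cosh (al * t) - v t = f t := by
      simp only [hf_def, hW_def]
    rw [heq]
    exact hfpos t ht
  · have heq : ε ^ al * Real.cosh (al * t) - v t = f t := by simp [hf_def, hW_def]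
    rw [heq]
    refine le_trans hfle (le_of_eq ?_)
    rw [hM_def]
    field_simp

theorem delaunay_cosh_comparison
    (n k : ℤ) (hk : 0 < k) (hnk : 2 * k < n) :
    ∃ c : ℝ, 0 < c ∧
      ∀ ε : ℝ, 0 < ε → ε < (((n : ℝ) - 2 * k) / n) ^ (1 / (2 * (k : ℝ))) →
        ∀ v : ℝ → ℝ, IsDelaunay n k ε v →
          ∀ t : ℝ, 0 ≤ t →
            0 ≤ ε ^ (((n : ℝ) - 2 * k) / (2 * k)) *
                Real.cosh (((n : ℝ) - 2 * k) / (2 * k) * t) - v t ∧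
              ε ^ (((n : ℝ) - 2 * k) / (2 * k)) *
                  Real.cosh (((n : ℝ) - 2 * k) / (2 * k) * t) - v t ≤
                c * ε ^ (((n : ℝ) + 2 * k) / (2 * k)) *
                  Real.exp (((n : ℝ) + 2 * k) / (2 * k) * t) := by
  have hkR : (0:ℝ) < (k:ℝ) := by exact_mod_cast hk
  have ha : (0:ℝ) < (n:ℝ) - 2 * k := by
    have : (2*k:ℝ) < n := by exact_mod_cast hnk
    linarith
  have hnR : (0:ℝ) < (n:ℝ) := by linarith
  refine ⟨_, ?_, fun ε hε1 hε2 v hv t ht => delaunay_key n k hk hnk ε hε1 hε2 v hv t ht⟩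
  have h1 : (0:ℝ) < (((n:ℝ) - 2*k)/(2*k)) := by positivity
  have h2 : (0:ℝ) < ((n:ℝ)/((n:ℝ) - 2*k)) := by positivity
  have h3 : (0:ℝ) < (((n:ℝ) + 2*k)/(2*k)) := by positivity
  exact div_pos (mul_pos (pow_pos h1 2) h2) (by linarith)
end

section
/- Let n and k be integers with 0 < k and 2k < n. There exists a constant c > 0, depending only on n and k, such that for every ε ∈ (0, ((n−2k)/n)^(1/(2k))), every Delaunay solution v with necksize ε, and every t ∈ ℝ, the following three estimates hold: |v(t) − ε^((n−2k)/(2k)) · cosh(((n−2k)/(2k)) t)| ≤ c · ε^((n+2k)/(2k)) · exp(((n+2k)/(2k)) |t|); |v'(t) − ((n−2k)/(2k)) · ε^((n−2k)/(2k)) · sinh(((n−2k)/(2k)) t)| ≤ c · ε^((n+2k)/(2k)) · exp(((n+2k)/(2k)) |t|); and |v''(t) − ((n−2k)/(2k))² · ε^((n−2k)/(2k)) · cosh(((n−2k)/(2k)) t)| ≤ c · ε^((n+2k)/(2k)) · exp(((n+2k)/(2k)) |t|). -/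
open Real

set_option maxHeartbeats 1000000

lemma mono_aux {g g' : ℝ → ℝ} (hg : ∀ s, HasDerivAt g (g' s) s)
    (h : ∀ s, 0 ≤ s → 0 ≤ g' s) : ∀ t, 0 ≤ t → g 0 ≤ g t := by
  intro t ht
  have hmono : MonotoneOn g (Set.Ici (0:ℝ)) := by
    apply monotoneOn_of_deriv_nonneg (convex_Ici 0)
    · exact fun x _ => (hg x).continuousAt.continuousWithinAt
    · exact fun x _ => (hg x).differentiableAt.differentiableWithinAt
    · intro x hx
      rw [interior_Ici] at hx
      rw [(hg x).deriv]
      exact h x (le_of_lt hx)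
  exact hmono Set.self_mem_Ici ht ht

lemma hasDerivAt_exp_mul (a s : ℝ) :
    HasDerivAt (fun x : ℝ => Real.exp (a * x)) (a * Real.exp (a * s)) s := by
  have h : HasDerivAt (fun x : ℝ => a * x) a s := by
    simpa using (hasDerivAt_id s).const_mul a
  simpa [mul_comm] using h.exp

lemma hasDerivAt_cosh_mul (a s : ℝ) :
    HasDerivAt (fun x : ℝ => Real.cosh (a * x)) (a * Real.sinh (a * s)) s := by
  have h : HasDerivAt (fun x : ℝ => a * x) a s := by
    simpa using (hasDerivAt_id s).const_mul a
  simpa [mul_comm] using h.cosh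

lemma hasDerivAt_sinh_mul (a s : ℝ) :
    HasDerivAt (fun x : ℝ => Real.sinh (a * x)) (a * Real.cosh (a * s)) s := by
  have h : HasDerivAt (fun x : ℝ => a * x) a s := by
    simpa using (hasDerivAt_id s).const_mul a
  simpa [mul_comm] using h.sinh

lemma deriv_exp_bound {g g' : ℝ → ℝ} {c b : ℝ} (hb : 0 < b)
    (hg : ∀ s, HasDerivAt g (g' s) s) (h0 : g 0 = 0)
    (hbd : ∀ s, 0 ≤ s → |g' s| ≤ c * Real.exp (b * s)) :
    ∀ t, 0 ≤ t → |g t| ≤ c / b * Real.exp (b * t) := by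
  have hc : 0 ≤ c := by
    have h1 := (abs_nonneg (g' 0)).trans (hbd 0 le_rfl)
    nlinarith [Real.exp_pos (b * 0)]
  intro t ht
  have hM : ∀ (σ : ℝ), σ = 1 ∨ σ = -1 →
      σ * g t ≤ c / b * Real.exp (b * t) - c / b := by
    intro σ hσ
    have key := mono_aux (g := fun s => c / b * Real.exp (b * s) - σ * g s)
      (g' := fun s => c / b * (b * Real.exp (b * s)) - σ * g' s)
      (fun s => ((hasDerivAt_exp_mul b s).const_mul (c/b)).sub ((hg s).const_mul σ))
      (by
        intro s hs
        have h1 := hbd s hs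
        have h2 : σ * g' s ≤ |g' s| := by
          rcases hσ with h | h
          · rw [h]; simpa using le_abs_self (g' s)
          · rw [h]; simpa using neg_le_abs (g' s)
        have hcb : c / b * (b * Real.exp (b * s)) = c * Real.exp (b * s) := by
          field_simp
        show 0 ≤ c / b * (b * Real.exp (b * s)) - σ * g' s
        rw [hcb]
        linarith)
      t ht
    simp only [h0, mul_zero, Real.exp_zero, mul_one, sub_zero] at key
    linarith
  have h1 := hM 1 (Or.inl rfl)
  have h2 := hM (-1) (Or.inr rfl)
  have hcb : 0 ≤ c / b := div_nonneg hc hb.le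
  rw [abs_le]
  constructor <;> nlinarith

lemma cosh_le_exp_of_nonneg {x : ℝ} (hx : 0 ≤ x) : Real.cosh x ≤ Real.exp x := by
  rw [Real.cosh_eq]
  have := Real.exp_le_exp.2 (neg_le_self hx)
  linarith


noncomputable def delC (n k : ℤ) : ℝ :=
  (((n:ℝ) - 2*k)/(2*k))^2 * ((n:ℝ)/((n:ℝ) - 2*k)) *
    (((((n:ℝ) - 2*k)/(2*k)) + 1)^2 + 1) + 1

lemma delaunay_main (n k : ℤ) (hk : 0 < k) (hnk : 2 * k < n)
    (ε : ℝ) (hε0 : 0 < ε) (hε1 : ε < (((n : ℝ) - 2 * k) / n) ^ (1 / (2 * (k : ℝ))))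
    (v : ℝ → ℝ) (hv : IsDelaunay n k ε v) (t : ℝ) (ht : 0 ≤ t) :
    |v t - ε ^ (((n : ℝ) - 2 * k) / (2 * k)) *
        Real.cosh (((n : ℝ) - 2 * k) / (2 * k) * t)| ≤
      delC n k * ε ^ (((n : ℝ) + 2 * k) / (2 * k)) *
        Real.exp (((n : ℝ) + 2 * k) / (2 * k) * |t|) ∧
    |deriv v t - ((n : ℝ) - 2 * k) / (2 * k) *
        ε ^ (((n : ℝ) - 2 * k) / (2 * k)) *
        Real.sinh (((n : ℝ) - 2 * k) / (2 * k) * t)| ≤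
      delC n k * ε ^ (((n : ℝ) + 2 * k) / (2 * k)) *
        Real.exp (((n : ℝ) + 2 * k) / (2 * k) * |t|) ∧
    |deriv (deriv v) t - (((n : ℝ) - 2 * k) / (2 * k)) ^ 2 *
        ε ^ (((n : ℝ) - 2 * k) / (2 * k)) *
        Real.cosh (((n : ℝ) - 2 * k) / (2 * k) * t)| ≤
      delC n k * ε ^ (((n : ℝ) + 2 * k) / (2 * k)) *
        Real.exp (((n : ℝ) + 2 * k) / (2 * k) * |t|) := by
  rw [abs_of_nonneg ht]
  rw [show (((n : ℝ) + 2 * k) / (2 * k)) = ((n : ℝ) - 2 * k) / (2 * k) + 2 by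
    have hK : (0:ℝ) < k := by exact_mod_cast hk
    field_simp; ring]
  unfold delC
  obtain ⟨hreg, hode, hd0, hv0, hbnd⟩ := hv
  set A : ℝ := ((n : ℝ) - 2 * k) / (2 * k) with hA_def
  set B : ℝ := 2 * (k : ℝ) / ((n : ℝ) - 2 * k) with hB_def
  set c₃ : ℝ := (n : ℝ) / ((n : ℝ) - 2 * k) with hc3_def
  set P : ℝ := 2 * (k : ℝ) * n / ((n : ℝ) - 2 * k) with hP_def
  have hK : (0:ℝ) < k := by exact_mod_cast hk
  have hNK : 2 * (k:ℝ) < n := by exact_mod_cast hnk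
  have hNK' : (0:ℝ) < (n:ℝ) - 2 * k := by linarith
  have hN : (0:ℝ) < n := by linarith
  have hA : 0 < A := div_pos hNK' (by linarith)
  have hc3 : 0 < c₃ := div_pos hN hNK'
  have hAB : A * B = 1 := by rw [hA_def, hB_def]; field_simp
  have hktn : ((k.toNat : ℕ) : ℝ) = (k : ℝ) := by
    rw_mod_cast [Int.toNat_of_nonneg hk.le]
  have hktn1 : 1 ≤ k.toNat := by omega
  have hP2k : P - 2 * (k:ℝ) = 4 * (k:ℝ)^2 / ((n:ℝ) - 2*k) := by
    rw [hP_def]; field_simp; ring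
  -- differentiability
  have h2 : ContDiff ℝ (1+1) v := by
    rw [show ((1:WithTop ℕ∞)+1) = 2 by norm_num]; exact hreg
  rw [contDiff_succ_iff_deriv] at h2
  have hv1 : Differentiable ℝ v := h2.1
  have h1 := contDiff_one_iff_deriv.mp h2.2.2
  have hv2 : Differentiable ℝ (deriv v) := h1.1
  have hv3c : Continuous (deriv (deriv v)) := h1.2
  -- epsilon < 1
  have hε_lt1 : ε < 1 := by
    refine lt_of_lt_of_le hε1 (Real.rpow_le_one (by positivity) ?_ (by positivity))
    rw [div_le_one hN]; linarith
  set e0 : ℝ := ε ^ A with he0_def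
  have he0 : 0 < e0 := Real.rpow_pos_of_pos hε0 A
  have he0lt1 : e0 < 1 := Real.rpow_lt_one hε0.le hε_lt1 hA
  have hvpos : ∀ s, 0 < v s := fun s => lt_of_lt_of_le he0 (hbnd s).1
  set X : ℝ → ℝ := fun s => v s ^ 2 - B ^ 2 * deriv v s ^ 2 with hX_def
  have hXcont : Continuous X := by
    apply Continuous.sub
    · exact (hv1.continuous).pow 2
    · exact continuous_const.mul ((hv2.continuous).pow 2)
  -- conservation of the Hamiltonian
  have hder : ∀ s, HasDerivAt (fun s => X s ^ k.toNat - v s ^ P) 0 s := by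
    intro s
    have hdv : HasDerivAt v (deriv v s) s := (hv1 s).hasDerivAt
    have hdv2 : HasDerivAt (deriv v) (deriv (deriv v) s) s := (hv2 s).hasDerivAt
    have hXd : HasDerivAt X (2 * v s * deriv v s - B ^ 2 * (2 * deriv v s * deriv (deriv v) s)) s := by
      have ha : HasDerivAt (fun s => v s ^ 2) (2 * v s * deriv v s) s := by
        simpa using hdv.fun_pow 2
      have hb : HasDerivAt (fun s => deriv v s ^ 2) (2 * deriv v s * deriv (deriv v) s) s := by
        simpa using hdv2.fun_pow 2
      exact ha.sub ((hb.const_mul (B ^ 2)))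
    have hXk : HasDerivAt (fun s => X s ^ k.toNat)
        ((k.toNat : ℝ) * X s ^ (k.toNat - 1) *
          (2 * v s * deriv v s - B ^ 2 * (2 * deriv v s * deriv (deriv v) s))) s :=
      hXd.pow k.toNat
    have hvp : HasDerivAt (fun s => v s ^ P) (P * v s ^ (P - 1) * deriv v s) s := by
      simpa [mul_comm, mul_assoc, mul_left_comm] using
        hdv.rpow_const (p := P) (Or.inl (ne_of_gt (hvpos s)))
    have := hXk.sub hvp
    convert this using 1
    · rfl
    · rfl
    · rfl
    rw [hktn]
    have hO := hode s
    rw [← hB_def, ← hc3_def, ← hP_def] at hO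
    have hXs : X s = v s ^ 2 - B ^ 2 * deriv v s ^ 2 := rfl
    rw [hXs]
    have hPc : P = 2 * (k:ℝ) * c₃ := by rw [hP_def, hc3_def]; field_simp
    linear_combination (-(2 * (k:ℝ) * deriv v s)) * hO + (v s ^ (P-1) * deriv v s) * hPc
  have hconst : ∀ s, X s ^ k.toNat - v s ^ P = X 0 ^ k.toNat - v 0 ^ P := by
    intro s
    exact is_const_of_deriv_eq_zero (fun x => (hder x).differentiableAt)
      (fun x => (hder x).deriv) s 0
  have hX0 : X 0 = e0 ^ 2 := by
    rw [hX_def]; simp [hd0, hv0]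
  have hv0P : v 0 ^ P = e0 ^ P := by rw [hv0]
  set HH : ℝ := (e0 ^ 2) ^ k.toNat - e0 ^ P with hHH_def
  have hcons : ∀ s, X s ^ k.toNat = HH + v s ^ P := by
    intro s
    have := hconst s
    rw [hX0, hv0P] at this
    rw [hHH_def]; linarith
  have hHpos : 0 < HH := by
    have h1 : (e0 ^ 2) ^ k.toNat = e0 ^ ((2 * k.toNat : ℕ) : ℝ) := by
      rw [Real.rpow_natCast]; rw [pow_mul]
    have h2 : ((2 * k.toNat : ℕ) : ℝ) < P := by
      push_cast
      rw [hktn]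
      nlinarith [hP2k, div_pos (by nlinarith : (0:ℝ) < 4 * (k:ℝ)^2) hNK']
    have h3 : e0 ^ P < e0 ^ ((2 * k.toNat : ℕ) : ℝ) :=
      Real.rpow_lt_rpow_of_exponent_gt he0 he0lt1 h2
    rw [hHH_def, h1]; linarith
  -- positivity of X
  have hvPpos : ∀ s, 0 < v s ^ P := fun s => Real.rpow_pos_of_pos (hvpos s) P
  have hXne : ∀ s, X s ≠ 0 := by
    intro s h
    have := hcons s
    rw [h, zero_pow (by omega : k.toNat ≠ 0)] at this
    nlinarith [hvPpos s]
  have hXpos : ∀ s, 0 < X s := by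
    intro s
    rcases lt_or_ge 0 (X s) with h | h
    · exact h
    · exfalso
      have hXs : X s < 0 := lt_of_le_of_ne h (hXne s)
      have hX0' : 0 < X 0 := by rw [hX0]; positivity
      have hsub := intermediate_value_uIcc (a := 0) (b := s) (f := X) hXcont.continuousOn
      have h0mem : (0:ℝ) ∈ Set.uIcc (X 0) (X s) := by
        rw [Set.mem_uIcc]
        right; exact ⟨hXs.le, hX0'.le⟩
      obtain ⟨r, _, hr⟩ := hsub h0mem
      exact hXne r hr
  -- lower bound for X
  have hXlb : ∀ s, v s ^ (P / (k:ℝ)) ≤ X s := by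
    intro s
    have hkne : k.toNat ≠ 0 := by omega
    have h1 : (v s ^ (P / (k:ℝ))) ^ k.toNat = v s ^ P := by
      rw [← Real.rpow_natCast (v s ^ (P / (k:ℝ))) k.toNat, ← Real.rpow_mul (hvpos s).le]
      congr 1
      rw [hktn]
      field_simp
    have h2 : (v s ^ (P / (k:ℝ))) ^ k.toNat ≤ X s ^ k.toNat := by
      rw [h1, hcons s]; linarith
    exact (pow_le_pow_iff_left₀ (Real.rpow_nonneg (hvpos s).le _) (hXpos s).le hkne).mp h2
  -- rearranged ODE: v'' = A^2 v - f
  set f : ℝ → ℝ := fun s => A ^ 2 * c₃ * v s ^ (P - 1) / X s ^ (k.toNat - 1) with hf_def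
  have hfpos : ∀ s, 0 < f s := by
    intro s
    have h1 : 0 < v s ^ (P - 1) := Real.rpow_pos_of_pos (hvpos s) _
    have h2 : 0 < X s ^ (k.toNat - 1) := pow_pos (hXpos s) _
    rw [hf_def]
    positivity
  have hvdd : ∀ s, deriv (deriv v) s = A ^ 2 * v s - f s := by
    intro s
    have hO := hode s
    rw [← hB_def, ← hc3_def, ← hP_def] at hO
    have hXs : (v s ^ 2 - B ^ 2 * deriv v s ^ 2) = X s := rfl
    rw [hXs] at hO
    have hXk1 : (0:ℝ) < X s ^ (k.toNat - 1) := pow_pos (hXpos s) _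
    have hAB2 : A ^ 2 * B ^ 2 = 1 := by rw [← mul_pow, hAB, one_pow]
    have key : (A ^ 2 * v s - deriv (deriv v) s) * X s ^ (k.toNat - 1)
        = A ^ 2 * c₃ * v s ^ (P - 1) := by
      linear_combination A ^ 2 * hO + (X s ^ (k.toNat - 1) * deriv (deriv v) s) * hAB2
    have : A ^ 2 * v s - deriv (deriv v) s = f s := by
      rw [hf_def, eq_div_iff hXk1.ne']
      exact key
    linarith
  -- bound on f
  set Q : ℝ := P / (k:ℝ) - 1 with hQ_def
  have hQpos : 0 < Q := by
    rw [hQ_def, hP_def, sub_pos, lt_div_iff₀ hK, lt_div_iff₀ hNK']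
    nlinarith
  have hAQ : A * Q = A + 2 := by
    rw [hQ_def, hP_def, hA_def]
    field_simp
    ring
  have hfle : ∀ s, f s ≤ A ^ 2 * c₃ * v s ^ Q := by
    intro s
    have hkc : ((k.toNat - 1 : ℕ) : ℝ) = (k:ℝ) - 1 := by
      rw [Nat.cast_sub hktn1, hktn]; norm_num
    have h1 : (v s ^ (P / (k:ℝ))) ^ (k.toNat - 1) = v s ^ ((P / (k:ℝ)) * ((k:ℝ) - 1)) := by
      rw [← Real.rpow_natCast (v s ^ (P / (k:ℝ))) (k.toNat - 1), ← Real.rpow_mul (hvpos s).le, hkc]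
    have h2 : (v s ^ (P / (k:ℝ))) ^ (k.toNat - 1) ≤ X s ^ (k.toNat - 1) :=
      pow_le_pow_left₀ (Real.rpow_nonneg (hvpos s).le _) (hXlb s) _
    have h3 : 0 < v s ^ ((P / (k:ℝ)) * ((k:ℝ) - 1)) := Real.rpow_pos_of_pos (hvpos s) _
    have h4 : f s ≤ A ^ 2 * c₃ * v s ^ (P - 1) / v s ^ ((P / (k:ℝ)) * ((k:ℝ) - 1)) := by
      rw [hf_def]
      apply div_le_div_of_nonneg_left _ h3 _
      · exact le_of_lt (mul_pos (mul_pos (pow_pos hA 2) hc3)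
          (Real.rpow_pos_of_pos (hvpos s) _))
      · rw [← h1]; exact h2
    calc f s ≤ A ^ 2 * c₃ * v s ^ (P - 1) / v s ^ ((P / (k:ℝ)) * ((k:ℝ) - 1)) := h4
      _ = A ^ 2 * c₃ * v s ^ Q := by
          rw [mul_div_assoc, ← Real.rpow_sub (hvpos s)]
          congr 2
          rw [hQ_def]
          field_simp
          ring
  -- comparison: v s ≤ e0 * cosh (A s) for s ≥ 0
  have hdvs : ∀ s, HasDerivAt v (deriv v s) s := fun s => (hv1 s).hasDerivAt
  have hdv2s : ∀ s, HasDerivAt (deriv v) (deriv (deriv v) s) s := fun s => (hv2 s).hasDerivAt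
  have hcomp : ∀ s, 0 ≤ s → v s ≤ e0 * Real.cosh (A * s) := by
    have hr : ∀ s, HasDerivAt
        (fun s => deriv v s * Real.cosh (A * s) - A * v s * Real.sinh (A * s))
        (- (f s * Real.cosh (A * s))) s := by
      intro s
      have h1 := (hdv2s s).mul (hasDerivAt_cosh_mul A s)
      have h2 := ((hdvs s).const_mul A).mul (hasDerivAt_sinh_mul A s)
      have h3 := h1.sub h2
      convert h3 using 1
      · rfl
      · rfl
      · rfl
      rw [hvdd s]
      ring
    have hrle : ∀ s, 0 ≤ s →
        deriv v s * Real.cosh (A * s) - A * v s * Real.sinh (A * s) ≤ 0 := by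
      intro s hs
      have := mono_aux (g := fun s => -(deriv v s * Real.cosh (A * s) - A * v s * Real.sinh (A * s)))
        (g' := fun s => f s * Real.cosh (A * s))
        (fun s => by simpa using (hr s).fun_neg)
        (fun s _ => le_of_lt (mul_pos (hfpos s) (Real.cosh_pos _))) s hs
      simp only [mul_zero, Real.cosh_zero, Real.sinh_zero, hd0] at this
      linarith
    intro s hs
    have hg : ∀ x, HasDerivAt (fun x => v x / Real.cosh (A * x))
        ((deriv v x * Real.cosh (A * x) - A * v x * Real.sinh (A * x)) / Real.cosh (A * x) ^ 2) x := by
      intro x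
      have := (hdvs x).div (hasDerivAt_cosh_mul A x) (ne_of_gt (Real.cosh_pos _))
      convert this using 1
      · rfl
      · rfl
      · rfl
      ring
    have hmono := mono_aux (g := fun x => -(v x / Real.cosh (A * x)))
      (g' := fun x => -((deriv v x * Real.cosh (A * x) - A * v x * Real.sinh (A * x)) / Real.cosh (A * x) ^ 2))
      (fun x => (hg x).neg)
      (fun x hx => by
        have h1 := hrle x hx
        have h2 : (0:ℝ) < Real.cosh (A * x) ^ 2 := pow_pos (Real.cosh_pos _) 2
        have h3 : (deriv v x * Real.cosh (A * x) - A * v x * Real.sinh (A * x)) / Real.cosh (A * x) ^ 2 ≤ 0 :=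
          div_nonpos_of_nonpos_of_nonneg h1 h2.le
        linarith)
      s hs
    simp only [mul_zero, Real.cosh_zero, div_one, hv0, neg_le_neg_iff] at hmono
    rw [div_le_iff₀ (Real.cosh_pos _)] at hmono
    linarith [hmono]
  -- exponential bound on f
  set C1 : ℝ := A ^ 2 * c₃ with hC1_def
  have hC1 : 0 < C1 := mul_pos (pow_pos hA 2) hc3
  set E : ℝ := ε ^ (A + 2) with hE_def
  have hE : 0 < E := Real.rpow_pos_of_pos hε0 _
  have hfexp : ∀ s, 0 ≤ s → f s ≤ C1 * E * Real.exp ((A + 2) * s) := by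
    intro s hs
    have hAs : 0 ≤ A * s := mul_nonneg hA.le hs
    have hvle : v s ≤ e0 * Real.exp (A * s) :=
      le_trans (hcomp s hs)
        (mul_le_mul_of_nonneg_left (cosh_le_exp_of_nonneg hAs) he0.le)
    have h1 : v s ^ Q ≤ (e0 * Real.exp (A * s)) ^ Q :=
      Real.rpow_le_rpow (hvpos s).le hvle hQpos.le
    have h2 : (e0 * Real.exp (A * s)) ^ Q = E * Real.exp ((A + 2) * s) := by
      rw [Real.mul_rpow he0.le (Real.exp_pos _).le, he0_def,
        ← Real.rpow_mul hε0.le, hAQ, ← Real.exp_mul, hE_def]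
      congr 2
      rw [show A * s * Q = (A * Q) * s by ring, hAQ]
    calc f s ≤ A ^ 2 * c₃ * v s ^ Q := hfle s
      _ ≤ C1 * ((e0 * Real.exp (A * s)) ^ Q) := by
          rw [hC1_def]
          exact mul_le_mul_of_nonneg_left h1 (mul_pos (pow_pos hA 2) hc3).le
      _ = C1 * E * Real.exp ((A + 2) * s) := by rw [h2]; ring
  -- the perturbation u and its derivatives
  set u : ℝ → ℝ := fun s => v s - e0 * Real.cosh (A * s) with hu_def
  set u1 : ℝ → ℝ := fun s => deriv v s - e0 * A * Real.sinh (A * s) with hu1_def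
  have hu : ∀ s, HasDerivAt u (u1 s) s := by
    intro s
    have h := (hdvs s).sub ((hasDerivAt_cosh_mul A s).const_mul e0)
    have he : u1 s = deriv v s - e0 * (A * Real.sinh (A * s)) := by
      rw [hu1_def]; ring
    rw [he]; exact h
  have hu1d : ∀ s, HasDerivAt u1 (A ^ 2 * u s - f s) s := by
    intro s
    have h := (hdv2s s).sub ((hasDerivAt_sinh_mul A s).const_mul (e0 * A))
    have he : A ^ 2 * u s - f s
        = deriv (deriv v) s - e0 * A * (A * Real.cosh (A * s)) := by
      rw [hu_def, hvdd s]; ring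
    rw [he]; exact h
  have hu0 : u 0 = 0 := by rw [hu_def]; simp [hv0]
  have hu10 : u1 0 = 0 := by rw [hu1_def]; simp [hd0]
  set PP : ℝ → ℝ := fun s => u1 s - A * u s with hPP_def
  have hPP0 : PP 0 = 0 := by rw [hPP_def]; simp [hu0, hu10]
  have hPPd : ∀ s, HasDerivAt PP (-A * PP s - f s) s := by
    intro s
    have h := (hu1d s).sub ((hu s).const_mul A)
    have he : -A * PP s - f s = A ^ 2 * u s - f s - A * u1 s := by
      rw [hPP_def]; ring
    rw [he]; exact h
  set G : ℝ → ℝ := fun s => Real.exp (A * s) * PP s with hG_def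
  have hG0 : G 0 = 0 := by rw [hG_def]; simp [hPP0]
  have hGd : ∀ s, HasDerivAt G (-(Real.exp (A * s) * f s)) s := by
    intro s
    have h := (hasDerivAt_exp_mul A s).mul (hPPd s)
    have he : -(Real.exp (A * s) * f s)
        = A * Real.exp (A * s) * PP s + Real.exp (A * s) * (-A * PP s - f s) := by
      ring
    rw [he]; exact h
  have hGbd : ∀ s, 0 ≤ s → |-(Real.exp (A * s) * f s)| ≤ (C1 * E) * Real.exp ((2 * A + 2) * s) := by
    intro s hs
    rw [abs_neg, abs_of_pos (mul_pos (Real.exp_pos _) (hfpos s))]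
    calc Real.exp (A * s) * f s ≤ Real.exp (A * s) * (C1 * E * Real.exp ((A + 2) * s)) :=
          mul_le_mul_of_nonneg_left (hfexp s hs) (Real.exp_pos _).le
      _ = (C1 * E) * Real.exp ((2 * A + 2) * s) := by
          rw [show Real.exp (A*s) * (C1 * E * Real.exp ((A+2)*s))
              = (C1 * E) * (Real.exp (A*s) * Real.exp ((A+2)*s)) by ring,
            ← Real.exp_add]
          congr 2
          ring
  have hb2A : (0:ℝ) < 2 * A + 2 := by linarith
  have hGle := deriv_exp_bound hb2A hGd hG0 hGbd
  set D : ℝ := C1 * E / (2 * A + 2) with hD_def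
  have hD : 0 < D := div_pos (mul_pos hC1 hE) hb2A
  have hPPle : ∀ s, 0 ≤ s → |PP s| ≤ D * Real.exp ((A + 2) * s) := by
    intro s hs
    have h1 := hGle s hs
    have h2 : PP s = Real.exp (-(A * s)) * G s := by
      rw [hG_def, ← mul_assoc, ← Real.exp_add]
      norm_num
    rw [h2, abs_mul, abs_of_pos (Real.exp_pos _)]
    calc Real.exp (-(A * s)) * |G s|
        ≤ Real.exp (-(A * s)) * (C1 * E / (2 * A + 2) * Real.exp ((2 * A + 2) * s)) :=
          mul_le_mul_of_nonneg_left h1 (Real.exp_pos _).le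
      _ = D * Real.exp ((A + 2) * s) := by
          rw [hD_def, show Real.exp (-(A*s)) * (C1 * E / (2*A+2) * Real.exp ((2*A+2)*s))
              = (C1 * E / (2*A+2)) * (Real.exp (-(A*s)) * Real.exp ((2*A+2)*s)) by ring,
            ← Real.exp_add]
          congr 2
          ring
  set W : ℝ → ℝ := fun s => Real.exp ((-A) * s) * u s with hW_def
  have hW0 : W 0 = 0 := by rw [hW_def]; simp [hu0]
  have hWd : ∀ s, HasDerivAt W (Real.exp ((-A) * s) * PP s) s := by
    intro s
    have h := (hasDerivAt_exp_mul (-A) s).mul (hu s)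
    have he : Real.exp ((-A) * s) * PP s
        = -A * Real.exp ((-A) * s) * u s + Real.exp ((-A) * s) * u1 s := by
      rw [hPP_def]; ring
    rw [he]; exact h
  have hWbd : ∀ s, 0 ≤ s → |Real.exp ((-A) * s) * PP s| ≤ D * Real.exp (2 * s) := by
    intro s hs
    rw [abs_mul, abs_of_pos (Real.exp_pos _)]
    calc Real.exp ((-A) * s) * |PP s|
        ≤ Real.exp ((-A) * s) * (D * Real.exp ((A + 2) * s)) :=
          mul_le_mul_of_nonneg_left (hPPle s hs) (Real.exp_pos _).le
      _ = D * Real.exp (2 * s) := by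
          rw [show Real.exp ((-A)*s) * (D * Real.exp ((A+2)*s))
              = D * (Real.exp ((-A)*s) * Real.exp ((A+2)*s)) by ring,
            ← Real.exp_add]
          congr 2
          ring
  have hWle := deriv_exp_bound (by norm_num : (0:ℝ) < 2) hWd hW0 hWbd
  have hule : ∀ s, 0 ≤ s → |u s| ≤ D / 2 * Real.exp ((A + 2) * s) := by
    intro s hs
    have h1 := hWle s hs
    have h2 : u s = Real.exp (A * s) * W s := by
      rw [hW_def, ← mul_assoc, ← Real.exp_add]
      norm_num
    rw [h2, abs_mul, abs_of_pos (Real.exp_pos _)]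
    calc Real.exp (A * s) * |W s|
        ≤ Real.exp (A * s) * (D / 2 * Real.exp (2 * s)) :=
          mul_le_mul_of_nonneg_left h1 (Real.exp_pos _).le
      _ = D / 2 * Real.exp ((A + 2) * s) := by
          rw [show Real.exp (A*s) * (D/2 * Real.exp (2*s))
              = D/2 * (Real.exp (A*s) * Real.exp (2*s)) by ring,
            ← Real.exp_add]
          congr 2
          ring
  -- finish
  set CC : ℝ := C1 * ((A + 1) ^ 2 + 1) + 1 with hCC_def
  clear_value D CC
  have hEexp : (0:ℝ) < Real.exp ((A + 2) * t) := Real.exp_pos _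
  have hut := hule t ht
  have hPPt := hPPle t ht
  have hft := hfexp t ht
  have hfpt := hfpos t
  have hCE : 0 < C1 * E := mul_pos hC1 hE
  have hDle : D ≤ C1 * E := by
    rw [hD_def]
    exact div_le_self hCE.le (by linarith only [hA])
  have hsq1 : (1:ℝ) ≤ (A + 1) ^ 2 + 1 := by nlinarith only [sq_nonneg (A + 1)]
  have hCCge : C1 ≤ CC := by
    rw [hCC_def]
    nlinarith only [mul_le_mul_of_nonneg_left hsq1 hC1.le, hC1]
  have hCCE : C1 * E ≤ CC * E := mul_le_mul_of_nonneg_right hCCge hE.le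
  have key1 : D / 2 ≤ CC * E := by linarith only [hD.le, hDle, hCCE]
  have key2 : D + A * (D / 2) ≤ CC * E := by
    have h1 : D + A * (D / 2) = D * (1 + A / 2) := by ring
    have h2 : D * (1 + A / 2) ≤ (C1 * E) * (1 + A / 2) :=
      mul_le_mul_of_nonneg_right hDle (by linarith only [hA])
    have h3 : (1 + A / 2) ≤ (A + 1) ^ 2 + 1 := by nlinarith only [sq_nonneg A, hA]
    have h4 : (C1 * E) * (1 + A / 2) ≤ (C1 * E) * ((A + 1) ^ 2 + 1) :=
      mul_le_mul_of_nonneg_left h3 hCE.le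
    have h5 : (C1 * E) * ((A + 1) ^ 2 + 1) ≤ CC * E := by
      rw [hCC_def]
      nlinarith only [hE.le]
    linarith only [h1, h2, h4, h5]
  have key3 : A ^ 2 * (D / 2) + C1 * E ≤ CC * E := by
    have h1 : A ^ 2 * (D / 2) ≤ A ^ 2 * (C1 * E / 2) := by
      apply mul_le_mul_of_nonneg_left _ (sq_nonneg A)
      linarith only [hDle]
    have h3 : A ^ 2 / 2 ≤ (A + 1) ^ 2 := by nlinarith only [sq_nonneg A, hA.le]
    have h4 : A ^ 2 * (C1 * E / 2) ≤ (A + 1) ^ 2 * (C1 * E) := by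
      have h := mul_le_mul_of_nonneg_right h3 hCE.le
      linarith only [h]
    have h5 : (A + 1) ^ 2 * (C1 * E) + C1 * E ≤ CC * E := by
      rw [hCC_def]
      nlinarith only [hE.le]
    linarith only [h1, h3, h4, h5]
  refine ⟨?_, ?_, ?_⟩
  · show |u t| ≤ CC * E * Real.exp ((A + 2) * t)
    calc |u t| ≤ D / 2 * Real.exp ((A + 2) * t) := hut
      _ ≤ CC * E * Real.exp ((A + 2) * t) :=
          mul_le_mul_of_nonneg_right key1 hEexp.le
  · have e2 : deriv v t - A * e0 * Real.sinh (A * t) = u1 t := by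
      simp only [hu1_def]; ring
    rw [e2]
    have h12 : u1 t = PP t + A * u t := by simp only [hPP_def]; ring
    have habs : |u1 t| ≤ |PP t| + A * |u t| := by
      rw [h12]
      refine (abs_add_le _ _).trans ?_
      rw [abs_mul, abs_of_pos hA]
    calc |u1 t| ≤ |PP t| + A * |u t| := habs
      _ ≤ D * Real.exp ((A + 2) * t) + A * (D / 2 * Real.exp ((A + 2) * t)) := by
          have h := mul_le_mul_of_nonneg_left hut hA.le
          linarith only [hPPt, h]
      _ = (D + A * (D / 2)) * Real.exp ((A + 2) * t) := by ring
      _ ≤ CC * E * Real.exp ((A + 2) * t) :=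
          mul_le_mul_of_nonneg_right key2 hEexp.le
  · have e3 : deriv (deriv v) t - A ^ 2 * e0 * Real.cosh (A * t) = A ^ 2 * u t - f t := by
      rw [hvdd t]; simp only [hu_def]; ring
    rw [e3]
    have habs : |A ^ 2 * u t - f t| ≤ A ^ 2 * |u t| + f t := by
      rw [sub_eq_add_neg]
      refine (abs_add_le _ _).trans ?_
      rw [abs_neg, abs_of_pos hfpt, abs_mul, abs_of_nonneg (sq_nonneg A)]
    calc |A ^ 2 * u t - f t| ≤ A ^ 2 * |u t| + f t := habs
      _ ≤ A ^ 2 * (D / 2 * Real.exp ((A + 2) * t)) + C1 * E * Real.exp ((A + 2) * t) := by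
          have h := mul_le_mul_of_nonneg_left hut (sq_nonneg A)
          linarith only [hft, h]
      _ = (A ^ 2 * (D / 2) + C1 * E) * Real.exp ((A + 2) * t) := by ring
      _ ≤ CC * E * Real.exp ((A + 2) * t) :=
          mul_le_mul_of_nonneg_right key3 hEexp.le

lemma reflect_deriv (v : ℝ → ℝ) (hv1 : Differentiable ℝ v) :
    deriv (fun s : ℝ => v (-s)) = fun s => -deriv v (-s) := by
  funext s
  have h := ((hv1 (-s)).hasDerivAt).comp s (hasDerivAt_neg s)
  have h' : HasDerivAt (fun s : ℝ => v (-s)) (-deriv v (-s)) s := by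
    simp [Function.comp, mul_comm] at h; exact h
  exact h'.deriv

lemma reflect_deriv2 (v : ℝ → ℝ) (hv1 : Differentiable ℝ v)
    (hv2 : Differentiable ℝ (deriv v)) :
    deriv (deriv (fun s : ℝ => v (-s))) = fun s => deriv (deriv v) (-s) := by
  rw [reflect_deriv v hv1]
  funext s
  have h := (((hv2 (-s)).hasDerivAt).comp s (hasDerivAt_neg s)).neg
  have h' : HasDerivAt (fun s : ℝ => -deriv v (-s)) (deriv (deriv v) (-s)) s := by
    simp [Function.comp, mul_comm] at h; exact h
  exact h'.deriv

lemma isDelaunay_reflect (n k : ℤ) (ε : ℝ) (v : ℝ → ℝ) (h : IsDelaunay n k ε v) :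
    IsDelaunay n k ε (fun s => v (-s)) := by
  obtain ⟨hreg, hode, hd0, hv0, hbnd⟩ := h
  have h2 : ContDiff ℝ (1+1) v := by
    rw [show ((1:WithTop ℕ∞)+1) = 2 by norm_num]; exact hreg
  rw [contDiff_succ_iff_deriv] at h2
  have hv1 : Differentiable ℝ v := h2.1
  have hv2 : Differentiable ℝ (deriv v) := (contDiff_one_iff_deriv.mp h2.2.2).1
  have hw1 := reflect_deriv v hv1
  have hw2 := reflect_deriv2 v hv1 hv2
  refine ⟨?_, ?_, ?_, ?_, ?_⟩
  · exact hreg.comp (contDiff_id.neg)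
  · intro t
    rw [hw2, hw1]
    simpa [neg_sq] using hode (-t)
  · rw [hw1]; simp [hd0]
  · simpa using hv0
  · intro t; exact hbnd (-t)

theorem delaunay_asymptotic_estimates
    (n k : ℤ) (hk : 0 < k) (hnk : 2 * k < n) :
    ∃ c : ℝ, 0 < c ∧
      ∀ ε : ℝ, 0 < ε → ε < (((n : ℝ) - 2 * k) / n) ^ (1 / (2 * (k : ℝ))) →
        ∀ v : ℝ → ℝ, IsDelaunay n k ε v →
          ∀ t : ℝ,
            |v t - ε ^ (((n : ℝ) - 2 * k) / (2 * k)) *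
                Real.cosh (((n : ℝ) - 2 * k) / (2 * k) * t)| ≤
              c * ε ^ (((n : ℝ) + 2 * k) / (2 * k)) *
                Real.exp (((n : ℝ) + 2 * k) / (2 * k) * |t|) ∧
            |deriv v t - ((n : ℝ) - 2 * k) / (2 * k) *
                ε ^ (((n : ℝ) - 2 * k) / (2 * k)) *
                Real.sinh (((n : ℝ) - 2 * k) / (2 * k) * t)| ≤
              c * ε ^ (((n : ℝ) + 2 * k) / (2 * k)) *
                Real.exp (((n : ℝ) + 2 * k) / (2 * k) * |t|) ∧
            |deriv (deriv v) t - (((n : ℝ) - 2 * k) / (2 * k)) ^ 2 *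
                ε ^ (((n : ℝ) - 2 * k) / (2 * k)) *
                Real.cosh (((n : ℝ) - 2 * k) / (2 * k) * t)| ≤
              c * ε ^ (((n : ℝ) + 2 * k) / (2 * k)) *
                Real.exp (((n : ℝ) + 2 * k) / (2 * k) * |t|) := by
  have hK : (0:ℝ) < (k:ℝ) := by exact_mod_cast hk
  have hNK : 2 * (k:ℝ) < (n:ℝ) := by exact_mod_cast hnk
  have hNK' : (0:ℝ) < (n:ℝ) - 2 * k := by linarith
  have hN : (0:ℝ) < (n:ℝ) := by linarith
  have hA : 0 < ((n:ℝ) - 2*k)/(2*k) := div_pos hNK' (by linarith)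
  have hc3 : 0 < (n:ℝ)/((n:ℝ) - 2*k) := div_pos hN hNK'
  refine ⟨delC n k, ?_, ?_⟩
  · unfold delC
    have h1 : 0 < (((n:ℝ) - 2*k)/(2*k))^2 * ((n:ℝ)/((n:ℝ) - 2*k)) *
        (((((n:ℝ) - 2*k)/(2*k)) + 1)^2 + 1) := by
      apply mul_pos (mul_pos (pow_pos hA 2) hc3)
      positivity
    linarith
  · intro ε hε0 hε1 v hv t
    rcases le_or_gt 0 t with ht | ht
    · exact delaunay_main n k hk hnk ε hε0 hε1 v hv t ht
    · have hw := isDelaunay_reflect n k ε v hv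
      obtain ⟨m1, m2, m3⟩ :=
        delaunay_main n k hk hnk ε hε0 hε1 _ hw (-t) (by linarith)
      obtain ⟨hreg, hode, hd0, hv0, hbnd⟩ := hv
      have h2 : ContDiff ℝ (1+1) v := by
        rw [show ((1:WithTop ℕ∞)+1) = 2 by norm_num]; exact hreg
      rw [contDiff_succ_iff_deriv] at h2
      have hv1 : Differentiable ℝ v := h2.1
      have hv2 : Differentiable ℝ (deriv v) := (contDiff_one_iff_deriv.mp h2.2.2).1
      rw [reflect_deriv v hv1] at m2
      rw [reflect_deriv2 v hv1 hv2] at m3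
      simp only [neg_neg, abs_neg] at m1 m2 m3
      rw [show ((n:ℝ) - 2*k)/(2*k) * -t = -(((n:ℝ) - 2*k)/(2*k) * t) by ring] at m1 m2 m3
      rw [Real.cosh_neg] at m1 m3
      rw [Real.sinh_neg] at m2
      refine ⟨m1, ?_, m3⟩
      rw [show -deriv v t - ((n:ℝ) - 2*k)/(2*k) * ε ^ (((n:ℝ) - 2*k)/(2*k)) *
            -Real.sinh (((n:ℝ) - 2*k)/(2*k) * t)
          = -(deriv v t - ((n:ℝ) - 2*k)/(2*k) * ε ^ (((n:ℝ) - 2*k)/(2*k)) *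
            Real.sinh (((n:ℝ) - 2*k)/(2*k) * t)) by ring, abs_neg] at m2
      exact m2
end

section
/- Let n and k be integers with 0 < k and 2k < n, and work in the n-dimensional Euclidean space E = EuclideanSpace ℝ (Fin n). There exist r₀ ∈ (0,1) and C > 0, depending only on n and k, with the following property. Let ε ∈ (0, ((n−2k)/n)^(1/(2k))), let v be a Delaunay solution with necksize ε, let R > 0, and for a ∈ E and x ∈ E with x ≠ 0 and ‖x − ‖x‖²·a‖ ≠ 0 define u_{ε,R,a}(x) = ‖x − ‖x‖²·a‖^((2k−n)/(2k)) · v(−2 log‖x‖ + log‖x − ‖x‖²·a‖ + log R), u_{ε,R}(x) = ‖x‖^((2k−n)/(2k)) · v(−log‖x‖ + log R), and D(x) = ((2k−n)/(2k)) · u_{ε,R}(x) − ‖x‖^((2k−n)/(2k)) · v'(−log‖x‖ + log R). Then for all a ∈ E and x ∈ E with 0 < ‖x‖ ≤ 1 and ‖a‖·‖x‖ < r₀: |u_{ε,R,a}(x) − u_{ε,R}(x) − ((n−2k)/k · u_{ε,R}(x) + D(x)) · ⟨a, x⟩| ≤ C · ‖a‖² · ‖x‖^((6k−n)/(2k)); and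 if moreover R ≤ ‖x‖, then |u_{ε,R,a}(x) − u_{ε,R}(x) − ((n−2k)/k · u_{ε,R}(x) + D(x)) · ⟨a, x⟩| ≤ C · ‖a‖² · ε^((n−2k)/(2k)) · R^((2k−n)/(2k)) · ‖x‖². -/
open Real

open scoped RealInnerProductSpace

/-- The translated Delaunay-type solution
`u_{ε,R,a}(x) = ‖x − ‖x‖²a‖^((2k−n)/(2k)) · v(−2 log‖x‖ + log‖x − ‖x‖²a‖ + log R)`. -/
noncomputable def uRa (n k : ℤ) (v : ℝ → ℝ) (R : ℝ)
    (a x : EuclideanSpace ℝ (Fin n.toNat)) : ℝ :=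
  ‖x - ‖x‖ ^ 2 • a‖ ^ ((2 * (k : ℝ) - n) / (2 * k)) *
    v (-2 * Real.log ‖x‖ + Real.log ‖x - ‖x‖ ^ 2 • a‖ + Real.log R)

/-- `u_{ε,R}(x) = ‖x‖^((2k−n)/(2k)) · v(−log‖x‖ + log R)`. -/
noncomputable def uR (n k : ℤ) (v : ℝ → ℝ) (R : ℝ)
    (x : EuclideanSpace ℝ (Fin n.toNat)) : ℝ :=
  ‖x‖ ^ ((2 * (k : ℝ) - n) / (2 * k)) * v (-Real.log ‖x‖ + Real.log R)

/-- `D(x) = ((2k−n)/(2k)) u_{ε,R}(x) − ‖x‖^((2k−n)/(2k)) v'(−log‖x‖ + log R)`,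
which equals the radial derivative term `|x| ∂_r u_{ε,R}(x)`. -/
noncomputable def Dterm (n k : ℤ) (v : ℝ → ℝ) (R : ℝ)
    (x : EuclideanSpace ℝ (Fin n.toNat)) : ℝ :=
  (2 * (k : ℝ) - n) / (2 * k) * uR n k v R x -
    ‖x‖ ^ ((2 * (k : ℝ) - n) / (2 * k)) * deriv v (-Real.log ‖x‖ + Real.log R)

open Set

set_option maxHeartbeats 1000000

lemma gron (A : ℝ) (v : ℝ → ℝ) (hd : Differentiable ℝ v)
    (hpos : ∀ t, 0 < v t) (h' : ∀ t, |deriv v t| ≤ A * v t) :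
    ∀ s t : ℝ, v t ≤ v s * Real.exp (A * |t - s|) := by
  intro s t
  have hL : ∀ u : ℝ, HasDerivAt (fun r => Real.log (v r)) ((v u)⁻¹ * deriv v u) u := by
    intro u
    exact (Real.hasDerivAt_log (hpos u).ne').comp u (hd u).hasDerivAt
  have key : ‖Real.log (v t) - Real.log (v s)‖ ≤ A * ‖t - s‖ := by
    apply Convex.norm_image_sub_le_of_norm_hasDerivWithin_le
      (f' := fun u => (v u)⁻¹ * deriv v u)
      (fun u _ => (hL u).hasDerivWithinAt) ?_ convex_univ (mem_univ s) (mem_univ t)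
    intro u _
    rw [Real.norm_eq_abs, abs_mul, abs_inv, abs_of_pos (hpos u), inv_mul_le_iff₀ (hpos u)]
    linarith [h' u]
  have h2 : Real.log (v t) ≤ Real.log (v s) + A * |t - s| := by
    have := (abs_le.mp (by simpa [Real.norm_eq_abs] using key)).2
    linarith
  calc v t = Real.exp (Real.log (v t)) := (Real.exp_log (hpos t)).symm
    _ ≤ Real.exp (Real.log (v s) + A * |t - s|) := Real.exp_le_exp.mpr h2
    _ = v s * Real.exp (A * |t - s|) := by rw [Real.exp_add, Real.exp_log (hpos s)]

lemma delaunay_est (n k : ℤ) (hk : 0 < k) (hnk : 2 * k < n)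
    (ε : ℝ) (hε : 0 < ε) (v : ℝ → ℝ) (hv : IsDelaunay n k ε v) :
    (∀ t, |deriv v t| ≤ (((n:ℝ) - 2*k)/(2*k)) * v t) ∧
    (∀ t, |deriv (deriv v) t| ≤
      ((n:ℝ)/((n:ℝ)-2*k)) * (((n:ℝ)-2*k)/(2*k))^2 * v t) := by
  obtain ⟨hv2, hode, hd0, h0, hbd⟩ := hv
  have hkR : (0:ℝ) < (k:ℝ) := by exact_mod_cast hk
  have hnk2 : (0:ℝ) < (n:ℝ) - 2*k := by
    have : (2*k:ℝ) < n := by exact_mod_cast hnk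
    linarith
  set c : ℝ := 2 * (k:ℝ) / ((n:ℝ) - 2*k) with hcdef
  have hc : 0 < c := by positivity
  set A : ℝ := ((n:ℝ) - 2*k)/(2*k) with hAdef
  have hA : 0 < A := by positivity
  have hAc : A * c = 1 := by rw [hAdef, hcdef]; field_simp
  set κ : ℝ := (n:ℝ)/((n:ℝ)-2*k) with hκdef
  have hκ : 1 ≤ κ := by rw [hκdef, le_div_iff₀ hnk2]; linarith
  have hκ0 : 0 < κ := by positivity
  set K : ℕ := k.toNat with hKdef
  have hK : (K:ℝ) = (k:ℝ) := by
    rw [hKdef]; exact_mod_cast Int.toNat_of_nonneg hk.le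
  have hK1 : 1 ≤ K := by
    have : (1:ℝ) ≤ (K:ℝ) := by rw [hK]; exact_mod_cast hk
    exact_mod_cast this
  have hKne : (K:ℝ) ≠ 0 := by rw [hK]; exact hkR.ne'
  set p : ℝ := 2 * (k:ℝ) * n / ((n:ℝ) - 2*k) with hpdef
  have hp2K : 2 * (K:ℝ) ≤ p := by
    rw [hpdef, hK, le_div_iff₀ hnk2]; nlinarith
  have hpK : p / (K:ℝ) = 2 * κ := by
    rw [hpdef, hK, hκdef]; field_simp
  set v0 : ℝ := ε ^ (((n:ℝ) - 2*k)/(2*k)) with hv0def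
  have hv0pos : 0 < v0 := rpow_pos_of_pos hε _
  have hpos : ∀ t, 0 < v t := fun t => lt_of_lt_of_le hv0pos (hbd t).1
  have hv0le1 : v0 ≤ 1 := le_trans (hbd 0).1 (hbd 0).2
  -- differentiability
  have hv2' : ContDiff ℝ ((1:ℕ) + 1) v := by exact_mod_cast hv2
  have hder := contDiff_succ_iff_deriv.mp hv2'
  have hdv : Differentiable ℝ v := hder.1
  have hcd1 : ContDiff ℝ 1 (deriv v) := hder.2.2
  have hdv' : Differentiable ℝ (deriv v) := hcd1.differentiable (by norm_num)
  -- conservation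
  set g : ℝ → ℝ := fun t => v t ^ 2 - c^2 * (deriv v t)^2 with hgdef
  have hgcont : Continuous g :=
    ((hdv.continuous.pow 2).sub (continuous_const.mul (hcd1.continuous.pow 2)))
  set E : ℝ → ℝ := fun t => g t ^ K - v t ^ p with hEdef
  have hgd : ∀ t, HasDerivAt g
      (2 * v t * deriv v t - c^2 * (2 * deriv v t * deriv (deriv v) t)) t := by
    intro t
    have h1 : HasDerivAt (fun t => v t ^ 2) (2 * v t * deriv v t) t := by
      have := ((hdv t).hasDerivAt.pow 2); simp at this; exact this
    have h2 : HasDerivAt (fun t => (deriv v t) ^ 2)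
        (2 * deriv v t * deriv (deriv v) t) t := by
      have := ((hdv' t).hasDerivAt.pow 2); simp at this; exact this
    exact h1.sub (h2.const_mul (c^2))
  have hEp : ∀ t, HasDerivAt (fun t => v t ^ p) (p * v t ^ (p-1) * deriv v t) t := by
    intro t
    have h := (Real.hasDerivAt_rpow_const (x := v t) (p := p) (Or.inl (hpos t).ne'))
    have := h.comp t (hdv t).hasDerivAt
    exact this
  have hE' : ∀ t, HasDerivAt E 0 t := by
    intro t
    have hEg : HasDerivAt (fun t => g t ^ K)
        ((K:ℝ) * g t ^ (K-1) * (2 * v t * deriv v t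
          - c^2 * (2 * deriv v t * deriv (deriv v) t))) t := by
      have := (hgd t).pow K; exact this
    have h := hEg.sub (hEp t)
    have heq : (K:ℝ) * g t ^ (K-1) * (2 * v t * deriv v t
        - c^2 * (2 * deriv v t * deriv (deriv v) t))
        - p * v t ^ (p-1) * deriv v t = 0 := by
      have hode' := hode t
      have hstep : (K:ℝ) * g t ^ (K-1) * (2 * v t * deriv v t
          - c^2 * (2 * deriv v t * deriv (deriv v) t))
          = 2 * (K:ℝ) * deriv v t * (g t ^ (K-1) * (v t - c^2 * deriv (deriv v) t)) := by
        ring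
      rw [hstep, hode', hK, hpdef]
      field_simp
      ring
    rw [heq] at h
    exact h
  have hconst : ∀ t, E t = E 0 :=
    fun t => is_const_of_deriv_eq_zero (fun s => (hE' s).differentiableAt)
      (fun s => (hE' s).deriv) t 0
  have hg0 : g 0 = v0 ^ 2 := by simp [hgdef, hd0, h0, hv0def]
  have hE0 : E 0 = (v0^2)^K - v0 ^ p := by rw [hEdef]; simp only; rw [hg0, h0]
  set H0 : ℝ := (v0^2)^K - v0 ^ p with hH0def
  have hH0 : 0 ≤ H0 := by
    rw [hH0def, sub_nonneg]
    have h1 : (v0^2)^K = v0 ^ ((2*K : ℕ):ℝ) := by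
      rw [Real.rpow_natCast, pow_mul]
    rw [h1]
    apply Real.rpow_le_rpow_of_exponent_ge hv0pos hv0le1
    push_cast
    linarith [hp2K]
  have hcons : ∀ t, g t ^ K = v t ^ p + H0 := by
    intro t
    have h5 := hconst t
    rw [hE0] at h5
    have h6 : g t ^ K - v t ^ p = H0 := by simpa [hEdef] using h5
    linarith
  have hgne : ∀ t, g t ≠ 0 := by
    intro t h
    have h2 := hcons t
    rw [h, zero_pow (by omega : K ≠ 0)] at h2
    have : 0 < v t ^ p := rpow_pos_of_pos (hpos t) _
    linarith
  have hgpos : ∀ t, 0 < g t := by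
    intro t
    by_contra h
    push_neg at h
    have hlt : g t < 0 := lt_of_le_of_ne h (hgne t)
    have hg0pos : 0 < g 0 := by rw [hg0]; positivity
    have hmem : (0:ℝ) ∈ Set.uIcc (g t) (g 0) :=
      Set.mem_uIcc.mpr (Or.inl ⟨hlt.le, hg0pos.le⟩)
    obtain ⟨s, _, hs⟩ := intermediate_value_uIcc (hgcont.continuousOn (s := Set.uIcc t 0)) hmem
    exact hgne s hs
  have hgv : ∀ t, v t ^ (p/(K:ℝ)) ≤ g t := by
    intro t
    have h1 : (v t ^ (p/(K:ℝ)))^K = v t ^ p := by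
      rw [← Real.rpow_natCast (v t ^ (p/(K:ℝ))) K, ← Real.rpow_mul (hpos t).le,
        div_mul_cancel₀ _ hKne]
    have h2 : (v t ^ (p/(K:ℝ)))^K ≤ g t ^ K := by
      rw [h1, hcons t]; linarith
    exact le_of_pow_le_pow_left₀ (by omega) (hgpos t).le h2
  constructor
  · -- first derivative bound
    intro t
    have hg := hgpos t
    have h3 : (c * |deriv v t|)^2 ≤ (v t)^2 := by
      rw [mul_pow, sq_abs]
      have : 0 < v t ^2 - c^2 * (deriv v t)^2 := hg
      nlinarith
    have h4 : c * |deriv v t| ≤ v t :=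
      le_of_pow_le_pow_left₀ two_ne_zero (hpos t).le h3
    -- |v'| ≤ A * v t
    have hAc2 : A * (c * |deriv v t|) ≤ A * v t :=
      mul_le_mul_of_nonneg_left h4 hA.le
    calc |deriv v t| = (A * c) * |deriv v t| := by rw [hAc]; ring
      _ = A * (c * |deriv v t|) := by ring
      _ ≤ A * v t := hAc2
  · -- second derivative bound
    intro t
    have hode' := hode t
    have hgK1 : 0 < g t ^ (K-1) := pow_pos (hgpos t) _
    have hvpow : v t ^ (p*((K:ℝ)-1)/(K:ℝ)) ≤ g t ^ (K-1) := by
      have h1 : v t ^ (p*((K:ℝ)-1)/(K:ℝ)) = (v t ^ (p/(K:ℝ)))^(K-1) := by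
        rw [← Real.rpow_natCast (v t ^ (p/(K:ℝ))) (K-1), ← Real.rpow_mul (hpos t).le]
        congr 1
        have : ((K-1 : ℕ):ℝ) = (K:ℝ) - 1 := by
          push_cast [Nat.cast_sub hK1]; ring
        rw [this]; field_simp
      rw [h1]
      exact pow_le_pow_left₀ (Real.rpow_nonneg (hpos t).le _) (hgv t) _
    have hsplit : v t ^ (p - 1)
        = v t ^ (p/(K:ℝ) - 1) * v t ^ (p*((K:ℝ)-1)/(K:ℝ)) := by
      rw [← Real.rpow_add (hpos t)]
      congr 1
      field_simp
      ring
    have hXpos : 0 < v t - c^2 * deriv (deriv v) t := by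
      by_contra h
      push_neg at h
      have h1 : g t ^(K-1) * (v t - c^2 * deriv (deriv v) t) ≤ 0 :=
        mul_nonpos_of_nonneg_of_nonpos hgK1.le h
      rw [hode'] at h1
      have : 0 < κ * v t ^ (p-1) := by
        have := rpow_pos_of_pos (hpos t) (p-1); positivity
      rw [hκdef, hpdef] at this
      linarith
    have hXle : v t - c^2 * deriv (deriv v) t ≤ κ * v t ^ (p/(K:ℝ) - 1) := by
      have h1 : g t ^(K-1) * (v t - c^2 * deriv (deriv v) t)
          ≤ (κ * v t ^ (p/(K:ℝ) - 1)) * g t ^ (K-1) := by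
        rw [hode', ← hκdef, ← hpdef, hsplit]
        have h2 : 0 ≤ κ * v t ^ (p/(K:ℝ) - 1) := by
          have := Real.rpow_nonneg (hpos t).le (p/(K:ℝ) - 1); positivity
        calc κ * (v t ^ (p/(K:ℝ) - 1) * v t ^ (p*((K:ℝ)-1)/(K:ℝ)))
            = (κ * v t ^ (p/(K:ℝ) - 1)) * v t ^ (p*((K:ℝ)-1)/(K:ℝ)) := by ring
          _ ≤ (κ * v t ^ (p/(K:ℝ) - 1)) * g t ^ (K-1) :=
            mul_le_mul_of_nonneg_left hvpow h2
      have h3 : (v t - c^2 * deriv (deriv v) t) * g t ^ (K-1)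
          ≤ (κ * v t ^ (p/(K:ℝ) - 1)) * g t ^ (K-1) := by
        calc (v t - c^2 * deriv (deriv v) t) * g t ^ (K-1)
            = g t ^(K-1) * (v t - c^2 * deriv (deriv v) t) := by ring
          _ ≤ _ := h1
      exact le_of_mul_le_mul_right h3 hgK1
    have hvv : v t ^ (p/(K:ℝ) - 1) ≤ v t := by
      have h1 : v t ^ (p/(K:ℝ) - 1) ≤ v t ^ (1:ℝ) := by
        apply Real.rpow_le_rpow_of_exponent_ge (hpos t) (hbd t).2
        rw [hpK]; linarith
      rwa [Real.rpow_one] at h1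
    have hXle2 : v t - c^2 * deriv (deriv v) t ≤ κ * v t :=
      le_trans hXle (mul_le_mul_of_nonneg_left hvv hκ0.le)
    -- conclude |v''| ≤ κ * A^2 * v
    rw [abs_le]
    have hAc2 : A^2 * c^2 = 1 := by rw [← mul_pow, hAc, one_pow]
    have e1 : c^2 * deriv (deriv v) t ≤ κ * v t := by
      have h7 := le_mul_of_one_le_left (hpos t).le hκ
      linarith
    have e2 : -(κ * v t) ≤ c^2 * deriv (deriv v) t := by
      linarith [hXle2, (hpos t).le]
    have e3 : deriv (deriv v) t = A^2 * (c^2 * deriv (deriv v) t) := by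
      rw [← mul_assoc, hAc2, one_mul]
    constructor
    · calc -(κ * A^2 * v t) = A^2 * (-(κ * v t)) := by ring
        _ ≤ A^2 * (c^2 * deriv (deriv v) t) :=
          mul_le_mul_of_nonneg_left e2 (sq_nonneg A)
        _ = deriv (deriv v) t := e3.symm
    · calc deriv (deriv v) t = A^2 * (c^2 * deriv (deriv v) t) := e3
        _ ≤ A^2 * (κ * v t) := mul_le_mul_of_nonneg_left e1 (sq_nonneg A)
        _ = κ * A^2 * v t := by ring

lemma phi_taylor (A B : ℝ) (hA : 0 < A) (hB : 1 ≤ B) (v : ℝ → ℝ)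
    (hdv : Differentiable ℝ v) (hdv' : Differentiable ℝ (deriv v))
    (hpos : ∀ t, 0 < v t)
    (hb1 : ∀ t, |deriv v t| ≤ B * v t)
    (hb2 : ∀ t, |deriv (deriv v) t| ≤ B * v t)
    (hgr : ∀ s t : ℝ, v t ≤ v s * Real.exp (B * |t - s|))
    (t₀ : ℝ) (q : ℝ) (hq : q ∈ Set.Icc (1/4 : ℝ) (9/4)) :
    |q ^ (-(A/2)) * v (t₀ + Real.log q / 2) - v t₀
      - (-(A/2) * v t₀ + deriv v t₀ / 2) * (q - 1)|
      ≤ ((4:ℝ) ^ (A/2+2) * Real.exp B * ((A/2+1)*((A+B)/2) + B*(A+1)/4))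
          * v t₀ * (q-1)^2 := by
  set e : ℝ := -(A/2) with hedef
  set τ : ℝ → ℝ := fun r => t₀ + Real.log r / 2 with hτdef
  set φ : ℝ → ℝ := fun r => r ^ e * v (τ r) with hφdef
  set Φ' : ℝ → ℝ := fun r => r ^ (e-1) * (e * v (τ r) + deriv v (τ r) / 2) with hΦ'def
  set Φ'' : ℝ → ℝ := fun r =>
    r ^ (e-2) * ((e-1) * (e * v (τ r) + deriv v (τ r) / 2)
      + (e * deriv v (τ r) + deriv (deriv v) (τ r) / 2) / 2) with hΦ''def
  set W : ℝ := (A/2+1)*((A+B)/2) + B*(A+1)/4 with hWdef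
  set M : ℝ := (4:ℝ) ^ (A/2+2) * Real.exp B * W with hMdef
  have hτd : ∀ r : ℝ, 0 < r → HasDerivAt τ (r⁻¹ / 2) r := fun r hr =>
    ((Real.hasDerivAt_log hr.ne').div_const 2).const_add t₀
  have hvτ : ∀ r : ℝ, 0 < r →
      HasDerivAt (fun r => v (τ r)) (deriv v (τ r) * (r⁻¹ / 2)) r := fun r hr =>
    (hdv (τ r)).hasDerivAt.comp r (hτd r hr)
  have hv'τ : ∀ r : ℝ, 0 < r →
      HasDerivAt (fun r => deriv v (τ r)) (deriv (deriv v) (τ r) * (r⁻¹ / 2)) r := fun r hr =>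
    (hdv' (τ r)).hasDerivAt.comp r (hτd r hr)
  have hd1 : ∀ r : ℝ, 0 < r → HasDerivAt φ (Φ' r) r := by
    intro r hr
    have hpow : HasDerivAt (fun r : ℝ => r ^ e) (e * r ^ (e-1)) r :=
      Real.hasDerivAt_rpow_const (Or.inl hr.ne')
    have := hpow.mul (hvτ r hr)
    refine this.congr_deriv ?_
    symm
    rw [hΦ'def]
    simp only
    rw [Real.rpow_sub_one hr.ne']
    field_simp
  have hd2 : ∀ r : ℝ, 0 < r → HasDerivAt Φ' (Φ'' r) r := by
    intro r hr
    have hpow : HasDerivAt (fun r : ℝ => r ^ (e-1)) ((e-1) * r ^ (e-1-1)) r :=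
      Real.hasDerivAt_rpow_const (Or.inl hr.ne')
    have hw : HasDerivAt (fun r => e * v (τ r) + deriv v (τ r) / 2)
        (e * (deriv v (τ r) * (r⁻¹ / 2)) + (deriv (deriv v) (τ r) * (r⁻¹ / 2)) / 2) r :=
      ((hvτ r hr).const_mul e).add ((hv'τ r hr).div_const 2)
    have := hpow.mul hw
    refine this.congr_deriv ?_
    symm
    rw [hΦ''def]
    simp only
    have h1 : e - 1 - 1 = e - 2 := by ring
    rw [h1, show (e-1 : ℝ) = (e-2) + 1 by ring, Real.rpow_add hr]
    rw [Real.rpow_one]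
    field_simp
  -- bounds on the relevant interval
  have hvshift : ∀ r : ℝ, r ∈ Set.Icc (1/4 : ℝ) (9/4) → v (τ r) ≤ v t₀ * Real.exp B := by
    intro r hr
    have hrpos : (0:ℝ) < r := lt_of_lt_of_le (by norm_num) hr.1
    have hlog : |Real.log r| ≤ 2 := by
      rw [abs_le]
      constructor
      · have h1 : Real.log (1/4 : ℝ) ≤ Real.log r :=
          Real.log_le_log (by norm_num) hr.1
        have h2 : (-2 : ℝ) ≤ Real.log (1/4 : ℝ) := by
          rw [show (1/4 : ℝ) = 4⁻¹ by norm_num, Real.log_inv]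
          have : Real.log 4 ≤ 2 := by
            rw [Real.log_le_iff_le_exp (by norm_num)]
            have h3 := Real.exp_one_gt_d9
            have h4 : Real.exp 2 = Real.exp 1 * Real.exp 1 := by
              rw [← Real.exp_add]; norm_num
            nlinarith
          linarith
        linarith
      · have h1 : Real.log r ≤ Real.log (9/4 : ℝ) :=
          Real.log_le_log hrpos hr.2
        have h2 : Real.log (9/4 : ℝ) ≤ 9/4 - 1 := Real.log_le_sub_one_of_pos (by norm_num)
        linarith
    have h5 := hgr t₀ (τ r)
    have h6 : |τ r - t₀| ≤ 1 := by
      rw [hτdef]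
      simp only [add_sub_cancel_left]
      rw [abs_div]
      rw [abs_of_pos (by norm_num : (0:ℝ) < 2)] at *
      linarith [hlog]
    calc v (τ r) ≤ v t₀ * Real.exp (B * |τ r - t₀|) := h5
      _ ≤ v t₀ * Real.exp B := by
        apply mul_le_mul_of_nonneg_left _ (hpos t₀).le
        apply Real.exp_le_exp.mpr
        nlinarith [h6]
  have hΦ''bd : ∀ r : ℝ, r ∈ Set.Icc (1/4 : ℝ) (9/4) → ‖Φ'' r‖ ≤ M * v t₀ := by
    intro r hr
    have hrpos : (0:ℝ) < r := lt_of_lt_of_le (by norm_num) hr.1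
    have hrpow : r ^ (e - 2) ≤ (4:ℝ) ^ (A/2+2) := by
      have h1 : r ^ (e-2) ≤ (1/4 : ℝ) ^ (e-2) := by
        apply Real.rpow_le_rpow_of_nonpos (by norm_num) hr.1
        rw [hedef]; linarith
      have h2 : (1/4 : ℝ) ^ (e-2) = (4:ℝ) ^ (A/2+2) := by
        rw [one_div, Real.inv_rpow (by norm_num), ← Real.rpow_neg (by norm_num)]
        congr 1
        rw [hedef]; ring
      linarith
    have hv1 : v (τ r) ≤ v t₀ * Real.exp B := hvshift r hr
    have hvpos := hpos (τ r)
    have hb1' := hb1 (τ r)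
    have hb2' := hb2 (τ r)
    have habs : |(e-1) * (e * v (τ r) + deriv v (τ r) / 2)
        + (e * deriv v (τ r) + deriv (deriv v) (τ r) / 2) / 2| ≤ W * v (τ r) := by
      have h3 : |e * v (τ r) + deriv v (τ r) / 2| ≤ (A+B)/2 * v (τ r) := by
        rw [hedef]
        have := abs_add_le (-(A/2) * v (τ r)) (deriv v (τ r) / 2)
        rw [abs_mul, abs_div] at this
        have h4 : |(-(A/2))| = A/2 := by rw [abs_neg, abs_of_pos (by linarith)]
        have h5 : |v (τ r)| = v (τ r) := abs_of_pos hvpos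
        rw [h4, h5] at this
        have h6 : |(2:ℝ)| = 2 := by norm_num
        rw [h6] at this
        nlinarith [hb1']
      have h7 : |e * deriv v (τ r) + deriv (deriv v) (τ r) / 2| ≤ B*(A+1)/2 * v (τ r) := by
        rw [hedef]
        have := abs_add_le (-(A/2) * deriv v (τ r)) (deriv (deriv v) (τ r) / 2)
        rw [abs_mul, abs_div] at this
        have h4 : |(-(A/2))| = A/2 := by rw [abs_neg, abs_of_pos (by linarith)]
        have h6 : |(2:ℝ)| = 2 := by norm_num
        rw [h4, h6] at this
        nlinarith [hb1', hb2', abs_nonneg (deriv v (τ r))]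
      have h8 := abs_add_le ((e-1) * (e * v (τ r) + deriv v (τ r) / 2))
        ((e * deriv v (τ r) + deriv (deriv v) (τ r) / 2) / 2)
      rw [abs_mul, abs_div] at h8
      have h9 : |e - 1| = A/2 + 1 := by
        rw [hedef, abs_of_neg (by linarith : -(A/2) - 1 < 0)]; ring
      have h6 : |(2:ℝ)| = 2 := by norm_num
      rw [h9, h6] at h8
      rw [hWdef]
      nlinarith [h3, h7, abs_nonneg (e * v (τ r) + deriv v (τ r) / 2),
        abs_nonneg (e * deriv v (τ r) + deriv (deriv v) (τ r) / 2)]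
    rw [Real.norm_eq_abs, hΦ''def]
    simp only
    rw [abs_mul, abs_of_pos (Real.rpow_pos_of_pos hrpos _)]
    have hWpos : 0 < W := by rw [hWdef]; nlinarith
    calc r ^ (e-2) * |(e-1) * (e * v (τ r) + deriv v (τ r) / 2)
        + (e * deriv v (τ r) + deriv (deriv v) (τ r) / 2) / 2|
        ≤ (4:ℝ) ^ (A/2+2) * (W * v (τ r)) := by
          apply mul_le_mul hrpow habs (abs_nonneg _)
          positivity
      _ ≤ (4:ℝ) ^ (A/2+2) * (W * (v t₀ * Real.exp B)) := by
          apply mul_le_mul_of_nonneg_left _ (by positivity)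
          exact mul_le_mul_of_nonneg_left hv1 hWpos.le
      _ = M * v t₀ := by rw [hMdef]; ring
  -- Step 1: Lipschitz bound for Φ' on the interval
  have hstep1 : ∀ r ∈ Set.Icc (1/4:ℝ) (9/4), ‖Φ' r - Φ' 1‖ ≤ M * v t₀ * ‖r - 1‖ := by
    intro r hr
    apply Convex.norm_image_sub_le_of_norm_hasDerivWithin_le (f' := Φ'')
      (fun u hu => (hd2 u (lt_of_lt_of_le (by norm_num) hu.1)).hasDerivWithinAt)
      hΦ''bd (convex_Icc _ _) (by norm_num : (1:ℝ) ∈ Set.Icc (1/4:ℝ) (9/4)) hr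
  -- Step 2
  have hsub : Set.Icc (min 1 q) (max 1 q) ⊆ Set.Icc (1/4:ℝ) (9/4) := by
    apply Set.Icc_subset_Icc
    · exact le_min (by norm_num) hq.1
    · exact max_le (by norm_num) hq.2
  have hstep2 : ‖(φ q - Φ' 1 * q) - (φ 1 - Φ' 1 * 1)‖ ≤ M * v t₀ * |q - 1| * ‖q - 1‖ := by
    apply Convex.norm_image_sub_le_of_norm_hasDerivWithin_le
      (f := fun r => φ r - Φ' 1 * r) (f' := fun r => Φ' r - Φ' 1)
      (fun u hu => by
        have h := (hd1 u (lt_of_lt_of_le (by norm_num) (hsub hu).1)).sub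
          ((hasDerivAt_id u).const_mul (Φ' 1))
        exact (h.congr_deriv (by ring)).hasDerivWithinAt)
      ?_ (convex_Icc _ _) ?_ ?_
    · intro u hu
      have h1 := hstep1 u (hsub hu)
      have h2 : ‖u - 1‖ ≤ |q - 1| := by
        rw [Real.norm_eq_abs, abs_le]
        rcases le_total 1 q with h | h
        · rw [min_eq_left h, max_eq_right h] at hu
          constructor <;> [linarith [hu.1, abs_nonneg (q-1)]; skip]
          have : q - 1 = |q - 1| := (abs_of_nonneg (by linarith)).symm
          linarith [hu.2]
        · rw [min_eq_right h, max_eq_left h] at hu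
          have : 1 - q = |q - 1| := by rw [abs_sub_comm]; exact (abs_of_nonneg (by linarith)).symm
          constructor <;> linarith [hu.1, hu.2]
      calc ‖Φ' u - Φ' 1‖ ≤ M * v t₀ * ‖u - 1‖ := h1
        _ ≤ M * v t₀ * |q - 1| := by
          apply mul_le_mul_of_nonneg_left h2
          have hWpos : 0 < W := by rw [hWdef]; nlinarith
          have hM : 0 < M := by rw [hMdef]; positivity
          exact mul_nonneg hM.le (hpos t₀).le
    · exact ⟨min_le_left 1 q, le_max_left 1 q⟩
    · exact ⟨min_le_right 1 q, le_max_right 1 q⟩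
  -- assemble
  have hΦ'1 : Φ' 1 = -(A/2) * v t₀ + deriv v t₀ / 2 := by
    rw [hΦ'def]
    simp [hτdef, Real.log_one, hedef]
  have hφ1 : φ 1 = v t₀ := by
    rw [hφdef]
    simp [hτdef, Real.log_one]
  have hφq : φ q = q ^ (-(A/2)) * v (t₀ + Real.log q / 2) := by rw [hφdef]
  have heq : (φ q - Φ' 1 * q) - (φ 1 - Φ' 1 * 1)
      = q ^ (-(A/2)) * v (t₀ + Real.log q / 2) - v t₀
        - (-(A/2) * v t₀ + deriv v t₀ / 2) * (q - 1) := by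
    rw [hφq, hφ1, hΦ'1]; ring
  rw [← heq]
  have := hstep2
  rw [Real.norm_eq_abs, Real.norm_eq_abs] at this
  calc |(φ q - Φ' 1 * q) - (φ 1 - Φ' 1 * 1)| ≤ M * v t₀ * |q-1| * |q-1| := this
    _ = M * v t₀ * (q-1)^2 := by
      rw [mul_assoc (M * v t₀), ← abs_mul, ← sq, abs_of_nonneg (sq_nonneg _)]

lemma qbounds (na nx ip : ℝ) (h1 : |ip| ≤ na*nx) (h2 : na*nx < 1/2)
    (h3 : 0 ≤ na) (h4 : 0 ≤ nx) :
    1/4 ≤ 1 - 2*ip + nx^2*na^2 ∧ 1 - 2*ip + nx^2*na^2 ≤ 9/4 ∧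
      (1 - 2*ip + nx^2*na^2 - 1)^2 ≤ 9*(na^2*nx^2) := by
  obtain ⟨l, r⟩ := abs_le.mp h1
  have hu : 0 ≤ na*nx := mul_nonneg h3 h4
  have hip2 : ip^2 ≤ (na*nx)^2 := by
    have := pow_le_pow_left₀ (abs_nonneg ip) h1 2
    rwa [sq_abs] at this
  refine ⟨?_, ?_, ?_⟩
  · nlinarith [sq_nonneg (1/2 - na*nx)]
  · nlinarith
  · have f1 : -ip * (na*nx)^2 ≤ (na*nx) * (na*nx)^2 :=
      mul_le_mul_of_nonneg_right (by linarith) (sq_nonneg _)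
    have f2 : (na*nx) * (na*nx)^2 ≤ (1/2) * (na*nx)^2 :=
      mul_le_mul_of_nonneg_right h2.le (sq_nonneg _)
    have f3 : (na*nx)^2 ≤ 1/4 := by nlinarith
    have f4 : (na*nx)^2 * (na*nx)^2 ≤ (1/4) * (na*nx)^2 :=
      mul_le_mul_of_nonneg_right f3 (sq_nonneg _)
    nlinarith [hip2, f1, f2, f4]


theorem translated_delaunay_expansion
    (n k : ℤ) (hk : 0 < k) (hnk : 2 * k < n) :
    ∃ r₀ : ℝ, r₀ ∈ Set.Ioo (0 : ℝ) 1 ∧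
      ∃ C : ℝ, 0 < C ∧
        ∀ ε : ℝ, 0 < ε → ε < (((n : ℝ) - 2 * k) / n) ^ (1 / (2 * (k : ℝ))) →
          ∀ v : ℝ → ℝ, IsDelaunay n k ε v →
            ∀ R : ℝ, 0 < R →
              ∀ a x : EuclideanSpace ℝ (Fin n.toNat),
                0 < ‖x‖ → ‖x‖ ≤ 1 → ‖a‖ * ‖x‖ < r₀ →
                  |uRa n k v R a x - uR n k v R x -
                      (((n : ℝ) - 2 * k) / k * uR n k v R x + Dterm n k v R x) *
                        ⟪a, x⟫| ≤
                    C * ‖a‖ ^ 2 * ‖x‖ ^ ((6 * (k : ℝ) - n) / (2 * k)) ∧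
                  (R ≤ ‖x‖ →
                    |uRa n k v R a x - uR n k v R x -
                        (((n : ℝ) - 2 * k) / k * uR n k v R x + Dterm n k v R x) *
                          ⟪a, x⟫| ≤
                      C * ‖a‖ ^ 2 * ε ^ (((n : ℝ) - 2 * k) / (2 * k)) *
                        R ^ ((2 * (k : ℝ) - n) / (2 * k)) * ‖x‖ ^ 2) := by
  have hkR : (0:ℝ) < (k:ℝ) := by exact_mod_cast hk
  have hnk2 : (0:ℝ) < (n:ℝ) - 2*k := by
    have : (2*k:ℝ) < n := by exact_mod_cast hnk
    linarith
  set A : ℝ := ((n:ℝ) - 2*k)/(2*k) with hAdef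
  have hA : 0 < A := by rw [hAdef]; exact div_pos hnk2 (by linarith)
  set κ : ℝ := (n:ℝ)/((n:ℝ)-2*k) with hκdef
  have hκ0 : 0 < κ := by rw [hκdef]; exact div_pos (by linarith) hnk2
  set B : ℝ := max 1 (max A (κ * A^2)) with hBdef
  have hB1 : 1 ≤ B := le_max_left _ _
  have hBA : A ≤ B := le_trans (le_max_left _ _) (le_max_right _ _)
  have hBκ : κ * A^2 ≤ B := le_trans (le_max_right _ _) (le_max_right _ _)
  set W : ℝ := (A/2+1)*((A+B)/2) + B*(A+1)/4 with hWdef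
  have hWpos : 0 < W := by
    rw [hWdef]
    have h1 : 0 < (A/2+1) := by linarith
    have h2 : 0 < (A+B)/2 := by linarith
    have h3 : 0 < B*(A+1)/4 := by nlinarith
    nlinarith
  set M : ℝ := (4:ℝ) ^ (A/2+2) * Real.exp B * W with hMdef
  have hMpos : 0 < M := by
    rw [hMdef]
    have := Real.rpow_pos_of_pos (by norm_num : (0:ℝ) < 4) (A/2+2)
    have := Real.exp_pos B
    positivity
  refine ⟨1/2, by norm_num, 9*M + A + 1, by positivity, ?_⟩
  intro ε hε hεlt v hv R hRpos a x hx0 hx1 har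
  have hest := delaunay_est n k hk hnk ε hε v hv
  obtain ⟨hv2, hode, hd0, h0, hbd⟩ := hv
  set v0 : ℝ := ε ^ (((n:ℝ) - 2*k)/(2*k)) with hv0def
  have hv0pos : 0 < v0 := Real.rpow_pos_of_pos hε _
  have hpos : ∀ t, 0 < v t := fun t => lt_of_lt_of_le hv0pos (hbd t).1
  have hv2' : ContDiff ℝ ((1:ℕ) + 1) v := by exact_mod_cast hv2
  have hder := contDiff_succ_iff_deriv.mp hv2'
  have hdv : Differentiable ℝ v := hder.1
  have hdv' : Differentiable ℝ (deriv v) := hder.2.2.differentiable (by norm_num)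
  have hb1 : ∀ t, |deriv v t| ≤ A * v t := hest.1
  have hb2 : ∀ t, |deriv (deriv v) t| ≤ κ * A^2 * v t := by
    intro t
    have := hest.2 t
    calc |deriv (deriv v) t| ≤ (n:ℝ)/((n:ℝ)-2*k) * (((n:ℝ)-2*k)/(2*k))^2 * v t := this
      _ = κ * A^2 * v t := by rw [hκdef, hAdef]
  have hb1B : ∀ t, |deriv v t| ≤ B * v t := fun t =>
    le_trans (hb1 t) (mul_le_mul_of_nonneg_right hBA (hpos t).le)
  have hb2B : ∀ t, |deriv (deriv v) t| ≤ B * v t := fun t =>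
    le_trans (hb2 t) (mul_le_mul_of_nonneg_right hBκ (hpos t).le)
  have hgrA := gron A v hdv hpos hb1
  have hgrB := gron B v hdv hpos hb1B
  -- geometry
  have hcoef1 : (2 * (k:ℝ) - (n:ℝ)) / (2 * (k:ℝ)) = -A := by rw [hAdef]; ring
  have hcoef2 : ((n:ℝ) - 2 * (k:ℝ)) / (k:ℝ) = 2*A := by
    rw [hAdef]; field_simp
  have hCS : |⟪a, x⟫| ≤ ‖a‖ * ‖x‖ := abs_real_inner_le_norm a x
  have hqb := qbounds ‖a‖ ‖x‖ ⟪a,x⟫ hCS har (norm_nonneg a) (norm_nonneg x)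
  have hq14 : (1/4 : ℝ) ≤ 1 - 2*⟪a,x⟫ + ‖x‖^2*‖a‖^2 := hqb.1
  have hq94 : 1 - 2*⟪a,x⟫ + ‖x‖^2*‖a‖^2 ≤ (9/4 : ℝ) := hqb.2.1
  have hqpos : (0:ℝ) < 1 - 2*⟪a,x⟫ + ‖x‖^2*‖a‖^2 := lt_of_lt_of_le (by norm_num) hq14
  have hynormsq : ‖x - ‖x‖^2 • a‖^2 = ‖x‖^2 * (1 - 2*⟪a,x⟫ + ‖x‖^2*‖a‖^2) := by
    rw [norm_sub_sq_real, real_inner_smul_right, norm_smul]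
    rw [real_inner_comm x a]
    simp [abs_of_nonneg (sq_nonneg ‖x‖)]
    ring
  have hynorm : ‖x - ‖x‖^2 • a‖ = ‖x‖ * Real.sqrt (1 - 2*⟪a,x⟫ + ‖x‖^2*‖a‖^2) := by
    rw [← Real.sqrt_sq (norm_nonneg (x - ‖x‖^2 • a)), hynormsq, Real.sqrt_mul (sq_nonneg _),
      Real.sqrt_sq hx0.le]
  have hypos : 0 < ‖x - ‖x‖^2 • a‖ := by
    rw [hynorm]; positivity
  have hlogy : Real.log ‖x - ‖x‖^2 • a‖
      = Real.log ‖x‖ + Real.log (1 - 2*⟪a,x⟫ + ‖x‖^2*‖a‖^2) / 2 := by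
    rw [hynorm, Real.log_mul hx0.ne' (Real.sqrt_pos.mpr hqpos).ne', Real.log_sqrt hqpos.le]
  have hargeq : -2 * Real.log ‖x‖ + Real.log ‖x - ‖x‖^2 • a‖ + Real.log R
      = (-Real.log ‖x‖ + Real.log R) + Real.log (1 - 2*⟪a,x⟫ + ‖x‖^2*‖a‖^2) / 2 := by
    rw [hlogy]; ring
  have hypow : ‖x - ‖x‖^2 • a‖ ^ (-A)
      = ‖x‖ ^ (-A) * (1 - 2*⟪a,x⟫ + ‖x‖^2*‖a‖^2) ^ (-(A/2)) := by
    rw [hynorm, Real.mul_rpow hx0.le (Real.sqrt_nonneg _)]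
    congr 1
    rw [Real.sqrt_eq_rpow, ← Real.rpow_mul hqpos.le]
    congr 1
    ring
  -- the key estimate
  set t₀ : ℝ := -Real.log ‖x‖ + Real.log R with ht₀def
  set q : ℝ := 1 - 2*⟪a,x⟫ + ‖x‖^2*‖a‖^2 with hqdef
  have hT1 := phi_taylor A B hA hB1 v hdv hdv' hpos hb1B hb2B hgrB t₀ q ⟨hq14, hq94⟩
  have hΦ1bd : |(-(A/2) * v t₀ + deriv v t₀ / 2)| ≤ A * v t₀ := by
    have h1 := abs_add_le (-(A/2) * v t₀) (deriv v t₀ / 2)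
    rw [abs_mul, abs_div, abs_neg, abs_of_pos (by linarith : (0:ℝ) < A/2),
      abs_of_pos (hpos t₀), abs_of_pos (by norm_num : (0:ℝ) < 2)] at h1
    have h2 := hb1 t₀
    linarith
  have hq1bd : (q - 1)^2 ≤ 9 * (‖a‖^2 * ‖x‖^2) := by
    rw [hqdef]
    calc (1 - 2*⟪a,x⟫ + ‖x‖^2*‖a‖^2 - 1)^2 ≤ 9*(‖a‖^2*‖x‖^2) := hqb.2.2
      _ = 9 * (‖a‖^2 * ‖x‖^2) := by ring
  have hsA : (0:ℝ) < ‖x‖ ^ (-A) := Real.rpow_pos_of_pos hx0 _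
  have key : |uRa n k v R a x - uR n k v R x -
      (((n : ℝ) - 2 * k) / k * uR n k v R x + Dterm n k v R x) * ⟪a, x⟫|
      ≤ (9*M + A) * ‖a‖^2 * (‖x‖ ^ (-A) * ‖x‖^2) * v t₀ := by
    simp only [uRa, uR, Dterm]
    rw [hcoef1, hcoef2, hypow, hargeq]
    have habs_eq : ‖x‖ ^ (-A) * q ^ (-(A/2)) * v (t₀ + Real.log q / 2)
        - ‖x‖ ^ (-A) * v t₀
        - (2*A * (‖x‖ ^ (-A) * v t₀) + (-A * (‖x‖ ^ (-A) * v t₀) - ‖x‖ ^ (-A) * deriv v t₀))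
            * ⟪a, x⟫
        = ‖x‖ ^ (-A) * ((q ^ (-(A/2)) * v (t₀ + Real.log q / 2) - v t₀
            - (-(A/2) * v t₀ + deriv v t₀ / 2) * (q - 1))
          + (-(A/2) * v t₀ + deriv v t₀ / 2) * (‖x‖^2 * ‖a‖^2)) := by
      rw [hqdef]; ring
    rw [habs_eq, abs_mul, abs_of_pos hsA]
    have htri : |(q ^ (-(A/2)) * v (t₀ + Real.log q / 2) - v t₀
          - (-(A/2) * v t₀ + deriv v t₀ / 2) * (q - 1))
        + (-(A/2) * v t₀ + deriv v t₀ / 2) * (‖x‖^2 * ‖a‖^2)|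
        ≤ M * v t₀ * (q-1)^2 + A * v t₀ * (‖x‖^2 * ‖a‖^2) := by
      have h1 := abs_add_le (q ^ (-(A/2)) * v (t₀ + Real.log q / 2) - v t₀
          - (-(A/2) * v t₀ + deriv v t₀ / 2) * (q - 1))
        ((-(A/2) * v t₀ + deriv v t₀ / 2) * (‖x‖^2 * ‖a‖^2))
      have h2 : |(-(A/2) * v t₀ + deriv v t₀ / 2) * (‖x‖^2 * ‖a‖^2)|
          ≤ A * v t₀ * (‖x‖^2 * ‖a‖^2) := by
        rw [abs_mul, abs_of_nonneg (by positivity : (0:ℝ) ≤ ‖x‖^2 * ‖a‖^2)]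
        exact mul_le_mul_of_nonneg_right hΦ1bd (by positivity)
      have h3 : |q ^ (-(A/2)) * v (t₀ + Real.log q / 2) - v t₀
          - (-(A/2) * v t₀ + deriv v t₀ / 2) * (q - 1)| ≤ M * v t₀ * (q-1)^2 := by
        calc _ ≤ ((4:ℝ) ^ (A/2+2) * Real.exp B * ((A/2+1)*((A+B)/2) + B*(A+1)/4))
            * v t₀ * (q-1)^2 := hT1
          _ = M * v t₀ * (q-1)^2 := by rw [hMdef, hWdef]
      linarith
    calc ‖x‖ ^ (-A) * |(q ^ (-(A/2)) * v (t₀ + Real.log q / 2) - v t₀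
          - (-(A/2) * v t₀ + deriv v t₀ / 2) * (q - 1))
        + (-(A/2) * v t₀ + deriv v t₀ / 2) * (‖x‖^2 * ‖a‖^2)|
        ≤ ‖x‖ ^ (-A) * (M * v t₀ * (q-1)^2 + A * v t₀ * (‖x‖^2 * ‖a‖^2)) :=
          mul_le_mul_of_nonneg_left htri hsA.le
      _ ≤ ‖x‖ ^ (-A) * (M * v t₀ * (9 * (‖a‖^2 * ‖x‖^2)) + A * v t₀ * (‖x‖^2 * ‖a‖^2)) := by
          apply mul_le_mul_of_nonneg_left _ hsA.le
          have : M * v t₀ * (q-1)^2 ≤ M * v t₀ * (9 * (‖a‖^2 * ‖x‖^2)) :=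
            mul_le_mul_of_nonneg_left hq1bd (mul_nonneg hMpos.le (hpos t₀).le)
          linarith
      _ = (9*M + A) * ‖a‖^2 * (‖x‖ ^ (-A) * ‖x‖^2) * v t₀ := by ring
  constructor
  · -- first conclusion
    have hexp1 : ‖x‖ ^ (-A) * ‖x‖^2 = ‖x‖ ^ ((6*(k:ℝ)-n)/(2*(k:ℝ))) := by
      rw [show (6*(k:ℝ)-n)/(2*(k:ℝ)) = -A + 2 by rw [hAdef]; field_simp; ring,
        Real.rpow_add hx0, show ((2:ℝ) : ℝ) = ((2:ℕ):ℝ) by norm_num, Real.rpow_natCast]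
    calc |uRa n k v R a x - uR n k v R x -
        (((n : ℝ) - 2 * k) / k * uR n k v R x + Dterm n k v R x) * ⟪a, x⟫|
        ≤ (9*M + A) * ‖a‖^2 * (‖x‖ ^ (-A) * ‖x‖^2) * v t₀ := key
      _ ≤ (9*M + A + 1) * ‖a‖^2 * (‖x‖ ^ (-A) * ‖x‖^2) := by
          have hvle1 : v t₀ ≤ 1 := (hbd t₀).2
          have h9 : (0:ℝ) ≤ 9*M + A := by linarith
          have hP : (0:ℝ) ≤ ‖a‖^2 * (‖x‖ ^ (-A) * ‖x‖^2) := by positivity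
          calc (9*M + A) * ‖a‖^2 * (‖x‖ ^ (-A) * ‖x‖^2) * v t₀
              = ((9*M + A) * (‖a‖^2 * (‖x‖ ^ (-A) * ‖x‖^2))) * v t₀ := by ring
            _ ≤ ((9*M + A) * (‖a‖^2 * (‖x‖ ^ (-A) * ‖x‖^2))) * 1 :=
                mul_le_mul_of_nonneg_left hvle1 (mul_nonneg h9 hP)
            _ = (9*M + A) * (‖a‖^2 * (‖x‖ ^ (-A) * ‖x‖^2)) := by ring
            _ ≤ (9*M + A + 1) * (‖a‖^2 * (‖x‖ ^ (-A) * ‖x‖^2)) :=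
                mul_le_mul_of_nonneg_right (by linarith) hP
            _ = (9*M + A + 1) * ‖a‖^2 * (‖x‖ ^ (-A) * ‖x‖^2) := by ring
      _ = (9*M + A + 1) * ‖a‖^2 * ‖x‖ ^ ((6*(k:ℝ)-n)/(2*(k:ℝ))) := by rw [hexp1]
  · -- second conclusion
    intro hRs
    have hlogRs : Real.log R ≤ Real.log ‖x‖ := Real.log_le_log hRpos hRs
    have ht₀neg : t₀ ≤ 0 := by rw [ht₀def]; linarith
    have hgr0 := hgrA 0 t₀
    have habs0 : |t₀ - 0| = Real.log ‖x‖ - Real.log R := by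
      rw [sub_zero, abs_of_nonpos ht₀neg, ht₀def]; ring
    have hexp2 : Real.exp (A * (Real.log ‖x‖ - Real.log R)) = ‖x‖ ^ A * R ^ (-A) := by
      rw [Real.rpow_def_of_pos hx0, Real.rpow_def_of_pos hRpos, ← Real.exp_add]
      congr 1; ring
    have hvt₀ : v t₀ ≤ v0 * (‖x‖ ^ A * R ^ (-A)) := by
      calc v t₀ ≤ v 0 * Real.exp (A * |t₀ - 0|) := hgr0
        _ = v0 * (‖x‖ ^ A * R ^ (-A)) := by rw [h0, habs0, hexp2]
    have hcombine : ‖x‖ ^ (-A) * ‖x‖^2 * v t₀ ≤ v0 * R ^ (-A) * ‖x‖^2 := by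
      have h1 : ‖x‖ ^ (-A) * ‖x‖^2 * v t₀ ≤ ‖x‖ ^ (-A) * ‖x‖^2 * (v0 * (‖x‖ ^ A * R ^ (-A))) :=
        mul_le_mul_of_nonneg_left hvt₀ (by positivity)
      have h2 : ‖x‖ ^ (-A) * ‖x‖ ^ A = 1 := by
        rw [← Real.rpow_add hx0]; simp
      calc ‖x‖ ^ (-A) * ‖x‖^2 * v t₀
          ≤ ‖x‖ ^ (-A) * ‖x‖^2 * (v0 * (‖x‖ ^ A * R ^ (-A))) := h1
        _ = (‖x‖ ^ (-A) * ‖x‖ ^ A) * (v0 * R ^ (-A) * ‖x‖^2) := by ring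
        _ = v0 * R ^ (-A) * ‖x‖^2 := by rw [h2, one_mul]
    have hRA : R ^ ((2 * (k:ℝ) - (n:ℝ)) / (2 * (k:ℝ))) = R ^ (-A) := by rw [hcoef1]
    calc |uRa n k v R a x - uR n k v R x -
        (((n : ℝ) - 2 * k) / k * uR n k v R x + Dterm n k v R x) * ⟪a, x⟫|
        ≤ (9*M + A) * ‖a‖^2 * (‖x‖ ^ (-A) * ‖x‖^2) * v t₀ := key
      _ = (9*M + A) * ‖a‖^2 * (‖x‖ ^ (-A) * ‖x‖^2 * v t₀) := by ring
      _ ≤ (9*M + A) * ‖a‖^2 * (v0 * R ^ (-A) * ‖x‖^2) := by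
          have h9 : (0:ℝ) ≤ (9*M + A) * ‖a‖^2 := by
            apply mul_nonneg _ (sq_nonneg _)
            linarith
          exact mul_le_mul_of_nonneg_left hcombine h9
      _ ≤ (9*M + A + 1) * ‖a‖^2 * (v0 * R ^ (-A) * ‖x‖^2) := by
          have hP2 : (0:ℝ) ≤ ‖a‖^2 * (v0 * R ^ (-A) * ‖x‖^2) := by positivity
          calc (9*M + A) * ‖a‖^2 * (v0 * R ^ (-A) * ‖x‖^2)
              = (9*M + A) * (‖a‖^2 * (v0 * R ^ (-A) * ‖x‖^2)) := by ring
            _ ≤ (9*M + A + 1) * (‖a‖^2 * (v0 * R ^ (-A) * ‖x‖^2)) :=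
                mul_le_mul_of_nonneg_right (by linarith) hP2
            _ = (9*M + A + 1) * ‖a‖^2 * (v0 * R ^ (-A) * ‖x‖^2) := by ring
      _ = (9*M + A + 1) * ‖a‖^2 * v0 * R ^ ((2 * (k:ℝ) - (n:ℝ)) / (2 * (k:ℝ))) * ‖x‖^2 := by
          rw [hRA]; ring
end

section
/- Let n and k be integers with 0 < k and 2k < n, and work in E = EuclideanSpace ℝ (Fin n). There exist r₀ ∈ (0,1) and C > 0, depending only on n and k, such that for all x, a ∈ E with x ≠ 0 and ‖a‖·‖x‖ < r₀: | ‖x − ‖x‖²·a‖^((2k−n)/(2k)) − ‖x‖^((2k−n)/(2k)) · (1 + ((n−2k)/(2k)) · ⟨a, x⟩) | ≤ C · ‖a‖² · ‖x‖^((6k−n)/(2k)), where ⟨·,·⟩ is the Euclidean inner product and s^α denotes the real power of s > 0. -/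
open Real

open scoped RealInnerProductSpace

/-- Lipschitz estimate for `u ↦ (1+u)^(β-1)` near `u = 0`, for `β < 0`. -/
lemma aux_rpow_lip (β : ℝ) (hβ : β < 0) :
    ∀ u : ℝ, |u| ≤ 1/2 → |(1+u) ^ (β-1) - 1| ≤ ((1-β) * (2:ℝ) ^ (2-β)) * |u| := by
  intro u hu
  have hconv : Convex ℝ (Set.Icc (-(1/2):ℝ) (1/2)) := convex_Icc _ _
  have key := hconv.norm_image_sub_le_of_norm_hasDerivWithin_le
    (C := (1-β) * (2:ℝ) ^ (2-β))
    (f := fun y => (1+y) ^ (β-1)) (f' := fun y => (β-1) * (1+y) ^ (β-2))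
    (fun y hy => by
      have h1 : (0:ℝ) < 1 + y := by
        rcases hy with ⟨h1, h2⟩; linarith
      have h := (Real.hasDerivAt_rpow_const (x := 1+y) (p := β-1) (Or.inl h1.ne')).comp y
        ((hasDerivAt_id y).const_add 1)
      have h2 : β - 1 - 1 = β - 2 := by ring
      simp only [Function.comp, mul_one, h2] at h
      exact h.hasDerivWithinAt)
    (fun y hy => by
      rcases hy with ⟨hy1, hy2'⟩
      have hy2 : (1/2:ℝ) ≤ 1 + y := by linarith
      have h1 : (0:ℝ) < 1 + y := by linarith
      have hb : (1+y) ^ (β-2) ≤ (1/2:ℝ) ^ (β-2) :=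
        Real.rpow_le_rpow_of_nonpos (by norm_num) hy2 (by linarith)
      have h12 : ((1/2:ℝ)) ^ (β-2) = (2:ℝ) ^ (2-β) := by
        rw [one_div, Real.inv_rpow (by norm_num), ← Real.rpow_neg (by norm_num)]
        norm_num [neg_sub]
      rw [Real.norm_eq_abs, abs_mul, abs_of_nonneg (Real.rpow_nonneg h1.le _),
        abs_of_nonpos (by linarith : β - 1 ≤ 0)]
      have hle : (1+y) ^ (β-2) ≤ (2:ℝ) ^ (2-β) := h12 ▸ hb
      have := mul_le_mul_of_nonneg_left hle (show (0:ℝ) ≤ 1-β by linarith)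
      linarith)
    (show (0:ℝ) ∈ Set.Icc (-(1/2):ℝ) (1/2) by norm_num)
    (show u ∈ Set.Icc (-(1/2):ℝ) (1/2) from ⟨(abs_le.mp hu).1, (abs_le.mp hu).2⟩)
  simpa [Real.norm_eq_abs] using key

/-- Quadratic Taylor remainder bound for `s ↦ (1+s)^β` at `0`, for `β < 0`. -/
lemma aux_taylor_rpow (β : ℝ) (hβ : β < 0) :
    ∀ s : ℝ, |s| ≤ 1/2 → |(1+s) ^ β - 1 - β*s| ≤ ((-β) * ((1-β) * (2:ℝ) ^ (2-β))) * s^2 := by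
  intro s hs
  set C₁ : ℝ := (1-β) * (2:ℝ) ^ (2-β) with hC₁
  have hconv : Convex ℝ (Set.Icc (-|s|) (|s|)) := convex_Icc _ _
  have key := hconv.norm_image_sub_le_of_norm_hasDerivWithin_le (C := (-β) * C₁ * |s|)
    (f := fun y => (1+y) ^ β - β*y) (f' := fun y => β * (1+y) ^ (β-1) - β)
    (fun y hy => by
      rcases hy with ⟨hy1, hy2⟩
      have h1 : (0:ℝ) < 1 + y := by
        have : -(1/2:ℝ) ≤ y := le_trans (by linarith [abs_nonneg s] : -(1/2:ℝ) ≤ -|s|) hy1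
        linarith
      have h := (Real.hasDerivAt_rpow_const (x := 1+y) (p := β) (Or.inl h1.ne')).comp y
        ((hasDerivAt_id y).const_add 1)
      simp only [Function.comp, mul_one] at h
      exact ((h.sub ((hasDerivAt_id y).const_mul β)).congr_deriv (by ring)).hasDerivWithinAt)
    (fun y hy => by
      rcases hy with ⟨hy1, hy2⟩
      have hyabs : |y| ≤ |s| := abs_le.mpr ⟨hy1, hy2⟩
      have h2 : |y| ≤ 1/2 := le_trans hyabs hs
      have hlip := aux_rpow_lip β hβ y h2
      have : |β * (1+y) ^ (β-1) - β| = (-β) * |(1+y) ^ (β-1) - 1| := by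
        rw [show β * (1+y) ^ (β-1) - β = β * ((1+y) ^ (β-1) - 1) by ring, abs_mul,
          abs_of_nonpos hβ.le]
      rw [Real.norm_eq_abs, this, mul_assoc]
      exact mul_le_mul_of_nonneg_left (le_trans hlip
        (mul_le_mul_of_nonneg_left hyabs
          (mul_nonneg (by linarith) (Real.rpow_nonneg (by norm_num) _)))) (by linarith))
    (show (0:ℝ) ∈ Set.Icc (-|s|) (|s|) by constructor <;> simp [abs_nonneg])
    (show s ∈ Set.Icc (-|s|) (|s|) by constructor <;> [exact neg_abs_le s; exact le_abs_self s])
  simp only [Real.norm_eq_abs, mul_zero, sub_zero, Real.rpow_natCast] at key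
  calc |(1+s) ^ β - 1 - β*s| = |(1+s) ^ β - β*s - (1+0) ^ β| := by norm_num; ring_nf
    _ ≤ (-β) * C₁ * |s| * |s| := key
    _ = (-β) * C₁ * s^2 := by rw [mul_assoc, ← abs_mul, ← sq, abs_sq]

set_option maxHeartbeats 1000000 in
theorem inverted_norm_power_expansion
    (n k : ℤ) (hk : 0 < k) (hnk : 2 * k < n) :
    ∃ r₀ : ℝ, r₀ ∈ Set.Ioo (0 : ℝ) 1 ∧
      ∃ C : ℝ, 0 < C ∧
        ∀ x a : EuclideanSpace ℝ (Fin n.toNat), x ≠ 0 → ‖a‖ * ‖x‖ < r₀ →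
          |‖x - ‖x‖ ^ 2 • a‖ ^ ((2 * (k : ℝ) - n) / (2 * k)) -
              ‖x‖ ^ ((2 * (k : ℝ) - n) / (2 * k)) *
                (1 + ((n : ℝ) - 2 * k) / (2 * k) * ⟪a, x⟫)| ≤
            C * ‖a‖ ^ 2 * ‖x‖ ^ ((6 * (k : ℝ) - n) / (2 * k)) := by
  have hk' : (0:ℝ) < (k:ℝ) := by exact_mod_cast hk
  have hn2k : 2 * (k:ℝ) < (n:ℝ) := by exact_mod_cast hnk
  set α : ℝ := (2 * (k : ℝ) - n) / (2 * k) with hα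
  set β : ℝ := α / 2 with hβdef
  have hα_neg : α < 0 := div_neg_of_neg_of_pos (by linarith) (by linarith)
  have hβ : β < 0 := by rw [hβdef]; linarith
  set C₂ : ℝ := (-β) * ((1-β) * (2:ℝ) ^ (2-β)) with hC₂
  have hC₂pos : 0 < C₂ := by
    apply mul_pos (by linarith)
    exact mul_pos (by linarith) (Real.rpow_pos_of_pos (by norm_num) _)
  refine ⟨1/8, ⟨by norm_num, by norm_num⟩, 9 * C₂ + (-β), by linarith, ?_⟩
  intro x a hx hr
  have hxpos : 0 < ‖x‖ := norm_pos_iff.mpr hx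
  set t : ℝ := ‖a‖ * ‖x‖ with ht
  have ht0 : 0 ≤ t := mul_nonneg (norm_nonneg _) (norm_nonneg _)
  set ip : ℝ := ⟪a, x⟫ with hip
  have hipt : |ip| ≤ t := abs_real_inner_le_norm a x
  set s : ℝ := ‖a‖^2 * ‖x‖^2 - 2 * ip with hs
  have ht2 : ‖a‖^2 * ‖x‖^2 = t^2 := by rw [ht]; ring
  have hs3t : |s| ≤ 3 * t := by
    have h1 : |s| ≤ t^2 + 2*|ip| := by
      rw [hs, ht2]
      calc |t^2 - 2*ip| ≤ |t^2| + |2*ip| := abs_sub _ _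
        _ = t^2 + 2*|ip| := by rw [abs_of_nonneg (sq_nonneg t), abs_mul]; norm_num
    have : t^2 ≤ t := by nlinarith
    linarith
  have hshalf : |s| ≤ 1/2 := by linarith
  have h1s : (0:ℝ) < 1 + s := by
    have := abs_le.mp hshalf
    linarith
  -- norm identity
  have hN : ‖x - ‖x‖ ^ 2 • a‖^2 = ‖x‖^2 * (1 + s) := by
    have h1 : ⟪x, ‖x‖ ^ 2 • a⟫ = ‖x‖^2 * ip := by
      rw [real_inner_smul_right, real_inner_comm]
    have h2 : ‖(‖x‖ ^ 2 • a : EuclideanSpace ℝ (Fin n.toNat))‖ = ‖x‖^2 * ‖a‖ := by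
      rw [norm_smul, Real.norm_eq_abs, abs_of_nonneg (sq_nonneg _)]
    rw [norm_sub_sq_real, h1, h2, hs]
    ring
  -- rpow rewriting
  have hrw : ∀ y : ℝ, 0 ≤ y → y ^ α = (y^2) ^ β := by
    intro y hy
    rw [hβdef, ← Real.rpow_natCast y 2, ← Real.rpow_mul hy]
    norm_num
    rw [show (2:ℝ)*(α/2) = α by ring]
  have hmain : ‖x - ‖x‖ ^ 2 • a‖ ^ α = ‖x‖ ^ α * (1+s) ^ β := by
    rw [hrw _ (norm_nonneg _), hN, Real.mul_rpow (sq_nonneg _) h1s.le, ← hrw _ (norm_nonneg _)]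
  have hc : ((n : ℝ) - 2 * k) / (2 * k) = -(2*β) := by
    rw [hβdef, hα]; ring
  have htay := aux_taylor_rpow β hβ s hshalf
  have key : |(1+s) ^ β - (1 + ((n : ℝ) - 2 * k) / (2 * k) * ip)| ≤ (9*C₂ + (-β)) * t^2 := by
    have hsplit : (1+s) ^ β - (1 + ((n : ℝ) - 2 * k) / (2 * k) * ip)
        = ((1+s) ^ β - 1 - β*s) + β * t^2 := by
      rw [hc, hs, ht2]; ring
    have hs2 : s^2 ≤ 9 * t^2 := by
      have := abs_le.mp hs3t
      nlinarith
    calc |(1+s) ^ β - (1 + ((n : ℝ) - 2 * k) / (2 * k) * ip)|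
        ≤ |(1+s) ^ β - 1 - β*s| + |β * t^2| := by rw [hsplit]; exact abs_add_le _ _
      _ ≤ C₂ * s^2 + (-β) * t^2 := by
          rw [abs_mul, abs_of_nonpos hβ.le, abs_of_nonneg (sq_nonneg t)]
          exact add_le_add htay le_rfl
      _ ≤ (9*C₂ + (-β)) * t^2 := by nlinarith
  have hfin : ‖x‖ ^ α * t^2 = ‖a‖^2 * ‖x‖ ^ ((6 * (k : ℝ) - n) / (2 * k)) := by
    have he : (6 * (k : ℝ) - n) / (2 * k) = α + 2 := by
      rw [hα]; field_simp; ring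
    rw [he, ← ht2, Real.rpow_add hxpos, Real.rpow_two]
    ring
  calc |‖x - ‖x‖ ^ 2 • a‖ ^ α - ‖x‖ ^ α * (1 + ((n : ℝ) - 2 * k) / (2 * k) * ip)|
      = ‖x‖ ^ α * |(1+s) ^ β - (1 + ((n : ℝ) - 2 * k) / (2 * k) * ip)| := by
        rw [hmain, ← mul_sub, abs_mul, abs_of_nonneg (Real.rpow_nonneg (norm_nonneg _) _)]
    _ ≤ ‖x‖ ^ α * ((9*C₂ + (-β)) * t^2) :=
        mul_le_mul_of_nonneg_left key (Real.rpow_nonneg (norm_nonneg _) _)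
    _ = (9*C₂ + (-β)) * ‖a‖^2 * ‖x‖ ^ ((6 * (k : ℝ) - n) / (2 * k)) := by
        rw [show ‖x‖ ^ α * ((9*C₂ + (-β)) * t^2) = (9*C₂ + (-β)) * (‖x‖ ^ α * t^2) by ring,
          hfin]
        ring
end
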